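/- arXiv:1303.1877 — 6 statements merged into one kernel-verified Lean document; each statement's English description precedes it below -/
import Mathlib

section
/- Let a, b, c > 0 be real numbers with a < b and c ≤ Γ(b)/Γ(a). Then the reciprocal of the function h_{a,b;c}(x) = (c·Γ(x+a)/Γ(x+b))^{1/x}, namely x ↦ (c·Γ(x+a)/Γ(x+b))^{−1/x}, is logarithmically completely monotonic on (0,∞); equivalently, for every integer k ≥ 1 and every x > 0, (−1)^k · (d^k/dx^k)[ln h_{a,b;c}(x)] ≤ 0. -/
open Real Filter Set

noncomputable def Pq (k : ℕ) (r : ℝ) : ℝ := ∑ j ∈ Finset.range k, r^(j+1)/(j+1)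
noncomputable def Fq (k : ℕ) (r : ℝ) : ℝ := -Real.log (1 - r) - Pq k r

lemma Fq_succ (k : ℕ) (r : ℝ) : Fq (k+1) r = Fq k r - r^(k+1)/((k:ℝ)+1) := by
  simp [Fq, Pq, Finset.sum_range_succ]
  push_cast
  ring

lemma Fq_zero_eval (k : ℕ) : Fq k 0 = 0 := by
  simp [Fq, Pq]

lemma Fq_hasDerivAt {r : ℝ} (hr : r < 1) (k : ℕ) :
    HasDerivAt (Fq k) (r^k / (1-r)) r := by
  have h1 : (1:ℝ) - r ≠ 0 := by linarith
  have hlog : HasDerivAt (fun r : ℝ => -Real.log (1-r)) (1/(1-r)) r := by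
    have := ((Real.hasDerivAt_log h1).comp r ((hasDerivAt_id r).const_sub 1)).neg
    refine this.congr_deriv (Eq.symm ?_)
    field_simp
  have hP : HasDerivAt (Pq k) (∑ j ∈ Finset.range k, r^j) r := by
    have : HasDerivAt (Pq k) (∑ j ∈ Finset.range k, (↑(j+1) * r^j / (j+1))) r := by
      apply HasDerivAt.fun_sum
      intro j _
      exact (hasDerivAt_pow (j+1) r).div_const _
    convert this using 1
    apply Finset.sum_congr rfl
    intro j _
    have : ((j:ℝ)+1) ≠ 0 := by positivity
    field_simp
    push_cast
    ring
  have := hlog.sub hP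
  refine this.congr_deriv (Eq.symm ?_)
  rw [geom_sum_eq (by intro h; rw [h] at hr; linarith)]
  have h2 : r - 1 ≠ 0 := fun h => h1 (by linarith)
  field_simp
  ring

lemma Fq_mono (k : ℕ) {R t s : ℝ} (hR : R < 1) (ht : 0 ≤ t) (hts : t ≤ s) (hsR : s ≤ R) :
    Fq k t ≤ Fq k s := by
  have key : MonotoneOn (Fq k) (Icc 0 R) := by
    apply monotoneOn_of_deriv_nonneg (convex_Icc 0 R)
    · intro x hx
      exact (Fq_hasDerivAt (lt_of_le_of_lt hx.2 hR) k).continuousAt.continuousWithinAt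
    · intro x hx
      rw [interior_Icc] at hx
      exact ((Fq_hasDerivAt (lt_of_lt_of_le hx.2 (le_of_lt hR)) k).differentiableAt).differentiableWithinAt
    · intro x hx
      rw [interior_Icc] at hx
      rw [(Fq_hasDerivAt (lt_of_lt_of_le hx.2 (le_of_lt hR)) k).deriv]
      have h1 : (0:ℝ) < 1 - x := by nlinarith [hx.2]
      exact div_nonneg (pow_nonneg hx.1.le k) h1.le
  exact key ⟨ht, hts.trans hsR⟩ ⟨ht.trans hts, hsR⟩ hts

lemma Fq_nonneg (k : ℕ) {R s : ℝ} (hR : R < 1) (hs : 0 ≤ s) (hsR : s ≤ R) : 0 ≤ Fq k s := by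
  have := Fq_mono k hR le_rfl hs hsR
  rwa [Fq_zero_eval] at this

lemma Fq_lip (k : ℕ) {R t s : ℝ} (hR : R < 1) (ht : 0 ≤ t) (hts : t ≤ s) (hsR : s ≤ R) :
    Fq k s - Fq k t ≤ (s - t) / (1 - R) := by
  have hR0 : (0:ℝ) < 1 - R := by linarith
  have key : AntitoneOn (fun r => Fq k r - r / (1-R)) (Icc 0 R) := by
    apply antitoneOn_of_deriv_nonpos (convex_Icc 0 R)
    · intro x hx
      exact ((Fq_hasDerivAt (lt_of_le_of_lt hx.2 hR) k).sub
        ((hasDerivAt_id x).div_const (1-R))).continuousAt.continuousWithinAt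
    · intro x hx
      rw [interior_Icc] at hx
      exact (((Fq_hasDerivAt (lt_of_lt_of_le hx.2 hR.le) k).sub
        ((hasDerivAt_id x).div_const (1-R))).differentiableAt).differentiableWithinAt
    · intro x hx
      rw [interior_Icc] at hx
      have hx1 : x < 1 := lt_of_lt_of_le hx.2 hR.le
      have hd : HasDerivAt (fun r => Fq k r - r / (1-R)) (x ^ k / (1 - x) - 1/(1-R)) x := by
        exact (Fq_hasDerivAt hx1 k).sub ((hasDerivAt_id x).div_const (1-R))
      rw [hd.deriv]
      have h1 : (0:ℝ) < 1 - x := by linarith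
      have hxk : x^k ≤ 1 := pow_le_one₀ hx.1.le (by linarith)
      have : x^k / (1-x) ≤ 1 / (1-R) := div_le_div₀ zero_le_one hxk hR0 (by linarith [hx.2])
      linarith
  have h := key ⟨ht, hts.trans hsR⟩ ⟨ht.trans hts, hsR⟩ hts
  simp only [sub_div] at *
  linarith

noncomputable def Gq (k : ℕ) (α x : ℝ) : ℝ :=
  (-1)^k * (k.factorial : ℝ) / x^(k+1) * Fq k (x/(x+α))

lemma Gq_hasDerivAt {α x : ℝ} (hα : 0 < α) (hx : 0 < x) (k : ℕ) :
    HasDerivAt (Gq k α) (Gq (k+1) α x) x := by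
  have hxα : 0 < x + α := by linarith
  have hr1 : x/(x+α) < 1 := by rw [div_lt_one hxα]; linarith
  have hratio : HasDerivAt (fun y : ℝ => y/(y+α)) (α/(x+α)^2) x := by
    have := (hasDerivAt_id x).div ((hasDerivAt_id x).add_const α) (ne_of_gt hxα)
    refine this.congr_deriv (Eq.symm ?_)
    simp only [id_eq]
    ring
  have hF : HasDerivAt (fun y => Fq k (y/(y+α))) ((x/(x+α))^k/(1-x/(x+α)) * (α/(x+α)^2)) x :=
    by have h := (Fq_hasDerivAt hr1 k).comp x hratio; exact h
  have hpow : HasDerivAt (fun y : ℝ => (-1)^k * (k.factorial : ℝ) / y^(k+1))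
      ((-1)^k * (k.factorial : ℝ) * (-((((k:ℝ))+1) * x ^ k) / (x^(k+1))^2)) x := by
    have h0 : x^(k+1) ≠ 0 := pow_ne_zero _ hx.ne'
    have := ((hasDerivAt_pow (k+1) x).inv h0).const_mul ((-1:ℝ)^k * (k.factorial : ℝ))
    refine this.congr_deriv ?_
    push_cast
    ring
  have := hpow.mul hF
  refine this.congr_deriv (Eq.symm ?_)
  unfold Gq
  rw [Fq_succ]
  have h0 : x ≠ 0 := hx.ne'
  have h1 : x + α ≠ 0 := hxα.ne'
  have h2 : α ≠ 0 := hα.ne'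
  have h3 : ((k:ℝ)+1) ≠ 0 := by positivity
  rw [pow_succ (-1:ℝ), Nat.factorial_succ]
  push_cast
  generalize Fq k (x/(x+α)) = F
  rw [show 1 - x/(x+α) = α/(x+α) by field_simp; ring]
  simp only [div_pow]
  field_simp
  ring

lemma Gq_zero_eq {α x : ℝ} (hα : 0 < α) (hx : 0 < x) :
    Gq 0 α x = (Real.log (x+α) - Real.log α)/x := by
  have hxα : 0 < x + α := by linarith
  unfold Gq Fq Pq
  rw [show 1 - x/(x+α) = α/(x+α) by field_simp; ring,
    Real.log_div hα.ne' hxα.ne']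
  simp
  ring

noncomputable def Wq (a b : ℝ) (k n : ℕ) (x : ℝ) : ℝ :=
  Gq k (a+(n:ℝ)) x - Gq k (b+(n:ℝ)) x

lemma Wq_est {a b l u x : ℝ} (ha : 0 < a) (hab : a < b) (hl : 0 < l) (hx : x ∈ Ioo l u)
    (k n : ℕ) :
    0 ≤ (-1:ℝ)^k * Wq a b k n x ∧
    (-1:ℝ)^k * Wq a b k n x ≤
      (k.factorial:ℝ)/l^(k+1) * (u*(b-a)/((a+(n:ℝ))^2) * ((u+a)/a)) := by
  obtain ⟨hlx, hxu⟩ := hx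
  have hx0 : 0 < x := hl.trans hlx
  have hu0 : 0 < u := hx0.trans hxu
  set α := a + (n:ℝ) with hαdef
  set β := b + (n:ℝ) with hβdef
  have hα : 0 < α := by positivity
  have hβ : 0 < β := by have : (0:ℝ) ≤ n := Nat.cast_nonneg n; simp only [hβdef]; linarith
  have hαβ : α ≤ β := by simp only [hαdef, hβdef]; linarith
  have hxα : 0 < x + α := by linarith
  have hxβ : 0 < x + β := by linarith
  have hua : 0 < u + a := by linarith
  set rα := x/(x+α) with hrαdef
  set rβ := x/(x+β) with hrβdef
  set R := u/(u+a) with hRdef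
  have hR1 : R < 1 := by rw [hRdef, div_lt_one hua]; linarith
  have hrβ0 : 0 ≤ rβ := by positivity
  have hrr : rβ ≤ rα := by
    rw [hrβdef, hrαdef]
    gcongr
  have hrαR : rα ≤ R := by
    rw [hrαdef, hRdef, div_le_div_iff₀ hxα hua]
    nlinarith
  have hfac : (0:ℝ) < (k.factorial:ℝ) := by positivity
  have key : (-1:ℝ)^k * Wq a b k n x
      = (k.factorial:ℝ)/x^(k+1) * (Fq k rα - Fq k rβ) := by
    have h4 : ((-1:ℝ))^k * ((-1:ℝ))^k = 1 := by
      rw [← pow_add, ← two_mul, pow_mul]; norm_num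
    unfold Wq Gq
    rw [← hrαdef, ← hrβdef]
    generalize ((-1:ℝ))^k = e at h4 ⊢
    have hxk : x^(k+1) ≠ 0 := by positivity
    field_simp
    linear_combination (Fq k rα - Fq k rβ) * h4
  have hmono : Fq k rβ ≤ Fq k rα := Fq_mono k hR1 hrβ0 hrr hrαR
  constructor
  · rw [key]
    have : (0:ℝ) ≤ (k.factorial:ℝ)/x^(k+1) := by positivity
    nlinarith
  · rw [key]
    have hlip : Fq k rα - Fq k rβ ≤ (rα - rβ)/(1-R) := Fq_lip k hR1 hrβ0 hrr hrαR
    have h1R : 1 - R = a/(u+a) := by rw [hRdef]; field_simp; ring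
    have hdiff : rα - rβ = x*(β-α)/((x+α)*(x+β)) := by
      rw [hrαdef, hrβdef]; field_simp; ring
    have hd2 : rα - rβ ≤ u*(b-a)/(α^2) := by
      rw [hdiff]
      have hβα : β - α = b - a := by simp only [hαdef, hβdef]; ring
      rw [hβα]
      have e1 : (0:ℝ) ≤ u*(b-a) := mul_nonneg hu0.le (by linarith)
      have e2 : x*(b-a) ≤ u*(b-a) := mul_le_mul_of_nonneg_right hxu.le (by linarith)
      have e3 : α^2 ≤ (x+α)*(x+β) := by nlinarith [hx0, hα, hαβ, hβ, hxα, hxβ]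
      exact div_le_div₀ e1 e2 (pow_pos hα 2) e3
    have hstep : Fq k rα - Fq k rβ ≤ u*(b-a)/(α^2) * ((u+a)/a) := by
      calc Fq k rα - Fq k rβ ≤ (rα - rβ)/(1-R) := hlip
        _ = (rα - rβ) * ((u+a)/a) := by rw [h1R]; field_simp
        _ ≤ u*(b-a)/(α^2) * ((u+a)/a) := by
            apply mul_le_mul_of_nonneg_right hd2 (by positivity)
    have hb1 : (k.factorial:ℝ)/x^(k+1) ≤ (k.factorial:ℝ)/l^(k+1) := by
      gcongr
    have hb2 : (0:ℝ) ≤ (k.factorial:ℝ)/l^(k+1) := div_nonneg hfac.le (pow_pos hl (k+1)).le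
    exact mul_le_mul hb1 hstep (sub_nonneg.mpr hmono) hb2

lemma summable_inv_sq {a : ℝ} (ha : 0 < a) : Summable (fun n : ℕ => ((a+(n:ℝ))^2)⁻¹) := by
  have h2 : Summable (fun n : ℕ => 1/((n:ℝ))^2) :=
    summable_one_div_nat_pow.2 (by norm_num)
  have h3 : Summable (fun n : ℕ => 1/((n:ℝ)+1)^2) := by
    have := (summable_nat_add_iff 1).2 h2
    apply this.congr
    intro n
    push_cast
    ring
  apply Summable.of_nonneg_of_le (fun n => by positivity) (fun n => ?_)
    (h3.mul_left ((1+1/a)^2))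
  have ht0 : (0:ℝ) ≤ 1/a := by positivity
  have ht : a * (1/a) = 1 := by field_simp
  have hn1 : ((n:ℝ)+1) ≤ (1+1/a)*(a+n) := by nlinarith [Nat.cast_nonneg (α := ℝ) n]
  have hsq : ((n:ℝ)+1)^2 ≤ (1+1/a)^2*(a+n)^2 := by nlinarith [Nat.cast_nonneg (α := ℝ) n]
  rw [show (1+1/a)^2 * (1/((n:ℝ)+1)^2) = (1+1/a)^2/((n:ℝ)+1)^2 by ring,
    inv_eq_one_div, div_le_div_iff₀ (by positivity) (by positivity)]
  nlinarith [hsq]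

lemma summable_bound {a b l u : ℝ} (ha : 0 < a) (k : ℕ) :
    Summable (fun n : ℕ =>
      (k.factorial:ℝ)/l^(k+1) * (u*(b-a)/((a+(n:ℝ))^2) * ((u+a)/a))) := by
  apply ((summable_inv_sq ha).mul_left
    ((k.factorial:ℝ)/l^(k+1) * (u*(b-a)) * ((u+a)/a))).congr
  intro n
  field_simp

lemma summable_Wq {a b l u x : ℝ} (ha : 0 < a) (hab : a < b) (hl : 0 < l) (hx : x ∈ Ioo l u)
    (k : ℕ) : Summable (fun n : ℕ => Wq a b k n x) := by
  have h1 : Summable (fun n : ℕ => (-1:ℝ)^k * Wq a b k n x) := by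
    apply Summable.of_nonneg_of_le (fun n => (Wq_est ha hab hl hx k n).1)
      (fun n => (Wq_est ha hab hl hx k n).2) (summable_bound ha k)
  have h4 : ((-1:ℝ))^k * ((-1:ℝ))^k = 1 := by
    rw [← pow_add, ← two_mul, pow_mul]; norm_num
  apply (h1.mul_left ((-1:ℝ)^k)).congr
  intro n
  rw [← mul_assoc, h4, one_mul]

noncomputable def tq (a b x : ℝ) (n : ℕ) : ℝ :=
  (Real.log (x+a+(n:ℝ)) - Real.log (a+(n:ℝ))) - (Real.log (x+b+(n:ℝ)) - Real.log (b+(n:ℝ)))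

lemma Wq_zero_eq {a b x : ℝ} (ha : 0 < a) (hb : 0 < b) (hx : 0 < x) (n : ℕ) :
    Wq a b 0 n x = tq a b x n / x := by
  have h1 : (0:ℝ) < a + (n:ℝ) := by positivity
  have h2 : (0:ℝ) < b + (n:ℝ) := by positivity
  rw [Wq, Gq_zero_eq h1 hx, Gq_zero_eq h2 hx, tq]
  rw [show x+(a+(n:ℝ)) = x+a+(n:ℝ) by ring, show x+(b+(n:ℝ)) = x+b+(n:ℝ) by ring]
  ring

lemma log_sum_eq {z : ℝ} (hz : 0 < z) {N : ℕ} (hN : 1 ≤ N) :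
    ∑ j ∈ Finset.range (N+1), Real.log (z+(j:ℝ))
      = z * Real.log N + Real.log (N.factorial) - Real.log (Real.GammaSeq z N) := by
  have hN0 : (0:ℝ) < (N:ℝ) := by exact_mod_cast hN
  have hP : (0:ℝ) < ∏ j ∈ Finset.range (N+1), (z+(j:ℝ)) :=
    Finset.prod_pos (fun j _ => by positivity)
  have hfa : (0:ℝ) < (N.factorial:ℝ) := by exact_mod_cast N.factorial_pos
  rw [Real.GammaSeq, Real.log_div (by positivity) hP.ne',
    Real.log_mul (by positivity) hfa.ne', Real.log_rpow hN0,
    Real.log_prod (s := Finset.range (N+1)) (f := fun j : ℕ => z + (j:ℝ))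
      (fun j _ => (by positivity : (0:ℝ) < z+(j:ℝ)).ne')]
  ring

lemma tendsto_log_GammaSeq {z : ℝ} (hz : 0 < z) :
    Filter.Tendsto (fun N => Real.log (Real.GammaSeq z N)) atTop
      (nhds (Real.log (Real.Gamma z))) :=
  ((Real.continuousAt_log (Real.Gamma_pos_of_pos hz).ne').tendsto).comp
    (Real.GammaSeq_tendsto_Gamma z)

lemma hasSum_tq {a b x : ℝ} (ha : 0 < a) (hb : 0 < b) (hx : 0 < x) (hab : a < b) :
    HasSum (tq a b x) (Real.log (Real.Gamma a) + Real.log (Real.Gamma (x+b))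
      - Real.log (Real.Gamma (x+a)) - Real.log (Real.Gamma b)) := by
  have hxa : 0 < x + a := by linarith
  have hxb : 0 < x + b := by linarith
  have hsummable : Summable (tq a b x) := by
    have hmem : x ∈ Ioo (x/2) (x+1) := ⟨by linarith, by linarith⟩
    have hW := summable_Wq (l := x/2) (u := x+1) ha hab (by linarith) hmem 0
    apply (hW.mul_left x).congr
    intro n
    rw [Wq_zero_eq ha hb hx]
    field_simp
  have hS1 : Filter.Tendsto (fun N => ∑ n ∈ Finset.range N, tq a b x n) atTop
      (nhds (∑' n, tq a b x n)) := hsummable.hasSum.tendsto_sum_nat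
  have hL : Filter.Tendsto (fun N => Real.log (Real.GammaSeq a N)
        + Real.log (Real.GammaSeq (x+b) N) - Real.log (Real.GammaSeq (x+a) N)
        - Real.log (Real.GammaSeq b N)) atTop
      (nhds (Real.log (Real.Gamma a) + Real.log (Real.Gamma (x+b))
        - Real.log (Real.Gamma (x+a)) - Real.log (Real.Gamma b))) :=
    (((tendsto_log_GammaSeq ha).add (tendsto_log_GammaSeq hxb)).sub
      (tendsto_log_GammaSeq hxa)).sub (tendsto_log_GammaSeq hb)
  have heq : ∀ᶠ N in atTop, Real.log (Real.GammaSeq a N)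
        + Real.log (Real.GammaSeq (x+b) N) - Real.log (Real.GammaSeq (x+a) N)
        - Real.log (Real.GammaSeq b N)
      = ∑ n ∈ Finset.range (N+1), tq a b x n := by
    rw [Filter.eventually_atTop]
    refine ⟨1, fun N hN => ?_⟩
    have hsplit : ∑ n ∈ Finset.range (N+1), tq a b x n
        = ((∑ n ∈ Finset.range (N+1), Real.log (x+a+(n:ℝ)))
          - ∑ n ∈ Finset.range (N+1), Real.log (a+(n:ℝ)))
          - ((∑ n ∈ Finset.range (N+1), Real.log (x+b+(n:ℝ)))
          - ∑ n ∈ Finset.range (N+1), Real.log (b+(n:ℝ))) := by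
      simp only [tq, Finset.sum_sub_distrib]
    rw [hsplit, log_sum_eq hxa hN, log_sum_eq ha hN, log_sum_eq hxb hN, log_sum_eq hb hN]
    ring
  have hS2 : Filter.Tendsto (fun N => ∑ n ∈ Finset.range (N+1), tq a b x n) atTop
      (nhds (Real.log (Real.Gamma a) + Real.log (Real.Gamma (x+b))
        - Real.log (Real.Gamma (x+a)) - Real.log (Real.Gamma b))) := hL.congr' heq
  have hS3 : Filter.Tendsto (fun N => ∑ n ∈ Finset.range N, tq a b x n) atTop
      (nhds (Real.log (Real.Gamma a) + Real.log (Real.Gamma (x+b))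
        - Real.log (Real.Gamma (x+a)) - Real.log (Real.Gamma b))) := by
    exact (tendsto_add_atTop_iff_nat
      (f := fun N => ∑ n ∈ Finset.range N, tq a b x n) 1).1 hS2
  have := tendsto_nhds_unique hS1 hS3
  rw [← this]
  exact hsummable.hasSum

noncomputable def Φq (a b c : ℝ) (k : ℕ) (x : ℝ) : ℝ :=
  (-1)^k * (k.factorial:ℝ)
    * (Real.log (Real.Gamma b) - Real.log (Real.Gamma a) - Real.log c) * (x^(k+1))⁻¹
  + ∑' n : ℕ, Wq a b k n x

lemma Wq_abs_le {a b l u x : ℝ} (ha : 0 < a) (hab : a < b) (hl : 0 < l) (hx : x ∈ Ioo l u)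
    (k n : ℕ) :
    |Wq a b k n x| ≤ (k.factorial:ℝ)/l^(k+1) * (u*(b-a)/((a+(n:ℝ))^2) * ((u+a)/a)) := by
  have h := Wq_est ha hab hl hx k n
  have habs : |Wq a b k n x| = |(-1:ℝ)^k * Wq a b k n x| := by
    rw [abs_mul, abs_pow, abs_neg, abs_one, one_pow, one_mul]
  rw [habs, abs_of_nonneg h.1]
  exact h.2

lemma Φq_zero_eq {a b c x : ℝ} (ha : 0 < a) (hb : 0 < b) (hx : 0 < x) (hab : a < b) :
    Φq a b c 0 x = (Real.log (Real.Gamma (x+b)) - Real.log (Real.Gamma (x+a))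
      - Real.log c)/x := by
  have h1 : ∑' n : ℕ, Wq a b 0 n x
      = (Real.log (Real.Gamma a) + Real.log (Real.Gamma (x+b))
        - Real.log (Real.Gamma (x+a)) - Real.log (Real.Gamma b))/x := by
    rw [← (hasSum_tq ha hb hx hab).tsum_eq, ← tsum_div_const]
    exact tsum_congr (fun n => Wq_zero_eq ha hb hx n)
  rw [Φq, h1]
  have hx0 : x ≠ 0 := hx.ne'
  simp only [pow_zero, pow_one, Nat.factorial_zero, Nat.cast_one]
  field_simp
  ring

lemma Φq_hasDerivAt {a b c x : ℝ} (ha : 0 < a) (hb : 0 < b) (hx : 0 < x) (hab : a < b)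
    (k : ℕ) : HasDerivAt (Φq a b c k) (Φq a b c (k+1) x) x := by
  set φ₀ := Real.log (Real.Gamma b) - Real.log (Real.Gamma a) - Real.log c with hφ₀
  have hmem : x ∈ Ioo (x/2) (x+1) := ⟨by linarith, by linarith⟩
  have hl : (0:ℝ) < x/2 := by linarith
  -- first summand
  have h1 : HasDerivAt (fun y : ℝ => (-1)^k * (k.factorial:ℝ) * φ₀ * (y^(k+1))⁻¹)
      ((-1)^(k+1) * ((k+1).factorial:ℝ) * φ₀ * (x^(k+2))⁻¹) x := by
    have h0 : x^(k+1) ≠ 0 := pow_ne_zero _ hx.ne'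
    have := ((hasDerivAt_pow (k+1) x).inv h0).const_mul ((-1:ℝ)^k * (k.factorial:ℝ) * φ₀)
    refine this.congr_deriv (Eq.symm ?_)
    rw [pow_succ (-1:ℝ), Nat.factorial_succ]
    have hx0 : x ≠ 0 := hx.ne'
    push_cast
    field_simp
    ring
  -- tsum summand
  have h2 : HasDerivAt (fun y : ℝ => ∑' n : ℕ, Wq a b k n y) (∑' n : ℕ, Wq a b (k+1) n x) x := by
    apply hasDerivAt_tsum_of_isPreconnected
      (summable_bound (l := x/2) (u := x+1) (b := b) ha (k+1)) isOpen_Ioo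
      (convex_Ioo _ _).isPreconnected
      (g' := fun n y => Wq a b (k+1) n y) ?_ ?_ hmem ?_ hmem
    · intro n y hy
      have hy0 : 0 < y := hl.trans hy.1
      have hα : (0:ℝ) < a + (n:ℝ) := by positivity
      have hβ : (0:ℝ) < b + (n:ℝ) := by positivity
      exact (Gq_hasDerivAt hα hy0 k).sub (Gq_hasDerivAt hβ hy0 k)
    · intro n y hy
      rw [Real.norm_eq_abs]
      exact Wq_abs_le ha hab hl hy (k+1) n
    · exact summable_Wq ha hab hl hmem k
  exact (h1.add h2)

lemma Φq_sign {a b c x : ℝ} (ha : 0 < a) (hb : 0 < b) (hc : 0 < c) (hx : 0 < x)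
    (hab : a < b) (hcle : c ≤ Real.Gamma b / Real.Gamma a) (k : ℕ) :
    0 ≤ (-1:ℝ)^k * Φq a b c k x := by
  have hΓa : 0 < Real.Gamma a := Real.Gamma_pos_of_pos ha
  have hΓb : 0 < Real.Gamma b := Real.Gamma_pos_of_pos hb
  have hφ₀ : 0 ≤ Real.log (Real.Gamma b) - Real.log (Real.Gamma a) - Real.log c := by
    have h1 : Real.log c ≤ Real.log (Real.Gamma b / Real.Gamma a) :=
      Real.log_le_log hc hcle
    rw [Real.log_div hΓb.ne' hΓa.ne'] at h1
    linarith
  have h4 : ((-1:ℝ))^k * ((-1:ℝ))^k = 1 := by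
    rw [← pow_add, ← two_mul, pow_mul]; norm_num
  rw [Φq, mul_add]
  have hterm1 : 0 ≤ (-1:ℝ)^k * ((-1)^k * (k.factorial:ℝ)
      * (Real.log (Real.Gamma b) - Real.log (Real.Gamma a) - Real.log c) * (x^(k+1))⁻¹) := by
    have hx1 : (0:ℝ) ≤ (x^(k+1))⁻¹ := by positivity
    calc (0:ℝ) ≤ (k.factorial:ℝ)
        * (Real.log (Real.Gamma b) - Real.log (Real.Gamma a) - Real.log c) * (x^(k+1))⁻¹ := by
          apply mul_nonneg (mul_nonneg (by positivity) hφ₀) hx1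
      _ = (-1:ℝ)^k * ((-1)^k * (k.factorial:ℝ)
          * (Real.log (Real.Gamma b) - Real.log (Real.Gamma a) - Real.log c) * (x^(k+1))⁻¹) := by
          linear_combination (-((k.factorial:ℝ)
            * (Real.log (Real.Gamma b) - Real.log (Real.Gamma a) - Real.log c)
            * (x^(k+1))⁻¹)) * h4
  have hterm2 : 0 ≤ (-1:ℝ)^k * ∑' n : ℕ, Wq a b k n x := by
    rw [← tsum_mul_left]
    apply tsum_nonneg
    intro n
    exact (Wq_est ha hab (by linarith : (0:ℝ) < x/2)
      (⟨by linarith, by linarith⟩ : x ∈ Ioo (x/2) (x+1)) k n).1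
  linarith

lemma iteratedDeriv_eq_Φq {a b c : ℝ} (ha : 0 < a) (hb : 0 < b) (hab : a < b) (k : ℕ) :
    ∀ x : ℝ, 0 < x → iteratedDeriv k
      (fun y : ℝ => (Real.log (Real.Gamma (y+b)) - Real.log (Real.Gamma (y+a))
        - Real.log c)/y) x = Φq a b c k x := by
  induction k with
  | zero =>
    intro x hx
    rw [iteratedDeriv_zero, Φq_zero_eq ha hb hx hab]
  | succ k IH =>
    intro x hx
    rw [iteratedDeriv_succ]
    have hev : iteratedDeriv k (fun y : ℝ => (Real.log (Real.Gamma (y+b))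
        - Real.log (Real.Gamma (y+a)) - Real.log c)/y) =ᶠ[nhds x] Φq a b c k :=
      Filter.eventuallyEq_of_mem (Ioi_mem_nhds hx) (fun y hy => IH y hy)
    rw [hev.deriv_eq, (Φq_hasDerivAt ha hb hx hab k).deriv]

theorem stmt_1 (a b c : ℝ) (ha : 0 < a) (hb : 0 < b) (hc : 0 < c)
    (hab : a < b) (hcle : c ≤ Real.Gamma b / Real.Gamma a) :
    (∀ k : ℕ, 1 ≤ k → ∀ x : ℝ, 0 < x →
      0 ≤ (-1 : ℝ) ^ k *
        iteratedDeriv k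
          (fun y : ℝ => Real.log ((c * Real.Gamma (y + a) / Real.Gamma (y + b)) ^ (-(1 / y)))) x) ∧
    (∀ k : ℕ, 1 ≤ k → ∀ x : ℝ, 0 < x →
      (-1 : ℝ) ^ k *
        iteratedDeriv k
          (fun y : ℝ => Real.log ((c * Real.Gamma (y + a) / Real.Gamma (y + b)) ^ (1 / y))) x ≤ 0) := by
  have hFeq : ∀ y : ℝ, 0 < y →
      Real.log ((c * Real.Gamma (y + a) / Real.Gamma (y + b)) ^ (-(1 / y)))
        = (Real.log (Real.Gamma (y+b)) - Real.log (Real.Gamma (y+a)) - Real.log c)/y := by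
    intro y hy
    have hΓa : 0 < Real.Gamma (y + a) := Real.Gamma_pos_of_pos (by linarith)
    have hΓb : 0 < Real.Gamma (y + b) := Real.Gamma_pos_of_pos (by linarith)
    have hu : 0 < c * Real.Gamma (y + a) / Real.Gamma (y + b) := by positivity
    rw [Real.log_rpow hu, Real.log_div (by positivity) hΓb.ne',
      Real.log_mul hc.ne' hΓa.ne']
    field_simp
    ring
  have hGeq : ∀ y : ℝ, 0 < y →
      Real.log ((c * Real.Gamma (y + a) / Real.Gamma (y + b)) ^ (1 / y))
        = -((Real.log (Real.Gamma (y+b)) - Real.log (Real.Gamma (y+a)) - Real.log c)/y) := by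
    intro y hy
    have hΓa : 0 < Real.Gamma (y + a) := Real.Gamma_pos_of_pos (by linarith)
    have hΓb : 0 < Real.Gamma (y + b) := Real.Gamma_pos_of_pos (by linarith)
    have hu : 0 < c * Real.Gamma (y + a) / Real.Gamma (y + b) := by positivity
    rw [Real.log_rpow hu, Real.log_div (by positivity) hΓb.ne',
      Real.log_mul hc.ne' hΓa.ne']
    field_simp
    ring
  constructor
  · intro k _ x hx
    have hev : (fun y : ℝ => Real.log ((c * Real.Gamma (y + a) / Real.Gamma (y + b)) ^ (-(1 / y))))
        =ᶠ[nhds x] (fun y : ℝ => (Real.log (Real.Gamma (y+b)) - Real.log (Real.Gamma (y+a))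
          - Real.log c)/y) :=
      Filter.eventuallyEq_of_mem (Ioi_mem_nhds hx) (fun y hy => hFeq y hy)
    rw [hev.iteratedDeriv_eq k, iteratedDeriv_eq_Φq ha hb hab k x hx]
    exact Φq_sign ha hb hc hx hab hcle k
  · intro k _ x hx
    have hev : (fun y : ℝ => Real.log ((c * Real.Gamma (y + a) / Real.Gamma (y + b)) ^ (1 / y)))
        =ᶠ[nhds x] (fun y : ℝ => -((Real.log (Real.Gamma (y+b)) - Real.log (Real.Gamma (y+a))
          - Real.log c)/y)) :=
      Filter.eventuallyEq_of_mem (Ioi_mem_nhds hx) (fun y hy => hGeq y hy)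
    rw [hev.iteratedDeriv_eq k,
      iteratedDeriv_fun_neg k (fun y : ℝ => (Real.log (Real.Gamma (y+b))
        - Real.log (Real.Gamma (y+a)) - Real.log c)/y) x,
      iteratedDeriv_eq_Φq ha hb hab k x hx]
    have := Φq_sign ha hb hc hx hab hcle k
    linarith [this]
end

section
/- The function h(x) = (2√π)^{1/x} [Γ(x+1)]^{1/x} / [Γ(x+1/2)]^{1/x} = (2√π · Γ(x+1)/Γ(x+1/2))^{1/x} is logarithmically completely monotonic on (0,∞); that is, for every integer k ≥ 1 and every x > 0, (−1)^k · (d^k/dx^k)[ln h(x)] ≥ 0. -/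
open Real MeasureTheory Filter Set Topology intervalIntegral Metric

-- B^(m+1) - A^(m+1) ≤ (m+1) B^m (B-A)
lemma pow_sub_pow_le_aux (m : ℕ) {A B : ℝ} (hA : 0 ≤ A) (hAB : A ≤ B) :
    B ^ (m+1) - A ^ (m+1) ≤ ((m:ℝ)+1) * B ^ m * (B - A) := by
  induction m with
  | zero => simp
  | succ m ih =>
    have hB : 0 ≤ B := hA.trans hAB
    have hAB' : A ^ (m+1) ≤ B ^ (m+1) := pow_le_pow_left₀ hA hAB _
    have hBm : (0:ℝ) ≤ B ^ m := pow_nonneg hB m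
    have hAm : (0:ℝ) ≤ A ^ (m+1) := pow_nonneg hA _
    have key : B ^ (m+2) - A ^ (m+2) = B * (B ^ (m+1) - A ^ (m+1)) + (B - A) * A ^ (m+1) := by
      ring
    rw [key]
    have h1 : B * (B ^ (m+1) - A ^ (m+1)) ≤ B * (((m:ℝ)+1) * B ^ m * (B - A)) :=
      mul_le_mul_of_nonneg_left ih hB
    have h2 : (B - A) * A ^ (m+1) ≤ (B - A) * B ^ (m+1) :=
      mul_le_mul_of_nonneg_left hAB' (by linarith)
    have : B * (((m:ℝ)+1) * B ^ m * (B - A)) + (B - A) * B ^ (m+1)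
        = ((m:ℝ)+1+1) * B ^ (m+1) * (B - A) := by ring
    push_cast
    nlinarith [h1, h2]

lemma inv_pow_sub_le (m : ℕ) {A B : ℝ} (hA : 0 < A) (hAB : A ≤ B) :
    1 / A ^ (m+1) - 1 / B ^ (m+1) ≤ ((m:ℝ)+1) * (B - A) / A ^ (m+2) := by
  have hB : 0 < B := hA.trans_le hAB
  have hApow : (0:ℝ) < A ^ (m+1) := pow_pos hA _
  have hBpow : (0:ℝ) < B ^ (m+1) := pow_pos hB _
  have h1 : 1 / A ^ (m+1) - 1 / B ^ (m+1)
      = (B ^ (m+1) - A ^ (m+1)) / (A ^ (m+1) * B ^ (m+1)) := by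
    field_simp
  rw [h1]
  have h2 : (B ^ (m+1) - A ^ (m+1)) / (A ^ (m+1) * B ^ (m+1))
      ≤ (((m:ℝ)+1) * B ^ m * (B - A)) / (A ^ (m+2) * B ^ m) := by
    apply div_le_div₀ (mul_nonneg (mul_nonneg (by positivity) (pow_nonneg hB.le m)) (by linarith)) (pow_sub_pow_le_aux m hA.le hAB) (by positivity)
    calc A ^ (m+2) * B ^ m = (A ^ (m+1) * B ^ m) * A := by ring
    _ ≤ (A ^ (m+1) * B ^ m) * B := by
        apply mul_le_mul_of_nonneg_left hAB (by positivity)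
    _ = A ^ (m+1) * B ^ (m+1) := by ring
  refine h2.trans (le_of_eq ?_)
  rw [div_eq_div_iff (by positivity) (by positivity)]
  ring

noncomputable def Jf (k : ℕ) (c x : ℝ) : ℝ := ∫ s in (0:ℝ)..1, s ^ k / (s * x + c) ^ (k + 1)

lemma Jf_cont (k : ℕ) {c x : ℝ} (hc : 0 < c) (hx : 0 ≤ x) :
    ContinuousOn (fun s : ℝ => s ^ k / (s * x + c) ^ (k + 1)) (Set.uIcc (0:ℝ) 1) := by
  apply ContinuousOn.div (by fun_prop) (by fun_prop)
  intro s hs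
  rw [Set.uIcc_of_le (by norm_num : (0:ℝ) ≤ 1)] at hs
  have h1 : 0 < s * x + c := by nlinarith [hs.1, hs.2]
  positivity

lemma Jf_integrable (k : ℕ) {c x : ℝ} (hc : 0 < c) (hx : 0 ≤ x) :
    IntervalIntegrable (fun s : ℝ => s ^ k / (s * x + c) ^ (k + 1)) volume 0 1 :=
  (Jf_cont k hc hx).intervalIntegrable

lemma Jf_nonneg (k : ℕ) {c x : ℝ} (hc : 0 < c) (hx : 0 ≤ x) : 0 ≤ Jf k c x := by
  apply intervalIntegral.integral_nonneg (by norm_num : (0:ℝ) ≤ 1)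
  intro s hs
  have h1 : 0 < s * x + c := by nlinarith [hs.1, hs.2]
  exact div_nonneg (pow_nonneg hs.1 k) (by positivity)

lemma Jf_mono (k : ℕ) {a b x : ℝ} (ha : 0 < a) (hab : a ≤ b) (hx : 0 ≤ x) :
    Jf k b x ≤ Jf k a x := by
  apply intervalIntegral.integral_mono_on (by norm_num : (0:ℝ) ≤ 1)
    (Jf_integrable k (ha.trans_le hab) hx) (Jf_integrable k ha hx)
  intro s hs
  have h1 : 0 < s * x + a := by nlinarith [hs.1, hs.2]
  have h2 : s * x + a ≤ s * x + b := by linarith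
  have hsk : (0:ℝ) ≤ s ^ k := pow_nonneg hs.1 k
  exact div_le_div_of_nonneg_left hsk (by positivity) (pow_le_pow_left₀ h1.le h2 _)

lemma Jf_le (k : ℕ) {c x : ℝ} (hc : 0 < c) (hx : 0 ≤ x) : Jf k c x ≤ 1 / c ^ (k+1) := by
  have : Jf k c x ≤ ∫ s in (0:ℝ)..1, 1 / c ^ (k+1) := by
    apply intervalIntegral.integral_mono_on (by norm_num : (0:ℝ) ≤ 1)
      (Jf_integrable k hc hx) (intervalIntegrable_const)
    intro s hs
    have h1 : 0 < s * x + c := by nlinarith [hs.1, hs.2]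
    have h2 : c ≤ s * x + c := by nlinarith [hs.1, hs.2]
    have hsk : s ^ k ≤ 1 := pow_le_one₀ hs.1 hs.2
    calc s ^ k / (s * x + c) ^ (k+1) ≤ 1 / (s * x + c) ^ (k+1) :=
          (div_le_div_iff_of_pos_right (by positivity)).mpr hsk
    _ ≤ 1 / c ^ (k+1) := by
          apply one_div_le_one_div_of_le (by positivity)
          exact pow_le_pow_left₀ hc.le h2 _
  simpa using this

lemma Jf_sub_le (k : ℕ) {a b x : ℝ} (ha : 0 < a) (hab : b = a + 1/2) (hx : 0 ≤ x) :
    Jf k a x - Jf k b x ≤ ((k:ℝ)+1) / (2 * a ^ (k+2)) := by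
  have hb : 0 < b := by rw [hab]; linarith
  have hint1 := Jf_integrable k ha hx
  have hint2 := Jf_integrable k hb hx
  have heq : Jf k a x - Jf k b x
      = ∫ s in (0:ℝ)..1, (s ^ k / (s * x + a) ^ (k+1) - s ^ k / (s * x + b) ^ (k+1)) :=
    (intervalIntegral.integral_sub hint1 hint2).symm
  rw [heq]
  have : (∫ s in (0:ℝ)..1, (s ^ k / (s * x + a) ^ (k+1) - s ^ k / (s * x + b) ^ (k+1)))
      ≤ ∫ s in (0:ℝ)..1, ((k:ℝ)+1) / (2 * a ^ (k+2)) := by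
    apply intervalIntegral.integral_mono_on (by norm_num) (hint1.sub hint2) intervalIntegrable_const
    intro s hs
    have hA : 0 < s * x + a := by nlinarith [hs.1, hs.2]
    have hAa : a ≤ s * x + a := by nlinarith [hs.1, hs.2]
    have hABle : s * x + a ≤ s * x + b := by rw [hab]; linarith
    have hsk : s ^ k ≤ 1 := pow_le_one₀ hs.1 hs.2
    have hsk0 : 0 ≤ s ^ k := pow_nonneg hs.1 k
    have key := inv_pow_sub_le k hA hABle
    have hd : s ^ k / (s * x + a) ^ (k+1) - s ^ k / (s * x + b) ^ (k+1)
        = s ^ k * (1 / (s * x + a) ^ (k+1) - 1 / (s * x + b) ^ (k+1)) := by ring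
    rw [hd]
    have hnn : 0 ≤ 1 / (s * x + a) ^ (k+1) - 1 / (s * x + b) ^ (k+1) := by
      have : (s * x + a) ^ (k+1) ≤ (s * x + b) ^ (k+1) := pow_le_pow_left₀ hA.le hABle _
      have h2 : 1 / (s * x + b) ^ (k+1) ≤ 1 / (s * x + a) ^ (k+1) :=
        one_div_le_one_div_of_le (by positivity) this
      linarith
    calc s ^ k * (1 / (s * x + a) ^ (k+1) - 1 / (s * x + b) ^ (k+1))
        ≤ 1 * (1 / (s * x + a) ^ (k+1) - 1 / (s * x + b) ^ (k+1)) :=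
          mul_le_mul_of_nonneg_right hsk hnn
    _ = 1 / (s * x + a) ^ (k+1) - 1 / (s * x + b) ^ (k+1) := by ring
    _ ≤ ((k:ℝ)+1) * ((s*x+b) - (s*x+a)) / (s * x + a) ^ (k+2) := key
    _ = ((k:ℝ)+1) * (1/2) / (s * x + a) ^ (k+2) := by rw [hab]; ring_nf
    _ ≤ ((k:ℝ)+1) * (1/2) / a ^ (k+2) := by
          apply div_le_div_of_nonneg_left (by positivity) (by positivity)
            (pow_le_pow_left₀ ha.le hAa _)
    _ = ((k:ℝ)+1) / (2 * a ^ (k+2)) := by ring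
  simpa using this

lemma Jf_zero_eq {c x : ℝ} (hc : 0 < c) (hx : 0 < x) :
    Jf 0 c x = (Real.log (x + c) - Real.log c) / x := by
  have key : ∀ s ∈ Set.uIcc (0:ℝ) 1,
      HasDerivAt (fun s : ℝ => Real.log (s * x + c) / x) (s ^ 0 / (s * x + c) ^ (0+1)) s := by
    intro s hs
    rw [Set.uIcc_of_le (by norm_num : (0:ℝ) ≤ 1)] at hs
    have h1 : 0 < s * x + c := by nlinarith [hs.1, hs.2]
    have hlog : HasDerivAt (fun s : ℝ => Real.log (s * x + c)) (x / (s * x + c)) s := by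
      have haff : HasDerivAt (fun s : ℝ => s * x + c) x s :=
        (hasDerivAt_mul_const x).add_const c
      have := (Real.hasDerivAt_log h1.ne').comp s haff
      rw [div_eq_inv_mul]
      exact this
    have := hlog.div_const x
    refine this.congr_deriv ?_
    have hxne : x ≠ 0 := hx.ne'
    have hne : s * x + c ≠ 0 := h1.ne'
    field_simp
    ring
  have := intervalIntegral.integral_eq_sub_of_hasDerivAt key
    ((Jf_integrable 0 hc hx.le))
  rw [Jf, this]
  simp only [one_mul, zero_mul, zero_add]
  ring

lemma integrand_hasDerivAt (k : ℕ) {c s x : ℝ} (hA : 0 < s * x + c) :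
    HasDerivAt (fun x => s ^ k / (s * x + c) ^ (k+1))
      (-(((k:ℝ)+1) * (s ^ (k+1) / (s * x + c) ^ (k+1+1)))) x := by
  have haff : HasDerivAt (fun x : ℝ => s * x + c) s x := by
    simpa using ((hasDerivAt_id x).const_mul s).add_const c
  have hpow := haff.pow (k+1)
  have hdiv := (hasDerivAt_const x ((s:ℝ) ^ k)).div hpow (pow_ne_zero _ hA.ne')
  refine hdiv.congr_deriv ?_
  have hne : (s * x + c) ≠ 0 := hA.ne'
  simp only [Pi.pow_apply, Nat.add_sub_cancel]
  push_cast
  field_simp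
  ring

open scoped Interval in
lemma Jf_hasDerivAt (k : ℕ) {c x₀ : ℝ} (hc : 0 < c) (hx : 0 < x₀) :
    HasDerivAt (fun x => Jf k c x) (-(((k:ℝ)+1) * Jf (k+1) c x₀)) x₀ := by
  have hball : ∀ x ∈ ball x₀ (x₀/2), 0 < x := by
    intro x hx'
    rw [mem_ball, Real.dist_eq, abs_lt] at hx'
    linarith [hx'.1]
  have hIoc : Ι (0:ℝ) 1 = Set.Ioc (0:ℝ) 1 := Set.uIoc_of_le (by norm_num)
  have hmeas : ∀ {x : ℝ}, 0 < x → AEStronglyMeasurable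
      (fun s : ℝ => s ^ k / (s * x + c) ^ (k+1)) (volume.restrict (Ι (0:ℝ) 1)) := by
    intro x hx'
    rw [hIoc]
    exact ((Jf_cont k hc hx'.le).mono (by
      rw [Set.uIcc_of_le (by norm_num : (0:ℝ) ≤ 1)]
      exact Set.Ioc_subset_Icc_self)).aestronglyMeasurable measurableSet_Ioc
  have hmeas' : AEStronglyMeasurable
      (fun s : ℝ => -(((k:ℝ)+1) * (s ^ (k+1) / (s * x₀ + c) ^ (k+1+1))))
      (volume.restrict (Ι (0:ℝ) 1)) := by
    rw [hIoc]
    apply (ContinuousOn.aestronglyMeasurable ?_ measurableSet_Ioc)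
    exact (continuousOn_const.mul ((Jf_cont (k+1) hc hx.le).mono (by
        rw [Set.uIcc_of_le (by norm_num : (0:ℝ) ≤ 1)]
        exact Set.Ioc_subset_Icc_self))).neg
  have key := intervalIntegral.hasDerivAt_integral_of_dominated_loc_of_deriv_le
    (F := fun x s => s ^ k / (s * x + c) ^ (k+1))
    (F' := fun x s => -(((k:ℝ)+1) * (s ^ (k+1) / (s * x + c) ^ (k+1+1))))
    (bound := fun _ => ((k:ℝ)+1) / c ^ (k+1+1))
    (ball_mem_nhds x₀ (half_pos hx))
    (by
      filter_upwards [ball_mem_nhds x₀ (half_pos hx)] with x hx'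
      exact hmeas (hball x hx'))
    (Jf_integrable k hc hx.le)
    hmeas'
    (by
      filter_upwards with s
      intro hs x hx'
      rw [hIoc] at hs
      have hxpos := hball x hx'
      have hA : 0 < s * x + c := by nlinarith [hs.1.le, hs.2]
      have hcA : c ≤ s * x + c := by nlinarith [hs.1.le, hs.2]
      rw [Real.norm_eq_abs, abs_neg, abs_of_nonneg (mul_nonneg (by positivity)
        (div_nonneg (pow_nonneg hs.1.le _) (by positivity)))]
      have hs1 : s ^ (k+1) ≤ 1 := pow_le_one₀ hs.1.le hs.2
      have hden : c ^ (k+1+1) ≤ (s * x + c) ^ (k+1+1) := pow_le_pow_left₀ hc.le hcA _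
      calc ((k:ℝ)+1) * (s ^ (k+1) / (s * x + c) ^ (k+1+1))
          ≤ ((k:ℝ)+1) * (1 / c ^ (k+1+1)) := by
            apply mul_le_mul_of_nonneg_left ?_ (by positivity)
            calc s ^ (k+1) / (s * x + c) ^ (k+1+1) ≤ 1 / (s * x + c) ^ (k+1+1) :=
                  (div_le_div_iff_of_pos_right (by positivity)).mpr hs1
            _ ≤ 1 / c ^ (k+1+1) := one_div_le_one_div_of_le (by positivity) hden
      _ = ((k:ℝ)+1) / c ^ (k+1+1) := by ring)
    intervalIntegrable_const
    (by
      filter_upwards with s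
      intro hs x hx'
      rw [hIoc] at hs
      have hxpos := hball x hx'
      have hA : 0 < s * x + c := by nlinarith [hs.1.le, hs.2]
      exact integrand_hasDerivAt k hA)
  have h2 := key.2
  have : (∫ s in (0:ℝ)..1, -(((k:ℝ)+1) * (s ^ (k+1) / (s * x₀ + c) ^ (k+1+1))))
      = -(((k:ℝ)+1) * Jf (k+1) c x₀) := by
    rw [intervalIntegral.integral_neg, intervalIntegral.integral_const_mul]
    rfl
  rw [this] at h2
  exact h2

noncomputable def af (n : ℕ) : ℝ := (n : ℝ) + 1/2
noncomputable def bf (n : ℕ) : ℝ := (n : ℝ) + 1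
noncomputable def vf (k : ℕ) (n : ℕ) (x : ℝ) : ℝ := Jf k (af n) x - Jf k (bf n) x
noncomputable def uf (n : ℕ) (x : ℝ) : ℝ :=
  (Real.log (x + af n) - Real.log (af n)) - (Real.log (x + bf n) - Real.log (bf n))

lemma af_pos (n : ℕ) : 0 < af n := by unfold af; positivity
lemma bf_pos (n : ℕ) : 0 < bf n := by unfold bf; positivity
lemma af_le_bf (n : ℕ) : af n ≤ bf n := by unfold af bf; norm_num
lemma bf_eq (n : ℕ) : bf n = af n + 1/2 := by unfold af bf; ring

lemma vf_nonneg (k n : ℕ) {x : ℝ} (hx : 0 ≤ x) : 0 ≤ vf k n x :=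
  sub_nonneg.mpr (Jf_mono k (af_pos n) (af_le_bf n) hx)

lemma vf_le (k n : ℕ) {x : ℝ} (hx : 0 ≤ x) :
    vf k n x ≤ ((k:ℝ)+1) * 2^(k+1) / ((n:ℝ)+1)^2 := by
  have h1 := Jf_sub_le k (af_pos n) (bf_eq n) hx
  refine h1.trans ?_
  have haf : ((n:ℝ)+1)/2 ≤ af n := by
    unfold af
    have : (0:ℝ) ≤ n := Nat.cast_nonneg n
    linarith
  have haf2 : (1:ℝ)/2 ≤ af n := by
    unfold af
    have : (0:ℝ) ≤ n := Nat.cast_nonneg n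
    linarith
  have hnn : (0:ℝ) ≤ ((n:ℝ)+1)/2 := by positivity
  have h2 : ((n:ℝ)+1)^2 / 2^(k+2) ≤ af n ^ (k+2) := by
    have e : af n ^ (k+2) = af n ^ 2 * af n ^ k := by ring
    have g1 : (((n:ℝ)+1)/2)^2 ≤ af n ^ 2 := pow_le_pow_left₀ hnn haf 2
    have g2 : ((1:ℝ)/2)^k ≤ af n ^ k := pow_le_pow_left₀ (by norm_num) haf2 k
    calc ((n:ℝ)+1)^2 / 2^(k+2) = (((n:ℝ)+1)/2)^2 * ((1:ℝ)/2)^k := by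
          rw [div_pow, div_pow, one_pow, div_mul_div_comm, mul_one, ← pow_add, add_comm 2 k]
    _ ≤ af n ^ 2 * af n ^ k := mul_le_mul g1 g2 (by positivity) (by positivity)
    _ = af n ^ (k+2) := by ring
  have hden : 2 * (((n:ℝ)+1)^2/2^(k+2)) ≤ 2 * af n ^ (k+2) := by linarith
  calc ((k:ℝ)+1) / (2 * af n ^ (k+2)) ≤ ((k:ℝ)+1) / (2 * (((n:ℝ)+1)^2/2^(k+2))) :=
        div_le_div_of_nonneg_left (by positivity) (by positivity) hden
  _ = ((k:ℝ)+1) * 2^(k+1) / ((n:ℝ)+1)^2 := by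
        field_simp
        ring

lemma summable_vf (k : ℕ) {x : ℝ} (hx : 0 ≤ x) : Summable (fun n => vf k n x) := by
  have hbase : Summable (fun n : ℕ => ((k:ℝ)+1) * 2^(k+1) / ((n:ℝ)+1)^2) := by
    have h0 : Summable (fun n : ℕ => 1 / ((n:ℝ)+1)^2) := by
      have := (summable_nat_add_iff (f := fun n : ℕ => 1 / (n:ℝ)^2) 1).2
        (summable_one_div_nat_pow.mpr one_lt_two)
      refine this.congr fun n => by push_cast; ring
    simpa [div_eq_mul_inv, mul_assoc] using h0.mul_left (((k:ℝ)+1) * 2^(k+1))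
  exact hbase.of_nonneg_of_le (fun n => vf_nonneg k n hx) (fun n => vf_le k n hx)

lemma sumQ {x : ℝ} (hx : 0 < x) (hsummable : Summable (fun n => uf n x)) :
    (∑' n, uf n x) = Real.log (Real.sqrt π * Real.Gamma (x+1) / Real.Gamma (x+1/2)) := by
  set r : ℕ → ℝ := fun j => ((x + af j) * bf j) / (af j * (x + bf j)) with hr_def
  have hr_pos : ∀ j, 0 < r j := fun j => by
    have := af_pos j; have := bf_pos j
    apply div_pos (by positivity) (by positivity)
  set Q : ℕ → ℝ := fun n => ∏ j ∈ Finset.range (n+1), r j with hQ_def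
  have hGamma1 : 0 < Real.Gamma (x+1) := Real.Gamma_pos_of_pos (by linarith)
  have hGamma2 : 0 < Real.Gamma (x+1/2) := Real.Gamma_pos_of_pos (by linarith)
  set P : ℝ := Real.sqrt π * Real.Gamma (x+1) / Real.Gamma (x+1/2) with hP_def
  have hP : 0 < P := by
    have := Real.sqrt_pos.mpr Real.pi_pos
    exact div_pos (by positivity) hGamma2
  -- C1
  have hC1 : ∀ n : ℕ, 1 ≤ n → Q n =
      (Real.GammaSeq (1/2) n * Real.GammaSeq (x+1) n) /
      (Real.GammaSeq (x+1/2) n * Real.GammaSeq 1 n) := by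
    intro n hn
    have hn' : (0:ℝ) < n := by exact_mod_cast hn
    set pr : ℝ → ℝ := fun s => ∏ j ∈ Finset.range (n+1), (s + (j:ℝ)) with hpr_def
    have hpr : ∀ s : ℝ, 0 < s → 0 < pr s := fun s hs =>
      Finset.prod_pos fun j _ => by positivity
    have hprx1 : 0 < pr (x+1/2) := hpr _ (by linarith)
    have hprx2 : 0 < pr (x+1) := hpr _ (by linarith)
    have hpr1 : 0 < pr 1 := hpr _ one_pos
    have hpr2 : 0 < pr (1/2) := hpr _ (by norm_num)
    have hfac : (0:ℝ) < (Nat.factorial n : ℝ) := by exact_mod_cast Nat.factorial_pos n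
    have hQn : Q n = pr (x+1/2) * pr 1 / (pr (1/2) * pr (x+1)) := by
      rw [hQ_def]
      simp only [hr_def]
      rw [Finset.prod_div_distrib, Finset.prod_mul_distrib, Finset.prod_mul_distrib]
      congr 1
      · congr 1
        · exact Finset.prod_congr rfl fun j _ => by unfold af; ring
        · exact Finset.prod_congr rfl fun j _ => by unfold bf; ring
      · congr 1
        · exact Finset.prod_congr rfl fun j _ => by unfold af; ring
        · exact Finset.prod_congr rfl fun j _ => by unfold bf; ring
    have hGs : ∀ s : ℝ, Real.GammaSeq s n = (n:ℝ)^s * (Nat.factorial n : ℝ) / pr s :=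
      fun s => rfl
    have hrp : ∀ s : ℝ, 0 < (n:ℝ)^s := fun s => Real.rpow_pos_of_pos hn' s
    have hexp : (n:ℝ)^((1:ℝ)/2) * (n:ℝ)^(x+1) = (n:ℝ)^(x+1/2) * (n:ℝ)^(1:ℝ) := by
      rw [← Real.rpow_add hn', ← Real.rpow_add hn']
      congr 1
      ring
    rw [hQn, hGs, hGs, hGs, hGs]
    set A := (n:ℝ)^((1:ℝ)/2) with hA
    set B := (n:ℝ)^(x+1) with hB
    set C := (n:ℝ)^(x+(1:ℝ)/2) with hC
    set D := (n:ℝ)^(1:ℝ) with hD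
    have hexp' : A * B = C * D := by
      rw [hA, hB, hC, hD, ← Real.rpow_add hn', ← Real.rpow_add hn']
      congr 1
      ring
    rw [div_eq_div_iff (by positivity) (by positivity)]
    field_simp
    rw [mul_assoc, mul_div_cancel_left₀ _ (hpr _ (by linarith)).ne']
    exact hexp'.symm
  -- C2
  have hC2 : Tendsto (fun n => (Real.GammaSeq (1/2) n * Real.GammaSeq (x+1) n) /
      (Real.GammaSeq (x+1/2) n * Real.GammaSeq 1 n)) atTop (𝓝 P) := by
    have h := ((Real.GammaSeq_tendsto_Gamma (1/2)).mul (Real.GammaSeq_tendsto_Gamma (x+1))).div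
      ((Real.GammaSeq_tendsto_Gamma (x+1/2)).mul (Real.GammaSeq_tendsto_Gamma 1))
      (by rw [Real.Gamma_one, mul_one]; exact hGamma2.ne')
    rw [Real.Gamma_one, Real.Gamma_one_half_eq, mul_one] at h
    exact h
  have hC3 : Tendsto Q atTop (𝓝 P) := by
    apply hC2.congr'
    filter_upwards [eventually_ge_atTop 1] with n hn
    exact (hC1 n hn).symm
  have hC4 : Tendsto (fun n => Real.log (Q n)) atTop (𝓝 (Real.log P)) :=
    ((Real.continuousAt_log hP.ne').tendsto).comp hC3
  have hlogQ : ∀ n, Real.log (Q n) = ∑ j ∈ Finset.range (n+1), uf j x := by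
    intro n
    rw [hQ_def]
    rw [Real.log_prod (fun j _ => (hr_pos j).ne')]
    apply Finset.sum_congr rfl
    intro j _
    have h1 := af_pos j; have h2 := bf_pos j
    have hx1 : 0 < x + af j := by linarith
    have hx2 : 0 < x + bf j := by linarith
    rw [Real.log_div (by positivity) (by positivity), Real.log_mul hx1.ne' h2.ne',
       Real.log_mul h1.ne' hx2.ne']
    unfold uf
    ring
  have hC5 : Tendsto (fun n => ∑ j ∈ Finset.range (n+1), uf j x) atTop (𝓝 (Real.log P)) :=
    hC4.congr hlogQ
  have hC6 : Tendsto (fun n => ∑ j ∈ Finset.range (n+1), uf j x) atTop (𝓝 (∑' n, uf n x)) :=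
    hsummable.hasSum.tendsto_sum_nat.comp (tendsto_add_atTop_nat 1)
  exact tendsto_nhds_unique hC6 hC5

lemma uf_eq_vf (n : ℕ) {x : ℝ} (hx : 0 < x) : uf n x = x * vf 0 n x := by
  unfold uf vf
  rw [Jf_zero_eq (af_pos n) hx, Jf_zero_eq (bf_pos n) hx]
  field_simp

lemma summable_uf {x : ℝ} (hx : 0 < x) : Summable (fun n => uf n x) := by
  have := (summable_vf 0 hx.le).mul_left x
  exact this.congr fun n => (uf_eq_vf n hx).symm

noncomputable def Sf (k : ℕ) (x : ℝ) : ℝ := Real.log 2 / x ^ (k+1) + ∑' n, vf k n x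

lemma Sf_nonneg (k : ℕ) {x : ℝ} (hx : 0 < x) : 0 ≤ Sf k x := by
  unfold Sf
  have h1 : 0 ≤ Real.log 2 := Real.log_nonneg (by norm_num)
  have h2 : 0 ≤ ∑' n, vf k n x := tsum_nonneg fun n => vf_nonneg k n hx.le
  positivity

lemma Sf_hasDerivAt (k : ℕ) {x : ℝ} (hx : 0 < x) :
    HasDerivAt (Sf k) (-(((k:ℝ)+1) * Sf (k+1) x)) x := by
  have h1 : HasDerivAt (fun y : ℝ => Real.log 2 / y ^ (k+1))
      (-(((k:ℝ)+1) * (Real.log 2 / x ^ (k+1+1)))) x := by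
    have hd := (hasDerivAt_const x (Real.log 2)).div (hasDerivAt_pow (k+1) x)
      (pow_ne_zero _ hx.ne')
    refine hd.congr_deriv ?_
    have hxne : x ≠ 0 := hx.ne'
    simp only [Nat.add_sub_cancel]
    push_cast
    field_simp
    ring
  have h2 : HasDerivAt (fun z : ℝ => ∑' n, vf k n z)
      (∑' n, -(((k:ℝ)+1) * vf (k+1) n x)) x := by
    apply hasDerivAt_tsum_of_isPreconnected
      (u := fun n : ℕ => ((k:ℝ)+1) * ((((k:ℝ)+1)+1) * 2^(k+1+1) / ((n:ℝ)+1)^2))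
      ?_ isOpen_Ioi isPreconnected_Ioi ?_ ?_ (mem_Ioi.mpr hx)
      (summable_vf k hx.le) (mem_Ioi.mpr hx)
    · have h0 : Summable (fun n : ℕ => 1 / ((n:ℝ)+1)^2) := by
        have := (summable_nat_add_iff (f := fun n : ℕ => 1 / (n:ℝ)^2) 1).2
          (summable_one_div_nat_pow.mpr one_lt_two)
        refine this.congr fun n => by push_cast; ring
      have := h0.mul_left (((k:ℝ)+1) * ((((k:ℝ)+1)+1) * 2^(k+1+1)))
      refine this.congr fun n => by push_cast; ring
    · intro n y hy
      rw [mem_Ioi] at hy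
      have ha := Jf_hasDerivAt k (af_pos n) hy
      have hb := Jf_hasDerivAt k (bf_pos n) hy
      have := ha.sub hb
      refine this.congr_deriv ?_
      unfold vf
      ring
    · intro n y hy
      rw [mem_Ioi] at hy
      rw [Real.norm_eq_abs, abs_neg,
        abs_of_nonneg (mul_nonneg (by positivity) (vf_nonneg (k+1) n hy.le))]
      have := vf_le (k+1) n hy.le
      have hk1 : (0:ℝ) ≤ (k:ℝ)+1 := by positivity
      have hb2 : vf (k+1) n y ≤ (((k:ℝ)+1)+1) * 2^(k+1+1) / ((n:ℝ)+1)^2 := by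
        refine this.trans (le_of_eq ?_)
        push_cast
        ring
      exact mul_le_mul_of_nonneg_left hb2 hk1
  have h2' : (∑' n, -(((k:ℝ)+1) * vf (k+1) n x))
      = -(((k:ℝ)+1) * ∑' n, vf (k+1) n x) := by
    rw [tsum_neg, tsum_mul_left]
  rw [h2'] at h2
  have := h1.add h2
  refine this.congr_deriv ?_
  unfold Sf
  ring

lemma main_identity :
    ∀ k : ℕ, ∀ x : ℝ, 0 < x →
      iteratedDeriv k
        (fun y : ℝ =>
          Real.log ((2 * Real.sqrt π * Real.Gamma (y + 1) / Real.Gamma (y + 1 / 2)) ^ (1 / y))) x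
      = (-1 : ℝ)^k * (Nat.factorial k : ℝ) * Sf k x := by
  intro k
  induction k with
  | zero =>
    intro x hx
    rw [iteratedDeriv_zero]
    simp only [pow_zero, Nat.factorial_zero, Nat.cast_one, one_mul]
    have hG1 : 0 < Real.Gamma (x+1) := Real.Gamma_pos_of_pos (by linarith)
    have hG2 : 0 < Real.Gamma (x+1/2) := Real.Gamma_pos_of_pos (by linarith)
    have hsp : 0 < Real.sqrt π := Real.sqrt_pos.mpr Real.pi_pos
    have hQ2 : 0 < 2 * Real.sqrt π * Real.Gamma (x+1) / Real.Gamma (x+1/2) := by positivity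
    rw [Real.log_rpow hQ2]
    have hP : 0 < Real.sqrt π * Real.Gamma (x+1) / Real.Gamma (x+1/2) := by positivity
    have hsplit : 2 * Real.sqrt π * Real.Gamma (x+1) / Real.Gamma (x+1/2)
        = 2 * (Real.sqrt π * Real.Gamma (x+1) / Real.Gamma (x+1/2)) := by ring
    rw [hsplit, Real.log_mul (by norm_num) hP.ne']
    rw [← sumQ hx (summable_uf hx)]
    unfold Sf
    have huf : (∑' n, uf n x) = x * ∑' n, vf 0 n x := by
      rw [← tsum_mul_left]
      exact tsum_congr fun n => uf_eq_vf n hx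
    rw [huf]
    field_simp
    ring
  | succ k ih =>
    intro x hx
    rw [iteratedDeriv_succ]
    have hev : iteratedDeriv k
        (fun y : ℝ =>
          Real.log ((2 * Real.sqrt π * Real.Gamma (y + 1) / Real.Gamma (y + 1 / 2)) ^ (1 / y)))
        =ᶠ[𝓝 x] (fun y => (-1 : ℝ)^k * (Nat.factorial k : ℝ) * Sf k y) :=
      eventually_of_mem (Ioi_mem_nhds hx) (fun y hy => ih y (mem_Ioi.mp hy))
    rw [hev.deriv_eq]
    have hd := (Sf_hasDerivAt k hx).const_mul ((-1 : ℝ)^k * (Nat.factorial k : ℝ))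
    rw [hd.deriv]
    rw [Nat.factorial_succ]
    push_cast
    ring

theorem stmt_2 :
    ∀ k : ℕ, 1 ≤ k → ∀ x : ℝ, 0 < x →
      0 ≤ (-1 : ℝ) ^ k *
        iteratedDeriv k
          (fun y : ℝ =>
            Real.log ((2 * Real.sqrt π * Real.Gamma (y + 1) / Real.Gamma (y + 1 / 2)) ^ (1 / y))) x := by
  intro k _ x hx
  rw [main_identity k x hx]
  have h1 : (-1 : ℝ)^k * ((-1 : ℝ)^k * (Nat.factorial k : ℝ) * Sf k x)
      = (Nat.factorial k : ℝ) * Sf k x := by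
    rw [← mul_assoc, ← mul_assoc, ← mul_pow]
    norm_num
  rw [h1]
  exact mul_nonneg (by positivity) (Sf_nonneg k hx)
end

section
/- Let a, b, c > 0 and, for an integer k ≥ 1, define H_{a,b;c;k}(x) = ln c + ln Γ(x+a) − ln Γ(x+b) + Σ_{i=1}^{k} ((−1)^i x^i / i!)·[ψ^{(i−1)}(x+a) − ψ^{(i−1)}(x+b)] for x > 0. Then for every integer k ≥ 1 and every x > 0, the k-th derivative of ln h_{a,b;c}, where h_{a,b;c}(x) = (c·Γ(x+a)/Γ(x+b))^{1/x}, satisfies (d^k/dx^k)[ln h_{a,b;c}(x)] = ((−1)^k k! / x^{k+1}) · H_{a,b;c;k}(x). -/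
open Real Finset

/-- The polygamma function `ψ^{(i)}`, the `i`-th derivative of the digamma
function `ψ = (log Γ)'`; in particular `polygamma 0 = ψ`. -/
noncomputable def polygamma (i : ℕ) (x : ℝ) : ℝ :=
  iteratedDeriv (i + 1) (fun y : ℝ => Real.log (Real.Gamma y)) x

/-- The auxiliary function `H_{a,b;c;k}`. -/
noncomputable def H (a b c : ℝ) (k : ℕ) (x : ℝ) : ℝ :=
  Real.log c + Real.log (Real.Gamma (x + a)) - Real.log (Real.Gamma (x + b)) +
    ∑ i ∈ Finset.Icc 1 k,
      ((-1 : ℝ) ^ i * x ^ i / (Nat.factorial i : ℝ)) *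
        (polygamma (i - 1) (x + a) - polygamma (i - 1) (x + b))

/-- The complex Gamma function is analytic on the right half-plane. -/
lemma analyticOnNhd_cGamma : AnalyticOnNhd ℂ Complex.Gamma {z : ℂ | 0 < z.re} := by
  refine DifferentiableOn.analyticOnNhd (fun z hz => ?_)
    (isOpen_lt continuous_const Complex.continuous_re)
  refine (Complex.differentiableAt_Gamma z fun m => ?_).differentiableWithinAt
  intro h
  simp only [Set.mem_setOf_eq, h, Complex.neg_re, Complex.natCast_re] at hz
  linarith [Nat.cast_nonneg (α := ℝ) m]

/-- `log ∘ Γ` is real-analytic at positive points. -/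
lemma analyticAt_logGamma {t : ℝ} (ht : 0 < t) :
    AnalyticAt ℝ (fun y : ℝ => Real.log (Real.Gamma y)) t := by
  have h1 : AnalyticAt ℂ (fun z => Complex.log (Complex.Gamma z)) (t : ℂ) := by
    refine AnalyticAt.clog (analyticOnNhd_cGamma _ (by simpa using ht)) ?_
    rw [Complex.Gamma_ofReal]
    exact Complex.ofReal_mem_slitPlane.2 (Real.Gamma_pos_of_pos ht)
  have h2 : AnalyticAt ℝ (fun y : ℝ => (Complex.log (Complex.Gamma (y : ℂ))).re) t :=
    (Complex.reCLM.analyticAt _).comp ((h1.restrictScalars).comp (Complex.ofRealCLM.analyticAt t))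
  refine h2.congr ?_
  filter_upwards [isOpen_Ioi.mem_nhds ht] with s hs
  rw [Complex.Gamma_ofReal, ← Complex.ofReal_log (Real.Gamma_pos_of_pos hs).le, Complex.ofReal_re]

lemma hasDerivAt_iteratedDeriv' {f : ℝ → ℝ} (hf : AnalyticOnNhd ℝ f (Set.Ioi 0)) (n : ℕ)
    {x : ℝ} (hx : 0 < x) : HasDerivAt (iteratedDeriv n f) (iteratedDeriv (n + 1) f x) x := by
  have h := (hf.iterated_deriv n) x hx
  rw [← iteratedDeriv_eq_iterate] at h
  have hd := h.differentiableAt.hasDerivAt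
  rwa [← iteratedDeriv_succ] at hd

/-- The key identity, for a general function `F` analytic on `(0, ∞)`. -/
lemma key (F : ℝ → ℝ) (hF : AnalyticOnNhd ℝ F (Set.Ioi 0)) (k : ℕ) :
    ∀ x : ℝ, 0 < x → iteratedDeriv k (fun y => F y / y) x
      = (-1 : ℝ) ^ k * (Nat.factorial k : ℝ) / x ^ (k + 1) *
        ∑ i ∈ Finset.range (k + 1),
          (-1 : ℝ) ^ i * x ^ i / (Nat.factorial i : ℝ) * iteratedDeriv i F x := by
  induction k with
  | zero =>
    intro x hx
    simp only [iteratedDeriv_zero, zero_add, pow_zero, Nat.factorial_zero, Finset.sum_range_one,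
      Nat.cast_one, pow_one]
    field_simp
  | succ k ih =>
    intro x hx
    rw [iteratedDeriv_succ]
    have hev : deriv (iteratedDeriv k fun y => F y / y) x
        = deriv (fun y => (-1 : ℝ) ^ k * (Nat.factorial k : ℝ) / y ^ (k + 1) *
            ∑ i ∈ Finset.range (k + 1),
              (-1 : ℝ) ^ i * y ^ i / (Nat.factorial i : ℝ) * iteratedDeriv i F y) x := by
      apply Filter.EventuallyEq.deriv_eq
      filter_upwards [isOpen_Ioi.mem_nhds hx] with t ht using ih t ht
    rw [hev]
    have hS : HasDerivAt
        (fun y => ∑ i ∈ Finset.range (k + 1),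
          (-1 : ℝ) ^ i * y ^ i / (Nat.factorial i : ℝ) * iteratedDeriv i F y)
        ((-1 : ℝ) ^ k * x ^ k / (Nat.factorial k : ℝ) * iteratedDeriv (k + 1) F x) x := by
      have h1 : HasDerivAt
          (fun y => ∑ i ∈ Finset.range (k + 1),
            (-1 : ℝ) ^ i * y ^ i / (Nat.factorial i : ℝ) * iteratedDeriv i F y)
          (∑ i ∈ Finset.range (k + 1),
            ((-1 : ℝ) ^ i * (↑i * x ^ (i - 1)) / (Nat.factorial i : ℝ) * iteratedDeriv i F x
              + (-1 : ℝ) ^ i * x ^ i / (Nat.factorial i : ℝ) * iteratedDeriv (i + 1) F x)) x := by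
        refine HasDerivAt.fun_sum fun i _ => ?_
        exact (((hasDerivAt_pow i x).const_mul ((-1 : ℝ) ^ i)).div_const _).mul
          (hasDerivAt_iteratedDeriv' hF i hx)
      convert h1 using 1
      rw [Finset.sum_add_distrib]
      set u : ℕ → ℝ := fun i => (-1 : ℝ) ^ i * x ^ i / (Nat.factorial i : ℝ)
        * iteratedDeriv (i + 1) F x with hu
      have h2 : ∑ i ∈ Finset.range (k + 1),
          (-1 : ℝ) ^ i * (↑i * x ^ (i - 1)) / (Nat.factorial i : ℝ) * iteratedDeriv i F x
          = -∑ i ∈ Finset.range k, u i := by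
        rw [Finset.sum_range_succ']
        simp only [Nat.cast_zero, zero_mul, mul_zero, zero_div, zero_mul, pow_zero, one_mul,
          Nat.factorial_zero, add_zero, Nat.cast_one]
        rw [← Finset.sum_neg_distrib]
        refine Finset.sum_congr rfl fun i _ => ?_
        rw [hu]
        have hfac : ((Nat.factorial (i + 1) : ℝ)) = (i + 1) * (Nat.factorial i : ℝ) := by
          rw [Nat.factorial_succ]; push_cast; ring
        rw [pow_succ, hfac]
        have h0 : (Nat.factorial i : ℝ) ≠ 0 := Nat.cast_ne_zero.2 (Nat.factorial_ne_zero i)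
        field_simp
        rw [show i + 1 - 1 = i by omega]; push_cast; ring
      rw [h2, Finset.sum_range_succ]
      ring
    have hpow : (x : ℝ) ^ (k + 1) ≠ 0 := pow_ne_zero _ hx.ne'
    have hC : HasDerivAt
        (fun y : ℝ => (-1 : ℝ) ^ k * (Nat.factorial k : ℝ) / y ^ (k + 1))
        ((0 * x ^ (k + 1) - (-1 : ℝ) ^ k * (Nat.factorial k : ℝ) * (↑(k + 1) * x ^ k))
          / (x ^ (k + 1)) ^ 2) x :=
      (hasDerivAt_const x _).div (hasDerivAt_pow (k + 1) x) hpow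
    rw [(hC.fun_mul hS).deriv]
    rw [Finset.sum_range_succ _ (k + 1)]
    have h0 : (Nat.factorial k : ℝ) ≠ 0 := Nat.cast_ne_zero.2 (Nat.factorial_ne_zero k)
    have hfac : ((Nat.factorial (k + 1) : ℝ)) = (k + 1) * (Nat.factorial k : ℝ) := by
      rw [Nat.factorial_succ]; push_cast; ring
    rw [hfac]
    push_cast
    field_simp
    ring

lemma iteratedDerivWithin_of_isOpen' {f : ℝ → ℝ} {s : Set ℝ} (hs : IsOpen s) {x : ℝ}
    (hx : x ∈ s) (n : ℕ) : iteratedDerivWithin n f s x = iteratedDeriv n f x := by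
  simp only [iteratedDerivWithin, iteratedDeriv, iteratedFDerivWithin_of_isOpen n hs hx]

lemma deriv_shift (a b c : ℝ) (ha : 0 < a) (hb : 0 < b) {i : ℕ} (hi : 1 ≤ i)
    {x : ℝ} (hx : 0 < x) :
    iteratedDeriv i
      (fun y : ℝ => Real.log c + Real.log (Real.Gamma (y + a)) - Real.log (Real.Gamma (y + b))) x
      = polygamma (i - 1) (x + a) - polygamma (i - 1) (x + b) := by
  set s : Set ℝ := Set.Ioi 0 with hs
  have hso : IsOpen s := isOpen_Ioi
  have hsu : UniqueDiffOn ℝ s := hso.uniqueDiffOn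
  have hxs : x ∈ s := hx
  set A : ℝ → ℝ := fun y => Real.log (Real.Gamma (y + a)) with hA
  set B : ℝ → ℝ := fun y => Real.log (Real.Gamma (y + b)) with hB
  have hCA : ContDiffOn ℝ i A s := fun t ht =>
    (((analyticAt_logGamma (by simp only [Pi.add_apply, id_eq]; exact add_pos (by simpa [hs] using ht) (by assumption))).comp
      (analyticAt_id.add analyticAt_const)).contDiffAt).contDiffWithinAt
  have hCB : ContDiffOn ℝ i B s := fun t ht =>
    (((analyticAt_logGamma (by simp only [Pi.add_apply, id_eq]; exact add_pos (by simpa [hs] using ht) (by assumption))).comp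
      (analyticAt_id.add analyticAt_const)).contDiffAt).contDiffWithinAt
  have e1 : iteratedDeriv i
      (fun y : ℝ => Real.log c + Real.log (Real.Gamma (y + a)) - Real.log (Real.Gamma (y + b))) x
      = iteratedDerivWithin i (fun y => Real.log c + (A y - B y)) s x := by
    rw [iteratedDerivWithin_of_isOpen' hso hxs]
    congr 1
    funext y
    simp [hA, hB]; ring
  rw [e1, iteratedDerivWithin_const_add hi,
    show (fun y => A y - B y) = A - B from rfl, iteratedDerivWithin_sub hxs hsu (hCA x hxs) (hCB x hxs),
    iteratedDerivWithin_of_isOpen' hso hxs, iteratedDerivWithin_of_isOpen' hso hxs]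
  have hAB : ∀ d : ℝ, iteratedDeriv i (fun y => Real.log (Real.Gamma (y + d))) x
      = iteratedDeriv i (fun y : ℝ => Real.log (Real.Gamma y)) (x + d) := fun d => by
    rw [iteratedDeriv_comp_add_const i (fun y : ℝ => Real.log (Real.Gamma y)) d]
  rw [hA, hB, hAB a, hAB b]
  simp only [polygamma, Nat.sub_add_cancel hi]

theorem stmt_3 (a b c : ℝ) (ha : 0 < a) (hb : 0 < b) (hc : 0 < c)
    (k : ℕ) (hk : 1 ≤ k) (x : ℝ) (hx : 0 < x) :
    iteratedDeriv k
        (fun y : ℝ =>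
          (Real.log c + Real.log (Real.Gamma (y + a)) - Real.log (Real.Gamma (y + b))) / y) x
      = ((-1 : ℝ) ^ k * (Nat.factorial k : ℝ) / x ^ (k + 1)) * H a b c k x := by
  set F : ℝ → ℝ :=
    fun y => Real.log c + Real.log (Real.Gamma (y + a)) - Real.log (Real.Gamma (y + b)) with hF
  have hFa : AnalyticOnNhd ℝ F (Set.Ioi 0) := by
    intro t ht
    have ht' : (0 : ℝ) < t := ht
    have hga : AnalyticAt ℝ (fun y : ℝ => y + a) t := analyticAt_id.add analyticAt_const
    have hgb : AnalyticAt ℝ (fun y : ℝ => y + b) t := analyticAt_id.add analyticAt_const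
    have h1 : AnalyticAt ℝ (fun y : ℝ => Real.log (Real.Gamma (y + a))) t :=
      AnalyticAt.comp (f := fun y : ℝ => y + a) (x := t)
        (analyticAt_logGamma (add_pos ht' ha)) hga
    have h2 : AnalyticAt ℝ (fun y : ℝ => Real.log (Real.Gamma (y + b))) t :=
      AnalyticAt.comp (f := fun y : ℝ => y + b) (x := t)
        (analyticAt_logGamma (add_pos ht' hb)) hgb
    exact (analyticAt_const.add h1).sub h2
  rw [key F hFa k x hx]
  congr 1
  rw [Finset.sum_range_succ']
  have h0 : (-1 : ℝ) ^ 0 * x ^ 0 / (Nat.factorial 0 : ℝ) * iteratedDeriv 0 F x = F x := by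
    simp [iteratedDeriv_zero]
  rw [h0, H, show Finset.Icc 1 k = Finset.Ico 1 (k+1) from (Finset.Ico_add_one_right_eq_Icc 1 k).symm,
    Finset.sum_Ico_eq_sum_range]
  simp only [Nat.add_sub_cancel]
  have hsum : ∀ i ∈ Finset.range k,
      (-1 : ℝ) ^ (i + 1) * x ^ (i + 1) / (Nat.factorial (i + 1) : ℝ)
        * iteratedDeriv (i + 1) F x
      = (-1 : ℝ) ^ (1 + i) * x ^ (1 + i) / (Nat.factorial (1 + i) : ℝ) *
          (polygamma (1 + i - 1) (x + a) - polygamma (1 + i - 1) (x + b)) := by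
    intro i _
    rw [hF, deriv_shift a b c ha hb (Nat.le_add_left 1 i) hx]
    have h11 : 1 + i = i + 1 := by omega
    rw [h11]
  rw [Finset.sum_congr rfl hsum, hF]
  ring
end

section
/- Let a, b, c > 0 with a > b and, for an integer k ≥ 1, define H_{a,b;c;k}(x) = ln c + ln Γ(x+a) − ln Γ(x+b) + Σ_{i=1}^{k} ((−1)^i x^i / i!)·[ψ^{(i−1)}(x+a) − ψ^{(i−1)}(x+b)] for x ≥ 0. Then H_{a,b;c;k} is (strictly) increasing on (0,∞). -/
open Real Finset

open Filter Topology


noncomputable def L (y : ℝ) : ℝ := Real.log (Real.Gamma y)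

noncomputable def fser (n : ℕ) (y : ℝ) : ℝ :=
  y * ((n:ℝ) + 1)⁻¹ - Real.log (1 + y * ((n:ℝ) + 1)⁻¹)

lemma log_one_add_le {t : ℝ} (ht : 0 ≤ t) : Real.log (1 + t) ≤ t := by
  have := Real.log_le_sub_one_of_pos (x := 1 + t) (by linarith)
  linarith

lemma le_log_one_add {t : ℝ} (ht : 0 ≤ t) : t - t ^ 2 ≤ Real.log (1 + t) := by
  have h1 : (0:ℝ) < 1 + t := by linarith
  have h2 := Real.log_le_sub_one_of_pos (x := (1 + t)⁻¹) (by positivity)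
  rw [Real.log_inv] at h2
  have h3 : (1 + t)⁻¹ - 1 = -(t / (1 + t)) := by field_simp; ring
  rw [h3] at h2
  have h4 : t / (1 + t) ≤ Real.log (1 + t) := by linarith
  have h5 : t - t ^ 2 ≤ t / (1 + t) := by
    rw [le_div_iff₀ h1]
    nlinarith
  linarith

lemma fser_nonneg {n : ℕ} {y : ℝ} (hy : 0 ≤ y) : 0 ≤ fser n y := by
  have ht : 0 ≤ y * ((n:ℝ) + 1)⁻¹ := by positivity
  have := log_one_add_le ht
  rw [fser]; linarith

lemma fser_le {n : ℕ} {y : ℝ} (hy : 0 ≤ y) :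
    fser n y ≤ y ^ 2 * (((n:ℝ) + 1) ^ 2)⁻¹ := by
  have ht : 0 ≤ y * ((n:ℝ) + 1)⁻¹ := by positivity
  have := le_log_one_add ht
  rw [fser]
  have : (y * ((n:ℝ) + 1)⁻¹) ^ 2 = y ^ 2 * (((n:ℝ) + 1) ^ 2)⁻¹ := by
    rw [mul_pow, inv_pow]
  linarith [le_log_one_add ht]

lemma summable_shift (m : ℕ) (hm : 2 ≤ m) :
    Summable fun n : ℕ => (((n:ℝ) + 1) ^ m)⁻¹ := by
  have := (summable_nat_add_iff (f := fun n : ℕ => (1:ℝ) / (n : ℝ) ^ m) 1).2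
    (Real.summable_one_div_nat_pow.2 hm)
  simpa [one_div] using this

lemma summable_fser {y : ℝ} (hy : 0 ≤ y) : Summable fun n => fser n y :=
  Summable.of_nonneg_of_le (fun n => fser_nonneg hy) (fun n => fser_le hy)
    ((summable_shift 2 le_rfl).mul_left _)

lemma L_eq {x : ℝ} (hx : 0 < x) :
    L x = -Real.eulerMascheroniConstant * x - Real.log x + ∑' n : ℕ, fser n x := by
  have hΓpos := Real.Gamma_pos_of_pos hx
  have h1 : Tendsto (fun N => Real.log (Real.GammaSeq x N)) atTop (𝓝 (L x)) :=
    ((Real.continuousAt_log hΓpos.ne').tendsto).comp (Real.GammaSeq_tendsto_Gamma x)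
  set T : ℕ → ℝ := fun N =>
    -Real.log x + ∑ j ∈ range N, fser j x - x * ((harmonic N : ℝ) - Real.log N) with hT
  have key : ∀ N : ℕ, 1 ≤ N → Real.log (Real.GammaSeq x N) = T N := by
    intro N hN
    have hN0 : (0:ℝ) < (N:ℝ) := by exact_mod_cast hN
    have hprodpos : ∀ j : ℕ, (0:ℝ) < x + j := fun j => by positivity
    have hprod : (0:ℝ) < ∏ j ∈ range (N + 1), (x + (j:ℝ)) :=
      Finset.prod_pos fun j _ => hprodpos j
    have hfact : (0:ℝ) < (N.factorial : ℝ) := by exact_mod_cast N.factorial_pos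
    rw [Real.GammaSeq, Real.log_div (by positivity) hprod.ne',
      Real.log_mul (by positivity) hfact.ne', Real.log_rpow hN0,
      Real.log_prod (fun j _ => (hprodpos j).ne')]
    have hlogfact : Real.log (N.factorial : ℝ) = ∑ j ∈ range N, Real.log ((j:ℝ) + 1) := by
      rw [← Finset.prod_range_add_one_eq_factorial]
      push_cast
      rw [Real.log_prod (fun j _ => by positivity)]
    have hsplit : ∑ j ∈ range (N + 1), Real.log (x + (j:ℝ)) =
        Real.log x + ∑ j ∈ range N, Real.log (x + ((j:ℝ) + 1)) := by
      rw [Finset.sum_range_succ' (fun j => Real.log (x + (j:ℝ))) N]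
      simp only [Nat.cast_add, Nat.cast_one, Nat.cast_zero, add_zero]
      ring
    have hharm : (harmonic N : ℝ) = ∑ j ∈ range N, ((j:ℝ) + 1)⁻¹ := by
      rw [harmonic]
      push_cast
      rfl
    show _ = -Real.log x + ∑ j ∈ range N, fser j x - x * ((harmonic N : ℝ) - Real.log (N:ℝ))
    rw [hlogfact, hsplit, hharm]
    have hterm : ∀ j ∈ range N, Real.log ((j:ℝ) + 1) - Real.log (x + ((j:ℝ) + 1)) =
        fser j x - x * ((j:ℝ) + 1)⁻¹ := by
      intro j _
      have hj : (0:ℝ) < (j:ℝ) + 1 := by positivity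
      have hxj : (0:ℝ) < x + ((j:ℝ) + 1) := by positivity
      rw [fser]
      have : 1 + x * ((j:ℝ) + 1)⁻¹ = (x + ((j:ℝ) + 1)) / ((j:ℝ) + 1) := by field_simp; ring
      rw [this, Real.log_div hxj.ne' hj.ne']
      ring
    have hsub := Finset.sum_congr rfl hterm
    rw [Finset.sum_sub_distrib, Finset.sum_sub_distrib] at hsub
    have hmul : ∑ j ∈ range N, x * ((j:ℝ) + 1)⁻¹ = x * ∑ j ∈ range N, ((j:ℝ) + 1)⁻¹ := by
      rw [Finset.mul_sum]
    rw [hmul] at hsub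
    linarith [hsub]
  have h2 : Tendsto T atTop
      (𝓝 (-Real.log x + (∑' n, fser n x) - x * Real.eulerMascheroniConstant)) := by
    refine Tendsto.sub (Tendsto.const_add _ ?_) (Tendsto.const_mul _ ?_)
    · exact (summable_fser hx.le).hasSum.tendsto_sum_nat
    · refine Real.tendsto_eulerMascheroniSeq'.congr' ?_
      filter_upwards [eventually_ge_atTop 1] with N hN
      rw [Real.eulerMascheroniSeq', if_neg (by omega)]
  have h1' : Tendsto T atTop (𝓝 (L x)) := by
    refine h1.congr' ?_
    filter_upwards [eventually_ge_atTop 1] with N hN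
    exact key N hN
  have := tendsto_nhds_unique h1' h2
  rw [this]; ring

noncomputable def psi (y : ℝ) : ℝ :=
  -Real.eulerMascheroniConstant - y⁻¹ + ∑' n : ℕ, (((n:ℝ) + 1)⁻¹ - (y + (n:ℝ) + 1)⁻¹)

lemma summable_psi {y : ℝ} (hy : 0 < y) :
    Summable fun n : ℕ => (((n:ℝ) + 1)⁻¹ - (y + (n:ℝ) + 1)⁻¹) := by
  refine Summable.of_nonneg_of_le (fun n => ?_) (fun n => ?_)
    ((summable_shift 2 le_rfl).mul_left y)
  · have h1 : (0:ℝ) < (n:ℝ) + 1 := by positivity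
    have h2 : (0:ℝ) < y + (n:ℝ) + 1 := by positivity
    rw [sub_nonneg]
    exact inv_anti₀ h1 (by linarith)
  · have h1 : (0:ℝ) < (n:ℝ) + 1 := by positivity
    have h2 : (0:ℝ) < y + (n:ℝ) + 1 := by positivity
    rw [show ((n:ℝ) + 1)⁻¹ - (y + (n:ℝ) + 1)⁻¹ = y / (((n:ℝ) + 1) * (y + (n:ℝ) + 1)) by
      field_simp; try ring]
    rw [show y * (((n:ℝ) + 1) ^ 2)⁻¹ = y / ((n:ℝ) + 1) ^ 2 from (div_eq_mul_inv _ _).symm]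
    refine div_le_div_of_nonneg_left hy.le (by positivity) ?_
    nlinarith

lemma hasDerivAt_L {x : ℝ} (hx : 0 < x) : HasDerivAt L (psi x) x := by
  -- derivative of the series part
  have hts : HasDerivAt (fun y : ℝ => ∑' n : ℕ, fser n y)
      (∑' n : ℕ, (((n:ℝ) + 1)⁻¹ - (x + (n:ℝ) + 1)⁻¹)) x := by
    refine hasDerivAt_tsum_of_isPreconnected (F := ℝ) (𝕜 := ℝ)
      (g := fun n y => fser n y)
      (g' := fun (n : ℕ) (y : ℝ) => ((n:ℝ) + 1)⁻¹ - (y + (n:ℝ) + 1)⁻¹)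
      (u := fun n : ℕ => (x + 1) * (((n:ℝ) + 1) ^ 2)⁻¹)
      (t := Set.Ioo 0 (x + 1)) (y₀ := x)
      ((summable_shift 2 le_rfl).mul_left _) isOpen_Ioo (convex_Ioo _ _).isPreconnected
      (fun n y hy => ?_) (fun n y hy => ?_) ⟨hx, by linarith⟩ (summable_fser hx.le)
      ⟨hx, by linarith⟩
    · obtain ⟨hy0, hy1⟩ := hy
      have h1 : (0:ℝ) < (n:ℝ) + 1 := by positivity
      have h2 : (0:ℝ) < 1 + y * ((n:ℝ) + 1)⁻¹ := by positivity
      have hd1 : HasDerivAt (fun y : ℝ => y * ((n:ℝ) + 1)⁻¹) (((n:ℝ) + 1)⁻¹) y := by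
        simpa using (hasDerivAt_id y).mul_const (((n:ℝ) + 1)⁻¹)
      have hd2 : HasDerivAt (fun y : ℝ => Real.log (1 + y * ((n:ℝ) + 1)⁻¹))
          ((((n:ℝ) + 1)⁻¹) / (1 + y * ((n:ℝ) + 1)⁻¹)) y := by
        have := ((hd1.const_add 1).log h2.ne')
        simpa using this
      have hd3 := hd1.sub hd2
      have h3 : (0:ℝ) < y + (n:ℝ) + 1 := by positivity
      have e1 : ((n:ℝ) + 1)⁻¹ / (1 + y * ((n:ℝ) + 1)⁻¹) = (y + (n:ℝ) + 1)⁻¹ := by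
        rw [div_eq_iff h2.ne', eq_comm, inv_mul_eq_div, div_eq_iff h3.ne']
        field_simp
        ring
      show HasDerivAt (fser n) (((n:ℝ) + 1)⁻¹ - (y + (n:ℝ) + 1)⁻¹) y
      rw [← e1]
      exact hd3
    · obtain ⟨hy0, hy1⟩ := hy
      have h1 : (0:ℝ) < (n:ℝ) + 1 := by positivity
      have h2 : (0:ℝ) < y + (n:ℝ) + 1 := by positivity
      have hnn : (0:ℝ) ≤ ((n:ℝ) + 1)⁻¹ - (y + (n:ℝ) + 1)⁻¹ := by
        rw [sub_nonneg]; exact inv_anti₀ h1 (by linarith)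
      rw [Real.norm_eq_abs, abs_of_nonneg hnn]
      rw [show ((n:ℝ) + 1)⁻¹ - (y + (n:ℝ) + 1)⁻¹ = y / (((n:ℝ) + 1) * (y + (n:ℝ) + 1)) by
        field_simp; try ring]
      have hstep : y / (((n:ℝ) + 1) * (y + (n:ℝ) + 1)) ≤ y / ((n:ℝ) + 1) ^ 2 :=
        div_le_div_of_nonneg_left hy0.le (by positivity) (by nlinarith)
      refine hstep.trans ?_
      rw [div_eq_mul_inv]
      have : (0:ℝ) ≤ (((n:ℝ) + 1) ^ 2)⁻¹ := by positivity
      nlinarith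
  have hS : HasDerivAt (fun y : ℝ =>
      -Real.eulerMascheroniConstant * y - Real.log y + ∑' n : ℕ, fser n y) (psi x) x := by
    have h1 : HasDerivAt (fun y : ℝ => -Real.eulerMascheroniConstant * y)
        (-Real.eulerMascheroniConstant) x := by
      simpa using (hasDerivAt_id x).const_mul (-Real.eulerMascheroniConstant)
    have h2 := Real.hasDerivAt_log hx.ne'
    have := (h1.sub h2).add hts
    rw [psi]
    exact this
  refine hS.congr_of_eventuallyEq ?_
  filter_upwards [Ioi_mem_nhds hx] with y hy
  exact L_eq (Set.mem_Ioi.1 hy)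

-- === P machinery (from b.lean) ===

noncomputable def P (m : ℕ) (x : ℝ) : ℝ := ∑' n : ℕ, ((x + n) ^ m)⁻¹

lemma summable_P {m : ℕ} (hm : 2 ≤ m) {x : ℝ} (hx : 0 < x) :
    Summable fun n : ℕ => ((x + n) ^ m)⁻¹ := by
  rw [← summable_nat_add_iff 1]
  have hs : Summable fun n : ℕ => (((n : ℝ) + 1) ^ m)⁻¹ := by
    have := (summable_nat_add_iff (f := fun n : ℕ => (1:ℝ) / (n : ℝ) ^ m) 1).2
      (Real.summable_one_div_nat_pow.2 hm)
    simpa [one_div] using this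
  refine Summable.of_nonneg_of_le (fun n => by positivity) (fun n => ?_) hs
  have h1 : ((n:ℝ) + 1) ^ m ≤ (x + ((n:ℕ) + 1 : ℕ)) ^ m := by
    refine pow_le_pow_left₀ (by positivity) ?_ m
    push_cast; linarith
  exact inv_anti₀ (by positivity) h1

lemma P_pos {m : ℕ} (hm : 2 ≤ m) {x : ℝ} (hx : 0 < x) : 0 < P m x := by
  refine Summable.tsum_pos (summable_P hm hx) (fun n => by positivity) 0 ?_
  simp only [Nat.cast_zero, add_zero]
  positivity

lemma hasDerivAt_P (j : ℕ) {x : ℝ} (hx : 0 < x) :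
    HasDerivAt (P (j + 2)) (-((j:ℝ) + 2) * P (j + 3) x) x := by
  have h2 : (0:ℝ) < x / 2 := by linarith
  have key : HasDerivAt (fun y : ℝ => ∑' n : ℕ, ((y + (n:ℝ)) ^ (j + 2))⁻¹)
      (∑' n : ℕ, (-((j:ℝ) + 2) * ((x + (n:ℝ)) ^ (j + 3))⁻¹)) x := by
    refine hasDerivAt_tsum_of_isPreconnected (F := ℝ) (𝕜 := ℝ)
      (g := fun (n : ℕ) (y : ℝ) => ((y + (n:ℝ)) ^ (j + 2))⁻¹)
      (g' := fun (n : ℕ) (y : ℝ) => -((j:ℝ) + 2) * ((y + (n:ℝ)) ^ (j + 3))⁻¹)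
      (u := fun n : ℕ => ((j:ℝ) + 2) * ((x / 2 + (n:ℝ)) ^ (j + 3))⁻¹)
      (t := Set.Ioi (x / 2)) (y₀ := x)
      (((summable_P (by omega) h2).mul_left _)) isOpen_Ioi (convex_Ioi _).isPreconnected
      (fun n y hy => ?_) (fun n y hy => ?_) (Set.mem_Ioi.2 (half_lt_self hx)) ?_
      (Set.mem_Ioi.2 (half_lt_self hx))
    · have hy' := Set.mem_Ioi.1 hy
      have hyn : (0:ℝ) < y + n := by have : (0:ℝ) ≤ (n:ℝ) := n.cast_nonneg; linarith
      have hd : HasDerivAt (fun y : ℝ => (y + (n:ℝ)) ^ (j + 2))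
          (((j:ℝ) + 2) * (y + n) ^ (j + 1)) y := by
        have h0 := ((hasDerivAt_id y).add_const (n:ℝ)).pow (j + 2)
        exact h0.congr_deriv (by simp [Nat.add_sub_cancel])
      have h5 := hd.inv (pow_ne_zero _ hyn.ne')
      refine h5.congr_deriv ?_
      symm
      show -((j:ℝ) + 2) * ((y + (n:ℝ)) ^ (j + 3))⁻¹ = _
      rw [eq_div_iff (by positivity)]
      have hne : y + (n:ℝ) ≠ 0 := hyn.ne'
      field_simp
      ring
    · have hy' := Set.mem_Ioi.1 hy
      have hyn : (0:ℝ) < y + n := by have : (0:ℝ) ≤ (n:ℝ) := n.cast_nonneg; linarith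
      show ‖-((j:ℝ) + 2) * ((y + (n:ℝ)) ^ (j + 3))⁻¹‖ ≤ _
      rw [Real.norm_eq_abs, abs_mul, abs_neg, abs_of_nonneg (by positivity : (0:ℝ) ≤ (j:ℝ)+2),
        abs_of_nonneg (by positivity : (0:ℝ) ≤ ((y + (n:ℝ)) ^ (j + 3))⁻¹)]
      have hb : (x / 2 + (n:ℝ)) ^ (j+3) ≤ (y + (n:ℝ)) ^ (j+3) :=
        pow_le_pow_left₀ (by positivity) (by have : (0:ℝ) ≤ (n:ℝ) := n.cast_nonneg; linarith) _
      have := inv_anti₀ (by positivity) hb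
      nlinarith [this, (by positivity : (0:ℝ) < (j:ℝ)+2)]
    · exact summable_P (by omega) hx
  have h3 : HasDerivAt (P (j + 2))
      (∑' n : ℕ, (-((j:ℝ) + 2) * ((x + (n:ℝ)) ^ (j + 3))⁻¹)) x := key
  convert h3 using 1
  rw [P, ← tsum_mul_left]

lemma hasDerivAt_psi {x : ℝ} (hx : 0 < x) : HasDerivAt psi (P 2 x) x := by
  have h2 : (0:ℝ) < x / 2 := by linarith
  have hts : HasDerivAt (fun y : ℝ => ∑' n : ℕ, (((n:ℝ) + 1)⁻¹ - (y + (n:ℝ) + 1)⁻¹))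
      (∑' n : ℕ, ((x + (n:ℝ) + 1) ^ 2)⁻¹) x := by
    refine hasDerivAt_tsum_of_isPreconnected (F := ℝ) (𝕜 := ℝ)
      (g := fun (n : ℕ) (y : ℝ) => ((n:ℝ) + 1)⁻¹ - (y + (n:ℝ) + 1)⁻¹)
      (g' := fun (n : ℕ) (y : ℝ) => ((y + (n:ℝ) + 1) ^ 2)⁻¹)
      (u := fun n : ℕ => ((x / 2 + (n:ℝ) + 1) ^ 2)⁻¹)
      (t := Set.Ioi (x / 2)) (y₀ := x) ?_ isOpen_Ioi (convex_Ioi _).isPreconnected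
      (fun n y hy => ?_) (fun n y hy => ?_) (Set.mem_Ioi.2 (half_lt_self hx))
      (summable_psi hx) (Set.mem_Ioi.2 (half_lt_self hx))
    · have := (summable_nat_add_iff (f := fun n : ℕ => ((x / 2 + (n:ℝ)) ^ 2)⁻¹) 1).2
        (summable_P le_rfl h2)
      refine this.congr fun n => ?_
      push_cast
      ring_nf
    · have hy' := Set.mem_Ioi.1 hy
      have hyn : (0:ℝ) < y + (n:ℝ) + 1 := by
        have : (0:ℝ) ≤ (n:ℝ) := n.cast_nonneg; linarith
      have hyn' : (0:ℝ) < y + ((n:ℝ) + 1) := by rw [← add_assoc]; exact hyn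
      have hd : HasDerivAt (fun y : ℝ => (y + ((n:ℝ) + 1))⁻¹) (-((y + ((n:ℝ) + 1)) ^ 2)⁻¹) y := by
        have h0 := (hasDerivAt_inv hyn'.ne').comp y ((hasDerivAt_id y).add_const ((n:ℝ) + 1))
        simpa [Function.comp_def] using h0
      have hd2 := hd.const_sub (((n:ℝ) + 1)⁻¹)
      simp only [← add_assoc, neg_neg] at hd2
      simpa using hd2
    · have hy' := Set.mem_Ioi.1 hy
      have hyn : (0:ℝ) < y + (n:ℝ) + 1 := by
        have : (0:ℝ) ≤ (n:ℝ) := n.cast_nonneg; linarith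
      have hxn : (0:ℝ) < x / 2 + (n:ℝ) + 1 := by
        have : (0:ℝ) ≤ (n:ℝ) := n.cast_nonneg; linarith
      rw [Real.norm_eq_abs, abs_of_nonneg (by positivity)]
      exact inv_anti₀ (by positivity) (by nlinarith)
  have h1 : HasDerivAt (fun y : ℝ => -Real.eulerMascheroniConstant - y⁻¹)
      ((x ^ 2)⁻¹) x := by
    have := (hasDerivAt_inv hx.ne').const_sub (-Real.eulerMascheroniConstant)
    exact this.congr_deriv (by ring)
  have hsum := h1.add hts
  have : psi = fun y : ℝ => (-Real.eulerMascheroniConstant - y⁻¹) +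
      ∑' n : ℕ, (((n:ℝ) + 1)⁻¹ - (y + (n:ℝ) + 1)⁻¹) := by
    funext y; rw [psi]
  rw [this]
  have hP2 : P 2 x = (x ^ 2)⁻¹ + ∑' n : ℕ, ((x + (n:ℝ) + 1) ^ 2)⁻¹ := by
    rw [P, Summable.tsum_eq_zero_add (summable_P le_rfl hx)]
    congr 1
    · norm_num
    · exact tsum_congr fun n => by push_cast; ring_nf
  rw [hP2]
  exact hsum

lemma analyticOnNhd_L : AnalyticOnNhd ℝ L (Set.Ioi 0) := by
  intro x hx
  simp only [Set.mem_Ioi] at hx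
  -- complex Gamma analytic on right half plane
  have hG : AnalyticOnNhd ℂ Complex.Gamma {z : ℂ | 0 < z.re} := by
    refine DifferentiableOn.analyticOnNhd (fun z hz => ?_) (by
      exact isOpen_lt continuous_const Complex.continuous_re)
    refine (Complex.differentiableAt_Gamma z fun m => ?_).differentiableWithinAt
    intro h
    rw [h] at hz
    simp at hz
    have : (0:ℝ) ≤ m := m.cast_nonneg
    linarith [hz]
  have hGx : AnalyticAt ℂ Complex.Gamma (x : ℂ) := hG _ (by simpa using hx)
  have hslit : Complex.Gamma (x : ℂ) ∈ Complex.slitPlane := by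
    rw [Complex.Gamma_ofReal]
    exact Complex.mem_slitPlane_iff.2 (Or.inl (by simpa using Real.Gamma_pos_of_pos hx))
  have hclog : AnalyticAt ℂ (fun z => Complex.log (Complex.Gamma z)) (x : ℂ) :=
    hGx.clog hslit
  have h1 : AnalyticAt ℝ (fun t : ℝ => Complex.log (Complex.Gamma (t : ℂ))) x :=
    hclog.restrictScalars.comp (Complex.ofRealCLM.analyticAt x)
  have h2 : AnalyticAt ℝ (fun t : ℝ => (Complex.log (Complex.Gamma (t : ℂ))).re) x :=
    (Complex.reCLM.analyticAt _).comp h1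
  refine h2.congr ?_
  have : Set.Ioi (0:ℝ) ∈ 𝓝 x := Ioi_mem_nhds hx
  filter_upwards [this] with t ht
  simp only [Set.mem_Ioi] at ht
  rw [Complex.Gamma_ofReal, Complex.log_re, Complex.norm_real, Real.norm_eq_abs,
    abs_of_pos (Real.Gamma_pos_of_pos ht)]
  rfl

lemma analyticOnNhd_iteratedDeriv_L (n : ℕ) :
    AnalyticOnNhd ℝ (iteratedDeriv n L) (Set.Ioi 0) := by
  induction n with
  | zero => simpa using analyticOnNhd_L
  | succ n ih =>
    rw [iteratedDeriv_succ]
    exact ih.deriv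

lemma hasDerivAt_iteratedDeriv_L (n : ℕ) {x : ℝ} (hx : 0 < x) :
    HasDerivAt (iteratedDeriv n L) (iteratedDeriv (n + 1) L x) x := by
  rw [iteratedDeriv_succ]
  exact ((analyticOnNhd_iteratedDeriv_L n) x hx).differentiableAt.hasDerivAt

lemma iteratedDeriv_L_two {x : ℝ} (hx : 0 < x) : iteratedDeriv 2 L x = P 2 x := by
  have heq : deriv L =ᶠ[nhds x] psi := by
    filter_upwards [Ioi_mem_nhds hx] with y hy
    exact (hasDerivAt_L (Set.mem_Ioi.1 hy)).deriv
  rw [show (2:ℕ) = 1 + 1 from rfl, iteratedDeriv_succ, iteratedDeriv_one]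
  rw [heq.deriv_eq]
  exact (hasDerivAt_psi hx).deriv

lemma iteratedDeriv_L_eq (j : ℕ) {x : ℝ} (hx : 0 < x) :
    iteratedDeriv (j + 2) L x = (-1 : ℝ) ^ j * ((j + 1).factorial : ℝ) * P (j + 2) x := by
  induction j generalizing x with
  | zero => simpa using iteratedDeriv_L_two hx
  | succ j ih =>
    have heq : iteratedDeriv (j + 2) L =ᶠ[nhds x]
        fun y => (-1 : ℝ) ^ j * ((j + 1).factorial : ℝ) * P (j + 2) y := by
      filter_upwards [Ioi_mem_nhds hx] with y hy
      exact ih (Set.mem_Ioi.1 hy)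
    rw [show j + 1 + 2 = (j + 2) + 1 from rfl, iteratedDeriv_succ, heq.deriv_eq]
    rw [((hasDerivAt_P j hx).const_mul ((-1 : ℝ) ^ j * ((j + 1).factorial : ℝ))).deriv]
    rw [show j + 1 + 1 = j + 2 from rfl, show j + 3 = (j + 1) + 2 from rfl]
    push_cast [Nat.factorial_succ, pow_succ]
    ring

lemma polygamma_eq (i : ℕ) : polygamma i = iteratedDeriv (i + 1) L := rfl

lemma hasDerivAt_polygamma (i : ℕ) {x : ℝ} (hx : 0 < x) :
    HasDerivAt (polygamma i) (polygamma (i + 1) x) x := by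
  rw [polygamma_eq, polygamma_eq]
  exact hasDerivAt_iteratedDeriv_L (i + 1) hx

lemma pg_pos (k : ℕ) {x : ℝ} (hx : 0 < x) : 0 < (-1 : ℝ) ^ k * polygamma (k + 1) x := by
  have h1 : polygamma (k + 1) x = iteratedDeriv (k + 2) L x := rfl
  rw [h1, iteratedDeriv_L_eq k hx, ← mul_assoc, ← mul_assoc, ← pow_add]
  rw [Even.neg_one_pow ⟨k, rfl⟩, one_mul]
  have hP := P_pos (by omega) hx (m := k + 2)
  have hf : (0:ℝ) < ((k + 1).factorial : ℝ) := by exact_mod_cast (k+1).factorial_pos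
  positivity

lemma strictMonoOn_pg (k : ℕ) :
    StrictMonoOn (fun y => (-1 : ℝ) ^ k * polygamma k y) (Set.Ioi 0) := by
  refine strictMonoOn_of_deriv_pos (convex_Ioi 0) ?_ ?_
  · intro y hy
    exact (((hasDerivAt_polygamma k (Set.mem_Ioi.1 hy)).const_mul
      ((-1 : ℝ) ^ k)).differentiableAt.continuousAt).continuousWithinAt
  · intro y hy
    rw [interior_Ioi] at hy
    rw [((hasDerivAt_polygamma k (Set.mem_Ioi.1 hy)).const_mul ((-1 : ℝ) ^ k)).deriv]
    exact pg_pos k (Set.mem_Ioi.1 hy)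

theorem stmt_5 (a b c : ℝ) (ha : 0 < a) (hb : 0 < b) (hc : 0 < c)
    (hab : b < a) (k : ℕ) (hk : 1 ≤ k) :
    StrictMonoOn (H a b c k) (Set.Ioi (0 : ℝ)) := by
  have key : ∀ x ∈ Set.Ioi (0:ℝ), HasDerivAt (H a b c k)
      (((-1 : ℝ) ^ k * x ^ k / (Nat.factorial k : ℝ)) *
        (polygamma k (x + a) - polygamma k (x + b))) x := by
    intro x hx
    rw [Set.mem_Ioi] at hx
    have hxa : 0 < x + a := by linarith
    have hxb : 0 < x + b := by linarith
    set u : ℕ → ℝ := fun i => ((-1 : ℝ) ^ i * x ^ i / (Nat.factorial i : ℝ)) *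
      (polygamma i (x + a) - polygamma i (x + b)) with hu
    have pgd : ∀ j : ℕ, HasDerivAt
        (fun x : ℝ => polygamma j (x + a) - polygamma j (x + b))
        (polygamma (j + 1) (x + a) - polygamma (j + 1) (x + b)) x := by
      intro j
      have h1 := (hasDerivAt_polygamma j hxa).comp x ((hasDerivAt_id x).add_const a)
      have h2 := (hasDerivAt_polygamma j hxb).comp x ((hasDerivAt_id x).add_const b)
      exact (h1.sub h2).congr_deriv (by simp)
    have h0 : HasDerivAt (fun x : ℝ => Real.log c + Real.log (Real.Gamma (x + a))
        - Real.log (Real.Gamma (x + b)))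
        (polygamma 0 (x + a) - polygamma 0 (x + b)) x := by
      have h1 := (hasDerivAt_iteratedDeriv_L 0 hxa).comp x ((hasDerivAt_id x).add_const a)
      have h2 := (hasDerivAt_iteratedDeriv_L 0 hxb).comp x ((hasDerivAt_id x).add_const b)
      simp only [iteratedDeriv_zero, mul_one] at h1 h2
      have h3 := (h1.sub h2).const_add (Real.log c)
      refine h3.congr_of_eventuallyEq (Filter.EventuallyEq.of_eq (funext fun y => ?_))
      simp only [Pi.sub_apply, Function.comp_apply, id_eq, L]
      ring
    have hterm : ∀ i ∈ Finset.Icc 1 k, HasDerivAt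
        (fun x : ℝ => ((-1 : ℝ) ^ i * x ^ i / (Nat.factorial i : ℝ)) *
          (polygamma (i - 1) (x + a) - polygamma (i - 1) (x + b)))
        (u i - u (i - 1)) x := by
      intro i hi
      obtain ⟨j, rfl⟩ : ∃ j, i = j + 1 := by
        obtain ⟨h1, -⟩ := Finset.mem_Icc.1 hi
        exact ⟨i - 1, by omega⟩
      simp only [Nat.add_sub_cancel]
      have hpoly : HasDerivAt
          (fun x : ℝ => (-1 : ℝ) ^ (j + 1) * x ^ (j + 1) / (Nat.factorial (j + 1) : ℝ))
          ((-1 : ℝ) ^ (j + 1) * (((j:ℝ) + 1) * x ^ j) / (Nat.factorial (j + 1) : ℝ)) x := by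
        have h1 := ((hasDerivAt_pow (j + 1) x).const_mul ((-1 : ℝ) ^ (j + 1))).div_const
          ((Nat.factorial (j + 1) : ℝ))
        simpa [Nat.add_sub_cancel] using h1
      have hmul := hpoly.mul (pgd j)
      refine hmul.congr_deriv ?_
      symm
      rw [hu]
      simp only []
      have hfj : ((j + 1).factorial : ℝ) ≠ 0 := by
        exact_mod_cast (j + 1).factorial_pos.ne'
      have hfj' : ((j).factorial : ℝ) ≠ 0 := by exact_mod_cast (j).factorial_pos.ne'
      push_cast [Nat.factorial_succ, pow_succ]
      field_simp
      ring
    have hsum := HasDerivAt.sum hterm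
    have htot := h0.add hsum
    have hH : HasDerivAt (H a b c k)
        ((polygamma 0 (x + a) - polygamma 0 (x + b)) +
          ∑ i ∈ Finset.Icc 1 k, (u i - u (i - 1))) x :=
      htot.congr_of_eventuallyEq (Filter.EventuallyEq.of_eq (funext fun y => by
        simp only [H, Pi.add_apply, Finset.sum_apply]))
    have htel : (polygamma 0 (x + a) - polygamma 0 (x + b)) +
        ∑ i ∈ Finset.Icc 1 k, (u i - u (i - 1)) = u k := by
      have hu0 : u 0 = polygamma 0 (x + a) - polygamma 0 (x + b) := by
        rw [hu]; norm_num
      rw [← hu0, ← Finset.Ico_add_one_right_eq_Icc, Finset.sum_Ico_eq_sum_range]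
      simp only [Nat.add_sub_cancel]
      have hcongr : ∀ i ∈ Finset.range k, u (1 + i) - u (1 + i - 1) = u (i + 1) - u i := by
        intro i _
        rw [Nat.add_comm 1 i, Nat.add_sub_cancel]
      rw [Finset.sum_congr rfl hcongr, Finset.sum_range_sub u]
      ring
    rw [htel] at hH
    exact hH
  refine strictMonoOn_of_deriv_pos (convex_Ioi 0) ?_ ?_
  · intro x hx
    exact ((key x hx).differentiableAt.continuousAt).continuousWithinAt
  · intro x hx
    rw [interior_Ioi] at hx
    rw [(key x hx).deriv]
    have hx' := Set.mem_Ioi.1 hx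
    have hxa : 0 < x + a := by linarith
    have hxb : 0 < x + b := by linarith
    have hmono := strictMonoOn_pg k (Set.mem_Ioi.2 hxb) (Set.mem_Ioi.2 hxa) (by linarith)
    have hΔ : 0 < (-1 : ℝ) ^ k * (polygamma k (x + a) - polygamma k (x + b)) := by
      simp only [] at hmono
      nlinarith [hmono]
    have hfk : (0:ℝ) < (Nat.factorial k : ℝ) := by exact_mod_cast k.factorial_pos
    have hxk : (0:ℝ) < x ^ k := by positivity
    have : ((-1 : ℝ) ^ k * x ^ k / (Nat.factorial k : ℝ)) *
        (polygamma k (x + a) - polygamma k (x + b)) =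
        (x ^ k / (Nat.factorial k : ℝ)) *
          ((-1 : ℝ) ^ k * (polygamma k (x + a) - polygamma k (x + b))) := by ring
    rw [this]
    positivity
end

section
/- Let a, b, c > 0 with a > b and c ≥ Γ(b)/Γ(a), and for an integer k ≥ 1 define H_{a,b;c;k}(x) = ln c + ln Γ(x+a) − ln Γ(x+b) + Σ_{i=1}^{k} ((−1)^i x^i / i!)·[ψ^{(i−1)}(x+a) − ψ^{(i−1)}(x+b)] for x ≥ 0. Then H_{a,b;c;k}(x) > 0 for every x > 0. -/
open Real Finset

open Filter Set Topology


lemma aux_le (c : ℝ) (hc : 0 < c) (m : ℕ) : min c 1 * (m + 1) ≤ c + m := by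
  have h1 : min c 1 ≤ c := min_le_left _ _
  have h2 : min c 1 ≤ 1 := min_le_right _ _
  have h3 : (0:ℝ) ≤ m := Nat.cast_nonneg m
  nlinarith

lemma summable_base : Summable (fun m : ℕ => (((m:ℝ) + 1) ^ 2)⁻¹) := by
  have := (summable_nat_add_iff (f := fun n : ℕ => ((n:ℝ) ^ 2)⁻¹) 1).mpr
    (Real.summable_nat_pow_inv.mpr one_lt_two)
  refine this.congr fun m => ?_
  push_cast
  ring_nf

lemma summable_inv_pow {c : ℝ} (hc : 0 < c) {j : ℕ} (hj : 2 ≤ j) :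
    Summable fun m : ℕ => ((c + m) ^ j)⁻¹ := by
  have hmin : 0 < min c 1 := lt_min hc one_pos
  refine ((summable_base.mul_left ((min c 1) ^ j)⁻¹).of_nonneg_of_le
    (fun m => by positivity) (fun m => ?_))
  have hm1 : (1:ℝ) ≤ (m:ℝ) + 1 := by simp [Nat.cast_nonneg]
  have h1 : (min c 1) ^ j * ((m:ℝ) + 1) ^ 2 ≤ (c + m) ^ j := by
    calc (min c 1) ^ j * ((m:ℝ) + 1) ^ 2 ≤ (min c 1) ^ j * ((m:ℝ) + 1) ^ j := by
          exact mul_le_mul_of_nonneg_left (pow_le_pow_right₀ hm1 hj) (by positivity)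
      _ = (min c 1 * ((m:ℝ) + 1)) ^ j := (mul_pow _ _ _).symm
      _ ≤ (c + m) ^ j := pow_le_pow_left₀ (by positivity) (aux_le c hc m) j
  calc ((c + m) ^ j)⁻¹ ≤ ((min c 1) ^ j * ((m:ℝ) + 1) ^ 2)⁻¹ := by
        apply inv_anti₀ (by positivity) h1
    _ = ((min c 1) ^ j)⁻¹ * (((m:ℝ) + 1) ^ 2)⁻¹ := by rw [mul_inv]

lemma summable_inv_sub_inv {c₁ c₂ : ℝ} (h1 : 0 < c₁) (h12 : c₁ ≤ c₂) :
    Summable fun m : ℕ => ((c₁ + m)⁻¹ - (c₂ + m)⁻¹) := by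
  have hmin : 0 < min c₁ 1 := lt_min h1 one_pos
  refine ((summable_base.mul_left ((c₂ - c₁) * ((min c₁ 1) ^ 2)⁻¹)).of_nonneg_of_le
    (fun m => ?_) (fun m => ?_)) <;>
    have hm1 : (0:ℝ) < c₁ + m := by positivity
  · have hm2 : (0:ℝ) < c₂ + m := by linarith
    have : (c₂ + m)⁻¹ ≤ (c₁ + m)⁻¹ := by
      apply inv_anti₀ hm1 (by linarith)
    linarith
  · have hm2 : (0:ℝ) < c₂ + m := by linarith
    have key : ((c₁:ℝ) + m)⁻¹ - (c₂ + m)⁻¹ = (c₂ - c₁) * ((c₁ + m)⁻¹ * (c₂ + m)⁻¹) := by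
      field_simp
      ring
    rw [key]
    have b1 : (c₁ + (m:ℝ))⁻¹ ≤ (min c₁ 1 * ((m:ℝ)+1))⁻¹ :=
      inv_anti₀ (by positivity) (aux_le c₁ h1 m)
    have b2 : (c₂ + (m:ℝ))⁻¹ ≤ (min c₁ 1 * ((m:ℝ)+1))⁻¹ :=
      inv_anti₀ (by positivity) ((aux_le c₁ h1 m).trans (by linarith))
    have hpos : (0:ℝ) < (min c₁ 1 * ((m:ℝ)+1))⁻¹ := by positivity
    calc (c₂ - c₁) * ((c₁ + (m:ℝ))⁻¹ * (c₂ + m)⁻¹)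
        ≤ (c₂ - c₁) * ((min c₁ 1 * ((m:ℝ)+1))⁻¹ * (min c₁ 1 * ((m:ℝ)+1))⁻¹) := by
          apply mul_le_mul_of_nonneg_left _ (by linarith)
          exact mul_le_mul b1 b2 (by positivity) hpos.le
      _ = (c₂ - c₁) * ((min c₁ 1) ^ 2)⁻¹ * (((m:ℝ) + 1) ^ 2)⁻¹ := by
          rw [← mul_inv]
          rw [show min c₁ 1 * (↑m + 1) * (min c₁ 1 * (↑m + 1)) = (min c₁ 1)^2 * ((m:ℝ)+1)^2 by ring,
            mul_inv]
          ring

noncomputable def psiR (z : ℝ) : ℝ :=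
  -Real.eulerMascheroniConstant + ∑' m : ℕ, ((1 + (m:ℝ))⁻¹ - (z + m)⁻¹)

noncomputable def QQ (j : ℕ) (z : ℝ) : ℝ := ∑' m : ℕ, ((z + (m:ℝ)) ^ j)⁻¹

noncomputable def TT (a b : ℝ) (j : ℕ) (x : ℝ) : ℝ :=
  ∑' m : ℕ, (((x + b + m) ^ j)⁻¹ - ((x + a + m) ^ j)⁻¹)

lemma psiR_summable {z : ℝ} (hz : 0 < z) :
    Summable fun m : ℕ => ((1 + (m:ℝ))⁻¹ - (z + m)⁻¹) := by
  rcases le_total 1 z with h | h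
  · exact summable_inv_sub_inv one_pos h
  · have := (summable_inv_sub_inv hz h).neg
    refine this.congr fun m => ?_
    ring

lemma summable_TT {a b : ℝ} (hba : b ≤ a) {j : ℕ} (hj : 1 ≤ j) {y : ℝ} (hyb : 0 < y + b) :
    Summable fun m : ℕ => (((y + b + m) ^ j)⁻¹ - ((y + a + m) ^ j)⁻¹) := by
  rcases eq_or_lt_of_le hj with h1 | h2
  · have := summable_inv_sub_inv hyb (show y + b ≤ y + a by linarith)
    rw [← h1]
    simpa [pow_one] using this
  · exact (summable_inv_pow hyb h2).sub (summable_inv_pow (by linarith) h2)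

/-- derivative of `t ↦ ((t+c)^j)⁻¹`. -/
lemma hasDerivAt_inv_pow_term (c : ℝ) (j : ℕ) {y : ℝ} (hy : 0 < y + c) :
    HasDerivAt (fun t : ℝ => ((t + c) ^ j)⁻¹) (-(j:ℝ) * ((y + c) ^ (j+1))⁻¹) y := by
  have h1 : HasDerivAt (fun t : ℝ => t + c) 1 y := (hasDerivAt_id y).add_const c
  have h2 : HasDerivAt (fun x : ℝ => x ^ (-(j:ℤ))) (((-(j:ℤ) : ℤ) : ℝ) * (y + c) ^ (-(j:ℤ) - 1))
      (y + c) := hasDerivAt_zpow (-(j:ℤ)) (y + c) (Or.inl hy.ne')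
  have h3 := h2.comp y h1
  have hfun : (fun t : ℝ => ((t + c) ^ j)⁻¹) = (fun x : ℝ => x ^ (-(j:ℤ))) ∘ (fun t => t + c) := by
    funext t
    simp [zpow_neg, zpow_natCast]
  rw [hfun]
  refine h3.congr_deriv ?_
  rw [mul_one]
  push_cast
  rw [show -(j:ℤ) - 1 = -((j:ℤ) + 1) by ring, zpow_neg]
  push_cast
  rw [show ((j:ℤ) + 1 : ℤ) = ((j + 1 : ℕ) : ℤ) by push_cast; ring]
  rw [zpow_natCast]

lemma tendstoUniformlyOn_shift {F : ℕ → ℝ → ℝ} {g : ℝ → ℝ} {s : Set ℝ}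
    (h : TendstoUniformlyOn F g atTop s) :
    TendstoUniformlyOn (fun n => F (n + 1)) g atTop s :=
  fun u hu => (tendsto_add_atTop_nat 1).eventually (h u hu)

lemma tendstoUniformlyOn_const {c : ℕ → ℝ} {l : ℝ} (h : Filter.Tendsto c atTop (𝓝 l))
    (s : Set ℝ) :
    TendstoUniformlyOn (fun n (_ : ℝ) => c n) (fun _ => l) atTop s := by
  rw [Metric.tendstoUniformlyOn_iff]
  intro ε hε
  filter_upwards [Metric.tendsto_nhds.mp h ε hε] with n hn
  intro x _
  rw [dist_comm]
  exact hn

lemma harmonic_cast (n : ℕ) :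
    ∑ m ∈ Finset.range n, (1 + (m:ℝ))⁻¹ = ((harmonic n : ℚ) : ℝ) := by
  rw [harmonic]
  push_cast
  exact Finset.sum_congr rfl fun i _ => by rw [add_comm]

lemma tendsto_logn_sub_harmonic :
    Filter.Tendsto (fun n : ℕ => Real.log n - ∑ m ∈ Finset.range (n + 1), (1 + (m:ℝ))⁻¹)
      atTop (𝓝 (-Real.eulerMascheroniConstant)) := by
  have h3 := (Real.tendsto_harmonic_sub_log.comp (tendsto_add_atTop_nat 1)).neg
  have h5 := h3.sub Real.tendsto_log_nat_add_one_sub_log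
  rw [sub_zero] at h5
  · convert h5 using 2 with n
    rw [harmonic_cast]
    simp only [Function.comp_apply]
    push_cast
    ring

lemma hasDerivAt_logGammaSeq (n : ℕ) {y : ℝ} (hy : 0 < y) :
    HasDerivAt (fun t => Real.BohrMollerup.logGammaSeq t n)
      (Real.log n - ∑ m ∈ Finset.range (n + 1), (y + m)⁻¹) y := by
  have hsum : HasDerivAt (fun t : ℝ => ∑ m ∈ Finset.range (n + 1), Real.log (t + m))
      (∑ m ∈ Finset.range (n + 1), (y + m)⁻¹) y := by
    apply HasDerivAt.fun_sum
    intro m _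
    have hpos : (0:ℝ) < y + m := by positivity
    have := (Real.hasDerivAt_log hpos.ne').comp y ((hasDerivAt_id y).add_const (m:ℝ))
    simpa [Function.comp_def] using this
  have h1 : HasDerivAt (fun t : ℝ => t * Real.log n + Real.log (Nat.factorial n))
      (Real.log n) y := by
    simpa using ((hasDerivAt_id y).mul_const (Real.log n)).add_const (Real.log (Nat.factorial n))
  have := h1.sub hsum
  refine HasDerivAt.congr_of_eventuallyEq this ?_
  filter_upwards with t
  simp only [Real.BohrMollerup.logGammaSeq]
  simp only [Pi.sub_apply]

lemma hasDerivAt_logGamma {z : ℝ} (hz : 0 < z) :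
    HasDerivAt (fun y : ℝ => Real.log (Real.Gamma y)) (psiR z) z := by
  set s : Set ℝ := Set.Ioo (z/2) (z+1) with hs
  have hmem : ∀ y ∈ s, 0 < y := fun y hy => lt_trans (by linarith) hy.1
  apply hasDerivAt_of_tendstoUniformlyOn (l := atTop) (f := fun (n : ℕ) (y : ℝ) => Real.BohrMollerup.logGammaSeq y n)
    (f' := fun (n : ℕ) (y : ℝ) => Real.log n - ∑ m ∈ Finset.range (n + 1), (y + m)⁻¹)
    isOpen_Ioo ?_ ?_ ?_ (show z ∈ s from ⟨by linarith, by linarith⟩)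
  · -- uniform convergence of derivatives
    have key : TendstoUniformlyOn
        (fun (n : ℕ) (y : ℝ) => (Real.log n - ∑ m ∈ Finset.range (n + 1), (1 + (m:ℝ))⁻¹)
          + ∑ m ∈ Finset.range (n + 1), ((1 + (m:ℝ))⁻¹ - (y + m)⁻¹))
        psiR atTop s := by
      have h1 := tendstoUniformlyOn_const tendsto_logn_sub_harmonic s
      have h2 : TendstoUniformlyOn
          (fun (N : ℕ) (y : ℝ) => ∑ m ∈ Finset.range N, ((1 + (m:ℝ))⁻¹ - (y + m)⁻¹))
          (fun y => ∑' m : ℕ, ((1 + (m:ℝ))⁻¹ - (y + m)⁻¹)) atTop s := by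
        have hmin : 0 < min (z/2) 1 := lt_min (by linarith) one_pos
        apply tendstoUniformlyOn_tsum_nat
          (u := fun m : ℕ => ((z+1) * (min (z/2) 1)⁻¹) * (((m:ℝ) + 1) ^ 2)⁻¹)
          (summable_base.mul_left _)
        intro m y hy
        obtain ⟨hy1, hy2⟩ := hy
        have hy0 : 0 < y := hmem y ⟨hy1, hy2⟩
        have hm0 : (0:ℝ) < 1 + m := by positivity
        have hm1 : (0:ℝ) < y + m := by positivity
        have key2 : (1 + (m:ℝ))⁻¹ - (y + m)⁻¹ = (y - 1) * ((1 + (m:ℝ))⁻¹ * (y + m)⁻¹) := by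
          field_simp
          try ring
        rw [Real.norm_eq_abs, key2, abs_mul]
        have hb0 : |y - 1| ≤ z + 1 := by
          rw [abs_le]; constructor <;> nlinarith
        have hb1 : |(1 + (m:ℝ))⁻¹ * (y + m)⁻¹| ≤ (min (z/2) 1)⁻¹ * (((m:ℝ) + 1) ^ 2)⁻¹ := by
          rw [abs_of_pos (by positivity)]
          have e1 : (1 + (m:ℝ))⁻¹ ≤ ((m:ℝ) + 1)⁻¹ := by rw [add_comm]
          have e2 : (y + (m:ℝ))⁻¹ ≤ (min (z/2) 1 * ((m:ℝ) + 1))⁻¹ := by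
            apply inv_anti₀ (by positivity)
            exact (aux_le (z/2) (by linarith) m).trans (by linarith)
          calc (1 + (m:ℝ))⁻¹ * (y + m)⁻¹ ≤ ((m:ℝ) + 1)⁻¹ * (min (z/2) 1 * ((m:ℝ) + 1))⁻¹ :=
                mul_le_mul e1 e2 (by positivity) (by positivity)
            _ = (min (z/2) 1)⁻¹ * (((m:ℝ) + 1) ^ 2)⁻¹ := by
                rw [mul_inv, sq, mul_inv]
                ring
        calc |y - 1| * |(1 + (m:ℝ))⁻¹ * (y + m)⁻¹|
            ≤ (z+1) * ((min (z/2) 1)⁻¹ * (((m:ℝ) + 1) ^ 2)⁻¹) :=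
              mul_le_mul hb0 hb1 (abs_nonneg _) (by linarith)
          _ = ((z+1) * (min (z/2) 1)⁻¹) * (((m:ℝ) + 1) ^ 2)⁻¹ := by ring
      have h2' := tendstoUniformlyOn_shift h2
      have := h1.add h2'
      refine this.congr_right fun y _ => ?_
      simp [psiR]
    refine key.congr ?_
    filter_upwards with n
    intro y _
    simp only [Finset.sum_sub_distrib]
    ring
  · -- HasDerivAt of the approximants
    filter_upwards with n y hy
    exact hasDerivAt_logGammaSeq n (hmem y hy)
  · -- pointwise convergence
    intro y hy
    exact Real.BohrMollerup.tendsto_log_gamma (hmem y hy)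

lemma hasDerivAt_psiR {z : ℝ} (hz : 0 < z) : HasDerivAt psiR (QQ 2 z) z := by
  have hz2 : 0 < z / 2 := by linarith
  apply hasDerivAt_of_tendstoUniformlyOn (l := atTop)
    (f := fun (n : ℕ) (y : ℝ) =>
      -Real.eulerMascheroniConstant + ∑ m ∈ Finset.range n, ((1 + (m:ℝ))⁻¹ - (y + m)⁻¹))
    (f' := fun (n : ℕ) (y : ℝ) => ∑ m ∈ Finset.range n, ((y + (m:ℝ)) ^ 2)⁻¹)
    isOpen_Ioi ?_ ?_ ?_ (show z ∈ Set.Ioi (z/2) by simp; linarith)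
  · have h2 : TendstoUniformlyOn
        (fun (N : ℕ) (y : ℝ) => ∑ m ∈ Finset.range N, ((y + (m:ℝ)) ^ 2)⁻¹)
        (fun y => ∑' m : ℕ, ((y + (m:ℝ)) ^ 2)⁻¹) atTop (Set.Ioi (z/2)) := by
      apply tendstoUniformlyOn_tsum_nat (u := fun m : ℕ => ((z/2 + (m:ℝ)) ^ 2)⁻¹)
        (summable_inv_pow hz2 le_rfl)
      intro m y hy
      rw [Set.mem_Ioi] at hy
      have hzm : (0:ℝ) < z/2 + m := add_pos_of_pos_of_nonneg hz2 (Nat.cast_nonneg m)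
      have hym : (0:ℝ) < y + m := by linarith
      rw [Real.norm_eq_abs, abs_of_pos (inv_pos.mpr (pow_pos hym 2))]
      apply inv_anti₀ (pow_pos hzm 2)
      apply pow_le_pow_left₀ hzm.le (by linarith)
    exact h2.congr_right fun y _ => by rw [QQ]
  · filter_upwards with n y hy
    rw [Set.mem_Ioi] at hy
    have hy0 : 0 < y := by linarith
    apply HasDerivAt.const_add
    apply HasDerivAt.fun_sum
    intro m _
    have h0 : (0:ℝ) < y + m := by positivity
    have := (hasDerivAt_inv_pow_term (m:ℝ) 1 h0).const_sub ((1 + (m:ℝ))⁻¹)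
    simpa using this
  · intro y hy
    rw [Set.mem_Ioi] at hy
    have hy0 : 0 < y := by linarith
    have := ((psiR_summable hy0).hasSum.tendsto_sum_nat).const_add (-Real.eulerMascheroniConstant)
    simpa [psiR] using this

lemma hasDerivAt_QQ {j : ℕ} (hj : 2 ≤ j) {z : ℝ} (hz : 0 < z) :
    HasDerivAt (QQ j) (-(j:ℝ) * QQ (j+1) z) z := by
  have hz2 : 0 < z / 2 := by linarith
  apply hasDerivAt_of_tendstoUniformlyOn (l := atTop)
    (f := fun (n : ℕ) (y : ℝ) => ∑ m ∈ Finset.range n, ((y + (m:ℝ)) ^ j)⁻¹)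
    (f' := fun (n : ℕ) (y : ℝ) => ∑ m ∈ Finset.range n, (-(j:ℝ) * ((y + (m:ℝ)) ^ (j+1))⁻¹))
    isOpen_Ioi ?_ ?_ ?_ (show z ∈ Set.Ioi (z/2) by simp; linarith)
  · have h2 : TendstoUniformlyOn
        (fun (N : ℕ) (y : ℝ) => ∑ m ∈ Finset.range N, (-(j:ℝ) * ((y + (m:ℝ)) ^ (j+1))⁻¹))
        (fun y => ∑' m : ℕ, (-(j:ℝ) * ((y + (m:ℝ)) ^ (j+1))⁻¹)) atTop (Set.Ioi (z/2)) := by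
      apply tendstoUniformlyOn_tsum_nat
        (u := fun m : ℕ => (j:ℝ) * ((z/2 + (m:ℝ)) ^ (j+1))⁻¹)
        ((summable_inv_pow hz2 (by omega)).mul_left _)
      intro m y hy
      rw [Set.mem_Ioi] at hy
      have hzm : (0:ℝ) < z/2 + m := add_pos_of_pos_of_nonneg hz2 (Nat.cast_nonneg m)
      have hym : (0:ℝ) < y + m := by linarith
      rw [Real.norm_eq_abs, abs_mul, abs_neg, abs_of_nonneg (Nat.cast_nonneg j),
        abs_of_pos (inv_pos.mpr (pow_pos hym (j+1)))]
      apply mul_le_mul_of_nonneg_left _ (Nat.cast_nonneg j)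
      apply inv_anti₀ (pow_pos hzm (j+1))
      apply pow_le_pow_left₀ hzm.le (by linarith)
    refine h2.congr_right fun y _ => ?_
    beta_reduce
    rw [tsum_mul_left, QQ]
  · filter_upwards with n y hy
    rw [Set.mem_Ioi] at hy
    apply HasDerivAt.fun_sum
    intro m _
    have hym : (0:ℝ) < y + m := by
      have : (0:ℝ) ≤ m := Nat.cast_nonneg m
      linarith
    exact hasDerivAt_inv_pow_term (m:ℝ) j hym
  · intro y hy
    rw [Set.mem_Ioi] at hy
    exact (summable_inv_pow (show (0:ℝ) < y by linarith) hj).hasSum.tendsto_sum_nat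

lemma hasDerivAt_TT {a b : ℝ} (hba : b ≤ a) {j : ℕ} (hj : 1 ≤ j) {x : ℝ} (hx : 0 < x + b) :
    HasDerivAt (TT a b j) (-(j:ℝ) * TT a b (j+1) x) x := by
  set ε := (x + b) / 2 with hε
  have hε0 : 0 < ε := by positivity
  have hmem : ∀ y ∈ Set.Ioi (x - ε), ε ≤ y + b := by
    intro y hy
    rw [Set.mem_Ioi] at hy
    simp only [hε] at *
    linarith
  apply hasDerivAt_of_tendstoUniformlyOn (l := atTop)
    (f := fun (n : ℕ) (y : ℝ) =>
      ∑ m ∈ Finset.range n, (((y + b + m) ^ j)⁻¹ - ((y + a + m) ^ j)⁻¹))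
    (f' := fun (n : ℕ) (y : ℝ) =>
      ∑ m ∈ Finset.range n,
        ((-(j:ℝ) * ((y + b + m) ^ (j+1))⁻¹) - (-(j:ℝ) * ((y + a + m) ^ (j+1))⁻¹)))
    isOpen_Ioi ?_ ?_ ?_ (show x ∈ Set.Ioi (x - ε) by simp; linarith)
  · have h2 : TendstoUniformlyOn
        (fun (N : ℕ) (y : ℝ) => ∑ m ∈ Finset.range N,
          ((-(j:ℝ) * ((y + b + m) ^ (j+1))⁻¹) - (-(j:ℝ) * ((y + a + m) ^ (j+1))⁻¹)))
        (fun y => ∑' m : ℕ,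
          ((-(j:ℝ) * ((y + b + m) ^ (j+1))⁻¹) - (-(j:ℝ) * ((y + a + m) ^ (j+1))⁻¹)))
        atTop (Set.Ioi (x - ε)) := by
      apply tendstoUniformlyOn_tsum_nat
        (u := fun m : ℕ => 2 * (j:ℝ) * ((ε + (m:ℝ)) ^ (j+1))⁻¹)
        ((summable_inv_pow hε0 (by omega)).mul_left _)
      intro m y hy
      have h1 : ε + (m:ℝ) ≤ y + b + m := by
        have := hmem y hy
        linarith
      have h2 : ε + (m:ℝ) ≤ y + a + m := by linarith
      have hεm : (0:ℝ) < ε + m := by positivity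
      have e1 : ((y + b + m) ^ (j+1))⁻¹ ≤ ((ε + (m:ℝ)) ^ (j+1))⁻¹ := by
        apply inv_anti₀ (by positivity)
        exact pow_le_pow_left₀ hεm.le h1 _
      have e2 : ((y + a + m) ^ (j+1))⁻¹ ≤ ((ε + (m:ℝ)) ^ (j+1))⁻¹ := by
        apply inv_anti₀ (by positivity)
        exact pow_le_pow_left₀ hεm.le h2 _
      have p1 : (0:ℝ) < y + b + m := lt_of_lt_of_le hεm h1
      have p2 : (0:ℝ) < y + a + m := lt_of_lt_of_le hεm h2
      rw [Real.norm_eq_abs]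
      have habs : |(-(j:ℝ) * ((y + b + m) ^ (j+1))⁻¹) - (-(j:ℝ) * ((y + a + m) ^ (j+1))⁻¹)|
          ≤ (j:ℝ) * ((ε + (m:ℝ)) ^ (j+1))⁻¹ + (j:ℝ) * ((ε + (m:ℝ)) ^ (j+1))⁻¹ := by
        refine (abs_sub _ _).trans ?_
        gcongr
        · rw [abs_mul, abs_neg, abs_of_nonneg (by positivity), abs_of_pos (by positivity)]
          exact mul_le_mul_of_nonneg_left e1 (by positivity)
        · rw [abs_mul, abs_neg, abs_of_nonneg (by positivity), abs_of_pos (by positivity)]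
          exact mul_le_mul_of_nonneg_left e2 (by positivity)
      calc |(-(j:ℝ) * ((y + b + m) ^ (j+1))⁻¹) - (-(j:ℝ) * ((y + a + m) ^ (j+1))⁻¹)|
          ≤ (j:ℝ) * ((ε + (m:ℝ)) ^ (j+1))⁻¹ + (j:ℝ) * ((ε + (m:ℝ)) ^ (j+1))⁻¹ := habs
        _ = 2 * (j:ℝ) * ((ε + (m:ℝ)) ^ (j+1))⁻¹ := by ring
    refine h2.congr_right fun y _ => ?_
    have : ∀ m : ℕ, (-(j:ℝ) * ((y + b + m) ^ (j+1))⁻¹) - (-(j:ℝ) * ((y + a + m) ^ (j+1))⁻¹)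
        = -(j:ℝ) * (((y + b + m) ^ (j+1))⁻¹ - ((y + a + m) ^ (j+1))⁻¹) := fun m => by ring
    beta_reduce
    rw [tsum_congr this, tsum_mul_left, TT]
  · filter_upwards with n y hy
    have hyb : (0:ℝ) < y + b := lt_of_lt_of_le hε0 (hmem y hy)
    apply HasDerivAt.fun_sum
    intro m _
    have d1 := hasDerivAt_inv_pow_term (b + m) j (show 0 < y + (b + m) by push_cast; linarith)
    have d2 := hasDerivAt_inv_pow_term (a + m) j (show 0 < y + (a + m) by push_cast; linarith)
    have := d1.sub d2
    refine this.congr_deriv ?_ |>.congr_of_eventuallyEq ?_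
    · ring_nf
    · filter_upwards with t
      simp only [Pi.sub_apply]
      ring_nf
  · intro y hy
    have hyb : (0:ℝ) < y + b := lt_of_lt_of_le hε0 (hmem y hy)
    exact (summable_TT hba hj hyb).hasSum.tendsto_sum_nat

lemma TT_pos {a b : ℝ} (hba : b < a) {j : ℕ} (hj : 1 ≤ j) {y : ℝ} (hyb : 0 < y + b) :
    0 < TT a b j y := by
  have hya : 0 < y + a := by linarith
  have hterm : ∀ m : ℕ, 0 ≤ ((y + b + m) ^ j)⁻¹ - ((y + a + m) ^ j)⁻¹ := by
    intro m
    have h1 : (0:ℝ) < y + b + m := add_pos_of_pos_of_nonneg hyb (Nat.cast_nonneg m)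
    have h2 : (0:ℝ) < y + a + m := by linarith
    have : ((y + a + m) ^ j)⁻¹ ≤ ((y + b + m) ^ j)⁻¹ := by
      apply inv_anti₀ (pow_pos h1 j)
      exact pow_le_pow_left₀ h1.le (by linarith) j
    linarith
  apply Summable.tsum_pos (summable_TT hba.le hj hyb) hterm 0
  have h1 : (0:ℝ) < y + b + (0:ℕ) := by simpa using hyb
  have h2 : (0:ℝ) < y + a + (0:ℕ) := by simpa using hya
  have : ((y + a + (0:ℕ)) ^ j)⁻¹ < ((y + b + (0:ℕ)) ^ j)⁻¹ := by
    apply inv_strictAnti₀ (pow_pos h1 j)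
    apply pow_lt_pow_left₀ _ h1.le (by omega)
    simpa using hba
  linarith

lemma psiR_sub_eq {c₁ c₂ : ℝ} (h1 : 0 < c₁) (h2 : 0 < c₂) :
    psiR c₂ - psiR c₁ = ∑' m : ℕ, ((c₁ + m)⁻¹ - (c₂ + m)⁻¹) := by
  rw [psiR, psiR, add_sub_add_left_eq_sub,
    ← Summable.tsum_sub (psiR_summable h2) (psiR_summable h1)]
  exact tsum_congr fun m => by ring

lemma QQ_sub_eq {a b : ℝ} (hba : b ≤ a) {j : ℕ} (hj : 2 ≤ j) {x : ℝ} (hx : 0 < x + b) :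
    QQ j (x + b) - QQ j (x + a) = TT a b j x := by
  rw [QQ, QQ, ← Summable.tsum_sub (summable_inv_pow hx hj) (summable_inv_pow (by linarith) hj), TT]

noncomputable def LG : ℝ → ℝ := fun y => Real.log (Real.Gamma y)

lemma iteratedDeriv_LG {j : ℕ} (hj : 2 ≤ j) :
    ∀ z : ℝ, 0 < z →
      iteratedDeriv j LG z = (-1:ℝ)^j * (Nat.factorial (j-1)) * QQ j z := by
  induction j, hj using Nat.le_induction with
  | base =>
    intro z hz
    rw [iteratedDeriv_succ, iteratedDeriv_one]
    have hev : deriv LG =ᶠ[𝓝 z] psiR := by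
      filter_upwards [isOpen_Ioi.mem_nhds (show z ∈ Set.Ioi (0:ℝ) from hz)] with y hy
      exact (hasDerivAt_logGamma hy).deriv
    rw [hev.deriv_eq, (hasDerivAt_psiR hz).deriv]
    norm_num
  | succ j hj IH =>
    intro z hz
    rw [iteratedDeriv_succ]
    have hev : iteratedDeriv j LG =ᶠ[𝓝 z]
        (fun y => (-1:ℝ)^j * (Nat.factorial (j-1)) * QQ j y) := by
      filter_upwards [isOpen_Ioi.mem_nhds (show z ∈ Set.Ioi (0:ℝ) from hz)] with y hy
      exact IH y hy
    rw [hev.deriv_eq, (((hasDerivAt_QQ hj hz).const_mul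
      ((-1:ℝ)^j * (Nat.factorial (j-1)))).deriv)]
    have hfact : ((j+1-1).factorial : ℝ) = (j:ℝ) * ((j-1).factorial : ℝ) := by
      rw [Nat.add_sub_cancel]
      rw [← Nat.mul_factorial_pred (by omega : j ≠ 0)]
      push_cast
      ring
    rw [hfact]
    ring

lemma polygamma_diff {a b : ℝ} (hb : 0 < b) (hba : b < a) {i : ℕ} (hi : 1 ≤ i) {x : ℝ}
    (hx : 0 < x + b) :
    polygamma (i-1) (x + a) - polygamma (i-1) (x + b)
      = (-1:ℝ)^(i-1) * (Nat.factorial (i-1)) * TT a b i x := by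
  have hxa : 0 < x + a := by linarith
  have hpoly : ∀ y : ℝ, polygamma (i-1) y = iteratedDeriv i LG y := by
    intro y
    rw [polygamma, Nat.sub_add_cancel hi]
    rfl
  rcases eq_or_lt_of_le hi with h1 | h2
  · subst h1
    rw [hpoly, hpoly]
    have e1 : iteratedDeriv 1 LG (x + a) = psiR (x + a) := by
      rw [iteratedDeriv_one]
      exact (hasDerivAt_logGamma hxa).deriv
    have e2 : iteratedDeriv 1 LG (x + b) = psiR (x + b) := by
      rw [iteratedDeriv_one]
      exact (hasDerivAt_logGamma hx).deriv
    rw [e1, e2, psiR_sub_eq hx hxa]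
    simp only [pow_zero, Nat.factorial_zero, Nat.cast_one, one_mul, TT, pow_one]
    norm_num
  · rw [hpoly, hpoly, iteratedDeriv_LG h2 _ hxa, iteratedDeriv_LG h2 _ hx]
    have : (-1:ℝ)^i * (Nat.factorial (i-1)) * QQ i (x+a)
        - (-1:ℝ)^i * (Nat.factorial (i-1)) * QQ i (x+b)
        = -((-1:ℝ)^i * (Nat.factorial (i-1))) * (QQ i (x+b) - QQ i (x+a)) := by ring
    rw [this, QQ_sub_eq hba.le h2 hx]
    have hsign : -((-1:ℝ)^i) = (-1:ℝ)^(i-1) := by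
      have h3 : i = (i-1) + 1 := by omega
      calc -((-1:ℝ)^i) = -((-1:ℝ)^((i-1)+1)) := by rw [← h3]
        _ = (-1:ℝ)^(i-1) := by rw [pow_succ]; ring
    rw [show -((-1:ℝ)^i * (Nat.factorial (i-1))) = -((-1:ℝ)^i) * (Nat.factorial (i-1)) by ring,
      hsign]

lemma psiR_TT1 {a b : ℝ} (hba : b ≤ a) {x : ℝ} (hx : 0 < x + b) :
    psiR (x + a) - psiR (x + b) = TT a b 1 x := by
  rw [psiR_sub_eq hx (show 0 < x + a by linarith), TT]
  exact tsum_congr fun m => by rw [pow_one, pow_one]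

lemma hasDerivAt_ffun {a b : ℝ} (hba : b ≤ a) {t : ℝ} (ht : 0 < t + b) :
    HasDerivAt (fun t : ℝ => LG (t + a) - LG (t + b)) (TT a b 1 t) t := by
  have hta : 0 < t + a := by linarith
  have h1 : HasDerivAt (fun t : ℝ => LG (t + a)) (psiR (t + a)) t := by
    have := (hasDerivAt_logGamma hta).comp t ((hasDerivAt_id t).add_const a)
    simpa [LG, Function.comp_def] using this
  have h2 : HasDerivAt (fun t : ℝ => LG (t + b)) (psiR (t + b)) t := by
    have := (hasDerivAt_logGamma ht).comp t ((hasDerivAt_id t).add_const b)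
    simpa [LG, Function.comp_def] using this
  have := h1.sub h2
  rwa [psiR_TT1 hba ht] at this

lemma contDiffOn_TT_aux {a b : ℝ} (hb : 0 < b) (hba : b ≤ a) :
    ∀ (k j : ℕ), 1 ≤ j → ContDiffOn ℝ k (TT a b j) (Set.Ioi (-b)) := by
  intro k
  induction k with
  | zero =>
    intro j hj
    rw [show (((0:ℕ):WithTop ℕ∞)) = 0 by norm_cast, contDiffOn_zero]
    intro y hy
    rw [Set.mem_Ioi] at hy
    exact (hasDerivAt_TT hba hj (by linarith)).continuousAt.continuousWithinAt
  | succ k IH =>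
    intro j hj
    have hcast : ((k+1:ℕ) : WithTop ℕ∞) = (k : WithTop ℕ∞) + 1 := by push_cast; ring
    rw [hcast, contDiffOn_succ_iff_deriv_of_isOpen isOpen_Ioi]
    refine ⟨?_, ?_, ?_⟩
    · intro y hy
      rw [Set.mem_Ioi] at hy
      exact (hasDerivAt_TT hba hj (by linarith)).differentiableAt.differentiableWithinAt
    · intro h
      exact absurd h (by simp)
    · refine ContDiffOn.congr ((IH (j+1) (by omega)).const_smul (-(j:ℝ))) ?_
      intro y hy
      rw [Set.mem_Ioi] at hy
      have := (hasDerivAt_TT hba hj (show 0 < y + b by linarith)).deriv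
      rw [this]
      simp [smul_eq_mul]

lemma contDiffOn_ffun {a b : ℝ} (hb : 0 < b) (hba : b ≤ a) (k : ℕ) :
    ContDiffOn ℝ k (fun t : ℝ => LG (t + a) - LG (t + b)) (Set.Ioi (-b)) := by
  induction k with
  | zero =>
    rw [show (((0:ℕ):WithTop ℕ∞)) = 0 by norm_cast, contDiffOn_zero]
    intro y hy
    rw [Set.mem_Ioi] at hy
    exact (hasDerivAt_ffun hba (by linarith)).continuousAt.continuousWithinAt
  | succ k IH =>
    have hcast : ((k+1:ℕ) : WithTop ℕ∞) = (k : WithTop ℕ∞) + 1 := by push_cast; ring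
    rw [hcast, contDiffOn_succ_iff_deriv_of_isOpen isOpen_Ioi]
    refine ⟨?_, ?_, ?_⟩
    · intro y hy
      rw [Set.mem_Ioi] at hy
      exact (hasDerivAt_ffun hba (by linarith)).differentiableAt.differentiableWithinAt
    · intro h
      exact absurd h (by simp)
    · refine ContDiffOn.congr (contDiffOn_TT_aux hb hba k 1 le_rfl) ?_
      intro y hy
      rw [Set.mem_Ioi] at hy
      exact (hasDerivAt_ffun hba (show 0 < y + b by linarith)).deriv

/-- The sequence of iterated derivatives of `t ↦ f(x - t)`. -/
noncomputable def psiAux (a b x : ℝ) : ℕ → ℝ → ℝ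
  | 0, t => LG ((x - t) + a) - LG ((x - t) + b)
  | (j+1), t => -(Nat.factorial j : ℝ) * TT a b (j+1) (x - t)

lemma hasDerivAt_psiAux {a b x : ℝ} (hba : b ≤ a) (j : ℕ) {t : ℝ} (ht : t < x + b) :
    HasDerivAt (psiAux a b x j) (psiAux a b x (j+1) t) t := by
  have hxt : 0 < (x - t) + b := by linarith
  have hinner : HasDerivAt (fun t : ℝ => x - t) (-1) t := (hasDerivAt_id t).const_sub x
  cases j with
  | zero =>
    have := (hasDerivAt_ffun hba hxt).comp t hinner
    have h2 : TT a b 1 (x - t) * (-1) = psiAux a b x 1 t := by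
      simp [psiAux]
    rw [← h2]
    exact this.congr_of_eventuallyEq (by filter_upwards with u; rfl)
  | succ j =>
    have hTT := ((hasDerivAt_TT hba (show 1 ≤ j+1 by omega) hxt).const_mul
      (-(Nat.factorial j : ℝ))).comp t hinner
    have h2 : -(Nat.factorial j : ℝ) * (-(((j+1):ℕ):ℝ) * TT a b (j+1+1) (x - t)) * (-1)
        = psiAux a b x (j+2) t := by
      simp only [psiAux]
      have : (Nat.factorial (j+1) : ℝ) = ((j+1:ℕ):ℝ) * (Nat.factorial j : ℝ) := by
        rw [Nat.factorial_succ]; push_cast; ring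
      rw [this]
      push_cast
      ring
    rw [← h2]
    exact hTT.congr_of_eventuallyEq (by filter_upwards with u; rfl)

theorem stmt_6 (a b c : ℝ) (ha : 0 < a) (hb : 0 < b) (hc : 0 < c)
    (hab : b < a) (hcge : Real.Gamma b / Real.Gamma a ≤ c)
    (k : ℕ) (hk : 1 ≤ k) :
    ∀ x : ℝ, 0 < x → 0 < H a b c k x := by
  intro x hx
  set g : ℝ → ℝ := fun t => LG ((x - t) + a) - LG ((x - t) + b) with hg
  have huniq : UniqueDiffOn ℝ (Set.Icc 0 x) := uniqueDiffOn_Icc hx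
  have hlt : ∀ t ∈ Set.Icc (0:ℝ) x, t < x + b := fun t ht => by
    have := ht.2; linarith
  -- iterated derivatives within Icc
  have hitd : ∀ j, ∀ t ∈ Set.Icc (0:ℝ) x,
      iteratedDerivWithin j g (Set.Icc 0 x) t = psiAux a b x j t := by
    intro j
    induction j with
    | zero =>
      intro t ht
      rw [iteratedDerivWithin_zero]
      rfl
    | succ j IH =>
      intro t ht
      rw [iteratedDerivWithin_succ,
        derivWithin_congr (fun u hu => IH u hu) (IH t ht)]
      exact ((hasDerivAt_psiAux hab.le j (hlt t ht)).hasDerivWithinAt).derivWithin (huniq t ht)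
  -- smoothness of g on Icc 0 x
  have hgc : ContDiffOn ℝ k g (Set.Icc 0 x) := by
    have hmaps : Set.MapsTo (fun t : ℝ => x - t) (Set.Icc 0 x) (Set.Ioi (-b)) := by
      intro t ht
      simp only [Set.mem_Ioi]
      have h2 := ht.2
      have h1 := ht.1
      linarith
    exact (contDiffOn_ffun hb hab.le k).comp
      ((contDiff_const.sub contDiff_id).contDiffOn) hmaps
  -- differentiability of the k-th derivative on the interior
  have hdiff : DifferentiableOn ℝ (iteratedDerivWithin k g (Set.Icc 0 x)) (Set.Ioo 0 x) := by
    refine DifferentiableOn.congr (f := psiAux a b x k) ?_ ?_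
    · intro t ht
      exact (hasDerivAt_psiAux hab.le k (hlt t (Set.Ioo_subset_Icc_self ht))).differentiableAt.differentiableWithinAt
    · intro t ht
      exact hitd k t (Set.Ioo_subset_Icc_self ht)
  -- Taylor's theorem
  have hTL := taylor_mean_remainder_lagrange hx.ne (by rwa [Set.uIcc_of_le hx.le])
    (by rwa [Set.uIcc_of_le hx.le, Set.uIoo_of_le hx.le])
  rw [Set.uIcc_of_le hx.le, Set.uIoo_of_le hx.le] at hTL
  obtain ⟨ξ, hξ, hTay⟩ := hTL
  have hξx : 0 < x - ξ := by linarith [hξ.2]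
  have hξb : 0 < (x - ξ) + b := by linarith
  -- evaluate the remainder term
  have hrem : iteratedDerivWithin (k+1) g (Set.Icc 0 x) ξ
      = -(Nat.factorial k : ℝ) * TT a b (k+1) (x - ξ) := by
    rw [hitd (k+1) ξ (Set.Ioo_subset_Icc_self hξ)]
    rfl
  -- evaluate the Taylor polynomial
  have htaylor : taylorWithinEval g k (Set.Icc 0 x) 0 x
      = (LG (x + a) - LG (x + b))
        + ∑ i ∈ Finset.Icc 1 k, ((Nat.factorial i : ℝ)⁻¹ * x ^ i)
          * (-(Nat.factorial (i-1) : ℝ) * TT a b i x) := by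
    rw [taylor_within_apply]
    have hins : Finset.range (k+1) = insert 0 (Finset.Icc 1 k) := by
      ext i
      simp only [Finset.mem_range, Finset.mem_insert, Finset.mem_Icc]
      omega
    rw [hins, Finset.sum_insert (by simp)]
    have h0 : ((Nat.factorial 0 : ℝ)⁻¹ * (x - 0) ^ 0) • iteratedDerivWithin 0 g (Set.Icc 0 x) 0
        = LG (x + a) - LG (x + b) := by
      rw [hitd 0 0 (Set.mem_Icc.mpr ⟨le_refl 0, hx.le⟩)]
      simp [psiAux]
    rw [h0]
    congr 1
    apply Finset.sum_congr rfl
    intro i hi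
    rw [Finset.mem_Icc] at hi
    rw [hitd i 0 (Set.mem_Icc.mpr ⟨le_refl 0, hx.le⟩)]
    have hi1 : i = (i - 1) + 1 := by omega
    have : psiAux a b x i 0 = -(Nat.factorial (i-1) : ℝ) * TT a b i (x - 0) := by
      rw [hi1]
      rfl
    rw [this]
    simp [smul_eq_mul]
  -- identify H with the Taylor polynomial plus log c
  have hHx : H a b c k x = Real.log c + taylorWithinEval g k (Set.Icc 0 x) 0 x := by
    rw [H, htaylor]
    have hsum : ∀ i ∈ Finset.Icc 1 k,
        ((-1 : ℝ) ^ i * x ^ i / (Nat.factorial i : ℝ)) *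
          (polygamma (i - 1) (x + a) - polygamma (i - 1) (x + b))
        = ((Nat.factorial i : ℝ)⁻¹ * x ^ i) * (-(Nat.factorial (i-1) : ℝ) * TT a b i x) := by
      intro i hi
      rw [Finset.mem_Icc] at hi
      rw [polygamma_diff hb hab hi.1 (show 0 < x + b by linarith)]
      have hii : i = (i - 1) + 1 := by omega
      have hsgn : (-1:ℝ)^i * (-1:ℝ)^(i-1) = -1 := by
        calc (-1:ℝ)^i * (-1:ℝ)^(i-1) = (-1:ℝ)^(i + (i-1)) := by rw [pow_add]
          _ = (-1:ℝ)^(2*(i-1) + 1) := by rw [show i + (i-1) = 2*(i-1)+1 by omega]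
          _ = -1 := by rw [pow_succ, pow_mul]; norm_num
      have : ((-1 : ℝ) ^ i * x ^ i / (Nat.factorial i : ℝ)) *
            ((-1:ℝ)^(i-1) * (Nat.factorial (i-1)) * TT a b i x)
          = ((-1:ℝ)^i * (-1:ℝ)^(i-1)) *
            (x ^ i / (Nat.factorial i : ℝ) * ((Nat.factorial (i-1)) * TT a b i x)) := by
        ring
      rw [this, hsgn]
      ring
    rw [Finset.sum_congr rfl hsum]
    show Real.log c + LG (x + a) - LG (x + b) + _ = _
    ring
  -- assemble
  have hgx : g x = Real.log (Real.Gamma a) - Real.log (Real.Gamma b) := by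
    simp [hg, LG]
  have hxk : (0:ℝ) < x ^ (k+1) := pow_pos hx _
  have hTTpos : 0 < TT a b (k+1) (x - ξ) := TT_pos hab (by omega) hξb
  have hrempos : iteratedDerivWithin (k+1) g (Set.Icc 0 x) ξ * (x - 0) ^ (k+1)
      / (Nat.factorial (k+1) : ℝ) < 0 := by
    rw [hrem, sub_zero]
    have hnum : -(Nat.factorial k : ℝ) * TT a b (k+1) (x - ξ) * x ^ (k+1) < 0 := by
      have h1 : (0:ℝ) < (Nat.factorial k : ℝ) := by positivity
      nlinarith [mul_pos (mul_pos h1 hTTpos) hxk]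
    apply div_neg_of_neg_of_pos hnum (by positivity)
  have hlogc : Real.log (Real.Gamma b) - Real.log (Real.Gamma a) ≤ Real.log c := by
    have hga : 0 < Real.Gamma a := Real.Gamma_pos_of_pos ha
    have hgb : 0 < Real.Gamma b := Real.Gamma_pos_of_pos hb
    have := Real.log_le_log (div_pos hgb hga) hcge
    rwa [Real.log_div hgb.ne' hga.ne'] at this
  have hfinal : taylorWithinEval g k (Set.Icc 0 x) 0 x
      = g x - iteratedDerivWithin (k+1) g (Set.Icc 0 x) ξ * (x - 0) ^ (k+1)
        / (Nat.factorial (k+1) : ℝ) := by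
    linarith [hTay]
  rw [hHx, hfinal, hgx]
  linarith
end

section
/- Let a, b, c > 0 with a < b and, for an integer k ≥ 1, define H_{a,b;c;k}(x) = ln c + ln Γ(x+a) − ln Γ(x+b) + Σ_{i=1}^{k} ((−1)^i x^i / i!)·[ψ^{(i−1)}(x+a) − ψ^{(i−1)}(x+b)] for x ≥ 0. Then H_{a,b;c;k} is (strictly) decreasing on (0,∞); moreover, if additionally c ≤ Γ(b)/Γ(a), then H_{a,b;c;k}(x) < 0 for every x > 0. -/
open Real Finset Filter Topology

lemma log_add_one_le (v : ℝ) (hv : 0 ≤ v) : Real.log (1+v) ≤ v := by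
  have := Real.log_le_sub_one_of_pos (x := 1+v) (by linarith)
  linarith

lemma le_log_add_one (v : ℝ) (hv : 0 ≤ v) : v - v^2 ≤ Real.log (1+v) := by
  have h1 : (0:ℝ) < 1 + v := by linarith
  have h0 := Real.log_le_sub_one_of_pos (x := (1+v)⁻¹) (by positivity)
  rw [Real.log_inv] at h0
  have h2 : (1+v)⁻¹ ≤ 1 := by
    rw [inv_le_one_iff₀]; right; linarith
  have h3 : v - v^2 ≤ v/(1+v) := by
    rw [le_div_iff₀ h1]; nlinarith
  have h4 : v/(1+v) = 1 - (1+v)⁻¹ := by field_simp; ring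
  nlinarith [h0, h3]

lemma abs_term_le (x u : ℝ) (hx : 0 ≤ x) (hu : 0 ≤ u) :
    |x * Real.log (1+u) - Real.log (1+x*u)| ≤ (x + x^2) * u^2 := by
  have h1 := log_add_one_le u hu
  have h2 := le_log_add_one u hu
  have h3 := log_add_one_le (x*u) (by positivity)
  have h4 := le_log_add_one (x*u) (by positivity)
  rw [abs_le]
  constructor <;> nlinarith [mul_le_mul_of_nonneg_left h1 hx, mul_le_mul_of_nonneg_left h2 hx]

lemma summable_shift_pow (m : ℕ) (hm : 2 ≤ m) :
    Summable (fun j : ℕ => (((j:ℝ)+1)^m)⁻¹) := by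
  have h : Summable (fun j : ℕ => ((j:ℝ)^m)⁻¹) := by
    simpa [one_div] using Real.summable_one_div_nat_pow.mpr (by omega : 1 < m)
  have := (summable_nat_add_iff 1).mpr h
  refine this.congr fun j => ?_
  push_cast; ring_nf

lemma base_lb {c y : ℝ} (hc : 0 < c) (hc1 : c ≤ 1) (hy : c ≤ y) (j : ℕ) :
    c * ((j:ℝ)+1) ≤ y + j := by
  have : c * j ≤ j := by nlinarith [Nat.cast_nonneg (α := ℝ) j]
  nlinarith

lemma summable_S_aux {c : ℝ} (hc : 0 < c) (hc1 : c ≤ 1) (m : ℕ) (hm : 2 ≤ m) :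
    Summable (fun j : ℕ => ((c * ((j:ℝ)+1))^m)⁻¹) := by
  have := (summable_shift_pow m hm).mul_left ((c^m)⁻¹)
  refine this.congr fun j => ?_
  rw [mul_pow, mul_inv]

lemma summable_S (x : ℝ) (hx : 0 < x) (m : ℕ) (hm : 2 ≤ m) :
    Summable (fun j : ℕ => ((x + (j:ℝ))^m)⁻¹) := by
  set c := min x 1 with hc
  have hc0 : 0 < c := lt_min hx one_pos
  have hc1 : c ≤ 1 := min_le_right _ _
  refine Summable.of_nonneg_of_le (fun j => by positivity) (fun j => ?_)
    (summable_S_aux hc0 hc1 m hm)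
  have hlb := base_lb hc0 hc1 (min_le_left x 1) j
  have h1 : (0:ℝ) < c * ((j:ℝ)+1) := by positivity
  exact inv_anti₀ (by positivity) (pow_le_pow_left₀ h1.le hlb m)

noncomputable def lterm (j : ℕ) (x : ℝ) : ℝ :=
  x * Real.log (1 + ((j:ℝ)+1)⁻¹) - Real.log (1 + x * ((j:ℝ)+1)⁻¹)

lemma lterm_eq (j : ℕ) (x : ℝ) (hx : 0 < x) :
    lterm j x = x*(Real.log ((j:ℝ)+2) - Real.log ((j:ℝ)+1))
      - (Real.log (x+(j:ℝ)+1) - Real.log ((j:ℝ)+1)) := by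
  have hj : (0:ℝ) < (j:ℝ)+1 := by positivity
  have e1 : 1 + ((j:ℝ)+1)⁻¹ = ((j:ℝ)+2)/((j:ℝ)+1) := by field_simp; ring
  have e2 : 1 + x * ((j:ℝ)+1)⁻¹ = (x+(j:ℝ)+1)/((j:ℝ)+1) := by field_simp; ring
  rw [lterm, e1, e2, Real.log_div (by positivity) (by positivity),
    Real.log_div (by positivity) (by positivity)]

lemma telescope_log (n : ℕ) :
    ∑ j ∈ range n, (Real.log ((j:ℝ)+2) - Real.log ((j:ℝ)+1)) = Real.log ((n:ℝ)+1) := by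
  have h := Finset.sum_range_sub (fun i : ℕ => Real.log ((i:ℝ)+1)) n
  simp only [Nat.cast_zero, zero_add, Real.log_one, sub_zero] at h
  rw [← h]
  refine Finset.sum_congr rfl fun j _ => ?_
  push_cast; ring_nf

lemma partial_sum_lterm (x : ℝ) (hx : 0 < x) (n : ℕ) :
    ∑ j ∈ range n, lterm j x
      = x * Real.log ((n:ℝ)+1)
        - ∑ j ∈ range n, Real.log (x+(j:ℝ)+1) + ∑ j ∈ range n, Real.log ((j:ℝ)+1) := by
  rw [Finset.sum_congr rfl (fun j _ => lterm_eq j x hx), Finset.sum_sub_distrib,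
    Finset.sum_sub_distrib, ← Finset.mul_sum, telescope_log]
  ring

lemma log_GammaSeq (x : ℝ) (hx : 0 < x) (n : ℕ) (hn : 1 ≤ n) :
    Real.log (Real.GammaSeq x n)
      = x * Real.log n + ∑ j ∈ range n, Real.log ((j:ℝ)+1)
        - (Real.log x + ∑ j ∈ range n, Real.log (x+(j:ℝ)+1)) := by
  have hn0 : (0:ℝ) < n := by exact_mod_cast hn
  have hprod : ∀ j : ℕ, j ∈ range (n+1) → (0:ℝ) < x + j := fun j _ => by positivity
  have hppos : (0:ℝ) < ∏ j ∈ range (n+1), (x + (j:ℝ)) := Finset.prod_pos hprod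
  have hfac : (0:ℝ) < (Nat.factorial n : ℝ) := by exact_mod_cast Nat.factorial_pos n
  rw [Real.GammaSeq, Real.log_div (by positivity) hppos.ne',
    Real.log_mul (by positivity) hfac.ne', Real.log_rpow hn0, Real.log_prod
      (fun j hj => (hprod j hj).ne')]
  have hfac2 : Real.log (Nat.factorial n : ℝ) = ∑ j ∈ range n, Real.log ((j:ℝ)+1) := by
    rw [← Finset.prod_range_add_one_eq_factorial, Nat.cast_prod,
      Real.log_prod (fun j _ => by positivity)]
    push_cast; rfl
  have hsplit : ∑ j ∈ range (n+1), Real.log (x + (j:ℝ))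
      = ∑ j ∈ range n, Real.log (x+(j:ℝ)+1) + Real.log x := by
    rw [Finset.sum_range_succ']
    push_cast
    simp [add_assoc]
  rw [hfac2, hsplit]
  ring

lemma tendsto_partial_lterm (x : ℝ) (hx : 0 < x) :
    Tendsto (fun n => ∑ j ∈ range n, lterm j x) atTop
      (𝓝 (Real.log (Real.Gamma x) + Real.log x)) := by
  have key : ∀ᶠ n : ℕ in atTop,
      Real.log (Real.GammaSeq x n) + Real.log x + x*(Real.log ((n:ℝ)+1) - Real.log n)
        = ∑ j ∈ range n, lterm j x := by
    filter_upwards [eventually_ge_atTop 1] with n hn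
    rw [partial_sum_lterm x hx n, log_GammaSeq x hx n hn]; ring
  have h1 : Tendsto (fun n : ℕ => Real.log (Real.GammaSeq x n)) atTop
      (𝓝 (Real.log (Real.Gamma x))) :=
    ((Real.continuousAt_log (Real.Gamma_pos_of_pos hx).ne').tendsto).comp
      (Real.GammaSeq_tendsto_Gamma x)
  have h2 : Tendsto (fun n : ℕ => Real.log ((n:ℝ)+1) - Real.log n) atTop (𝓝 0) := by
    have hbase : Tendsto (fun n : ℕ => 1 + 1/(n:ℝ)) atTop (𝓝 1) := by
      have := tendsto_const_nhds (α := ℕ) (x := (1:ℝ)) |>.add tendsto_one_div_atTop_nhds_zero_nat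
      simpa using this
    have hlog : Tendsto (fun n : ℕ => Real.log (1 + 1/(n:ℝ))) atTop (𝓝 0) := by
      have := (Real.continuousAt_log (by norm_num : (1:ℝ) ≠ 0)).tendsto.comp hbase
      simpa [Function.comp_def] using this
    refine hlog.congr' ?_
    filter_upwards [eventually_ge_atTop 1] with n hn
    have hn0 : (0:ℝ) < n := by exact_mod_cast hn
    rw [show 1 + 1/(n:ℝ) = ((n:ℝ)+1)/n by field_simp, Real.log_div (by positivity) hn0.ne']
  have := (h1.add_const (Real.log x)).add ((h2.const_mul x))
  rw [mul_zero, add_zero] at this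
  exact this.congr' key

lemma summable_lterm (x : ℝ) (hx : 0 < x) : Summable (fun j => lterm j x) := by
  have hsum : Summable (fun j : ℕ => (((j:ℝ)+1)^2)⁻¹) := by
    have h : Summable (fun j : ℕ => ((j:ℝ)^2)⁻¹) := by
      simpa [one_div] using Real.summable_one_div_nat_pow.mpr (by omega : 1 < 2)
    exact ((summable_nat_add_iff 1).mpr h).congr fun j => by push_cast; ring_nf
  apply Summable.of_abs
  refine Summable.of_nonneg_of_le (fun j => abs_nonneg _) (fun j => ?_)
    (hsum.mul_left (x + x^2))
  have h := abs_term_le x (((j:ℝ)+1)⁻¹) hx.le (by positivity)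
  rw [inv_pow] at h
  exact h

lemma hasSum_lterm (x : ℝ) (hx : 0 < x) :
    HasSum (fun j => lterm j x) (Real.log (Real.Gamma x) + Real.log x) := by
  have hs := summable_lterm x hx
  exact (tendsto_nhds_unique hs.hasSum.tendsto_sum_nat (tendsto_partial_lterm x hx)) ▸ hs.hasSum
lemma hasDerivAt_lterm (j : ℕ) (y : ℝ) (hy : 0 < y) :
    HasDerivAt (lterm j) (Real.log (1+((j:ℝ)+1)⁻¹) - (y + ((j:ℝ)+1))⁻¹) y := by
  have hp : (0:ℝ) < (j:ℝ)+1 := by positivity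
  have h1 : HasDerivAt (fun y : ℝ => y * Real.log (1 + ((j:ℝ)+1)⁻¹))
      (Real.log (1 + ((j:ℝ)+1)⁻¹)) y := hasDerivAt_mul_const _
  have hne : 1 + y * ((j:ℝ)+1)⁻¹ ≠ 0 := by positivity
  have h2 : HasDerivAt (fun y : ℝ => 1 + y * ((j:ℝ)+1)⁻¹) (((j:ℝ)+1)⁻¹) y :=
    (hasDerivAt_mul_const _).const_add 1
  have h3 := h2.log hne
  have key : ((j:ℝ)+1)⁻¹ / (1 + y * ((j:ℝ)+1)⁻¹) = (y + ((j:ℝ)+1))⁻¹ := by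
    rw [div_eq_iff hne]
    field_simp
    ring
  rw [key] at h3
  exact h1.sub h3

lemma lterm_deriv_bound (j : ℕ) (y R : ℝ) (hy : 0 < y) (hR : y ≤ R) :
    ‖Real.log (1+((j:ℝ)+1)⁻¹) - (y + ((j:ℝ)+1))⁻¹‖ ≤ (1 + R) * (((j:ℝ)+1)^2)⁻¹ := by
  set p : ℝ := (j:ℝ)+1 with hp
  have hp0 : (0:ℝ) < p := by positivity
  have hu0 : (0:ℝ) ≤ p⁻¹ := by positivity
  have hA1 : Real.log (1+p⁻¹) ≤ p⁻¹ := log_add_one_le _ hu0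
  have hA2 : p⁻¹ - (p⁻¹)^2 ≤ Real.log (1+p⁻¹) := le_log_add_one _ hu0
  have hB1 : (y+p)⁻¹ ≤ p⁻¹ := by
    apply inv_anti₀ hp0; linarith
  have hB2 : p⁻¹ - (y+p)⁻¹ ≤ R * (p^2)⁻¹ := by
    have e : p⁻¹ - (y+p)⁻¹ = y / (p*(y+p)) := by
      field_simp; ring
    rw [e]
    have h2 : y / (p*(y+p)) ≤ R / (p*p) :=
      div_le_div₀ (by linarith) hR (by positivity) (by nlinarith)
    calc y / (p*(y+p)) ≤ R / (p*p) := h2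
      _ = R * (p^2)⁻¹ := by rw [div_eq_mul_inv, sq]
  have hB0 : (0:ℝ) < (y+p)⁻¹ := by positivity
  rw [Real.norm_eq_abs, abs_le]
  have hsq : (p⁻¹)^2 = (p^2)⁻¹ := by rw [inv_pow]
  constructor <;> nlinarith [sq_nonneg p⁻¹, hB0]

lemma summable_sq_shift : Summable (fun j : ℕ => (((j:ℝ)+1)^2)⁻¹) :=
  summable_shift_pow 2 le_rfl

noncomputable def psi1 (x : ℝ) : ℝ :=
  -x⁻¹ + ∑' j : ℕ, (Real.log (1+((j:ℝ)+1)⁻¹) - (x + ((j:ℝ)+1))⁻¹)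

lemma hasDerivAt_LogGamma (x : ℝ) (hx : 0 < x) :
    HasDerivAt (fun y : ℝ => Real.log (Real.Gamma y)) (psi1 x) x := by
  have ht : IsOpen (Set.Ioo (x/2) (2*x+1)) := isOpen_Ioo
  have htc : IsPreconnected (Set.Ioo (x/2) (2*x+1)) := (convex_Ioo _ _).isPreconnected
  have hxt : x ∈ Set.Ioo (x/2) (2*x+1) := ⟨by linarith, by linarith⟩
  have hu : Summable (fun j : ℕ => (1+(2*x+1)) * (((j:ℝ)+1)^2)⁻¹) :=
    summable_sq_shift.mul_left _
  have hT : HasDerivAt (fun y => ∑' j, lterm j y)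
      (∑' j : ℕ, (Real.log (1+((j:ℝ)+1)⁻¹) - (x + ((j:ℝ)+1))⁻¹)) x := by
    refine hasDerivAt_tsum_of_isPreconnected hu ht htc
      (fun j y hy => hasDerivAt_lterm j y (by have := hy.1; linarith))
      (fun j y hy => lterm_deriv_bound j y (2*x+1) (by have := hy.1; linarith) hy.2.le)
      hxt (summable_lterm x hx) hxt
  have hd : HasDerivAt (fun y : ℝ => -Real.log y + ∑' j, lterm j y) (psi1 x) x :=
    ((Real.hasDerivAt_log hx.ne').neg).add hT
  refine hd.congr_of_eventuallyEq ?_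
  filter_upwards [isOpen_Ioi.mem_nhds hx] with y hy
  have := (hasSum_lterm y hy).tsum_eq
  rw [this]; ring

noncomputable def S (m : ℕ) (x : ℝ) : ℝ := ∑' j : ℕ, ((x + (j:ℝ)) ^ m)⁻¹

lemma S_eq_shift (m : ℕ) (hm : 2 ≤ m) (x : ℝ) (hx : 0 < x) :
    S m x = (x^m)⁻¹ + ∑' j : ℕ, ((x + ((j:ℝ)+1))^m)⁻¹ := by
  rw [S, (summable_S x hx m hm).tsum_eq_zero_add]
  norm_num

lemma hasDerivAt_psi1 (x : ℝ) (hx : 0 < x) : HasDerivAt psi1 (S 2 x) x := by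
  have ht : IsOpen (Set.Ioo (x/2) (2*x+1)) := isOpen_Ioo
  have htc : IsPreconnected (Set.Ioo (x/2) (2*x+1)) := (convex_Ioo _ _).isPreconnected
  have hxt : x ∈ Set.Ioo (x/2) (2*x+1) := ⟨by linarith, by linarith⟩
  have hu : Summable (fun j : ℕ => (((j:ℝ)+1)^2)⁻¹) := summable_sq_shift
  have hterm : ∀ (j : ℕ) (y : ℝ), 0 < y →
      HasDerivAt (fun y : ℝ => Real.log (1+((j:ℝ)+1)⁻¹) - (y + ((j:ℝ)+1))⁻¹)
        (((y + ((j:ℝ)+1))^2)⁻¹) y := by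
    intro j y hy
    have hne : y + ((j:ℝ)+1) ≠ 0 := by positivity
    have h := (((hasDerivAt_id y).add_const ((j:ℝ)+1)).inv hne).const_sub
      (Real.log (1+((j:ℝ)+1)⁻¹))
    refine h.congr_deriv ?_; symm
    rw [id]
    field_simp
  have hsum0 : Summable (fun j : ℕ => Real.log (1+((j:ℝ)+1)⁻¹) - (x + ((j:ℝ)+1))⁻¹) := by
    apply Summable.of_norm
    refine Summable.of_nonneg_of_le (fun j => norm_nonneg _) (fun j => ?_)
      (summable_sq_shift.mul_left (1+(2*x+1)))
    exact lterm_deriv_bound j x (2*x+1) hx (by linarith)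
  have hT : HasDerivAt
      (fun y => ∑' j : ℕ, (Real.log (1+((j:ℝ)+1)⁻¹) - (y + ((j:ℝ)+1))⁻¹))
      (∑' j : ℕ, ((x + ((j:ℝ)+1))^2)⁻¹) x := by
    refine hasDerivAt_tsum_of_isPreconnected hu ht htc
      (fun j y hy => hterm j y (by have := hy.1; linarith))
      (fun j y hy => ?_) hxt hsum0 hxt
    have hy0 : 0 < y := by have := hy.1; linarith
    have h1 : ((j:ℝ)+1) ≤ y + ((j:ℝ)+1) := by linarith
    rw [Real.norm_eq_abs, abs_of_pos (by positivity)]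
    exact inv_anti₀ (by positivity) (pow_le_pow_left₀ (by positivity) h1 2)
  have hinv : HasDerivAt (fun y : ℝ => -y⁻¹) ((x^2)⁻¹) x := by
    have := (hasDerivAt_inv hx.ne').neg
    exact this.congr_deriv (by simp)
  have := hinv.add hT
  rw [S_eq_shift 2 le_rfl x hx]
  exact this

lemma hasDerivAt_S (m : ℕ) (hm : 2 ≤ m) (x : ℝ) (hx : 0 < x) :
    HasDerivAt (S m) (-(m:ℝ) * S (m+1) x) x := by
  have ht : IsOpen (Set.Ioo (x/2) (2*x+1)) := isOpen_Ioo
  have htc : IsPreconnected (Set.Ioo (x/2) (2*x+1)) := (convex_Ioo _ _).isPreconnected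
  have hxt : x ∈ Set.Ioo (x/2) (2*x+1) := ⟨by linarith, by linarith⟩
  set c : ℝ := min (x/2) 1 with hc
  have hc0 : 0 < c := lt_min (by linarith) one_pos
  have hc1 : c ≤ 1 := min_le_right _ _
  have hu : Summable (fun j : ℕ => (m:ℝ) * ((c * ((j:ℝ)+1))^(m+1))⁻¹) :=
    (summable_S_aux hc0 hc1 (m+1) (by omega)).mul_left _
  have hterm : ∀ (j : ℕ) (y : ℝ), 0 < y →
      HasDerivAt (fun y : ℝ => ((y + (j:ℝ))^m)⁻¹) (-(m:ℝ) * ((y + (j:ℝ))^(m+1))⁻¹) y := by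
    intro j y hy
    have hz : (0:ℝ) < y + (j:ℝ) := by positivity
    have h := (((hasDerivAt_id y).add_const ((j:ℝ))).pow m).inv (pow_ne_zero _ hz.ne')
    refine h.congr_deriv ?_; symm
    simp only [Pi.pow_apply, id]
    have key : ((y+(j:ℝ))^m)^2 = (y+(j:ℝ))^(m-1) * (y+(j:ℝ))^(m+1) := by
      rw [← pow_add, ← pow_mul]; congr 1; omega
    rw [mul_one, key]
    rw [neg_div, mul_comm ((m:ℝ)) _, mul_div_mul_left _ _ (pow_ne_zero _ hz.ne')]
    rw [div_eq_mul_inv, mul_comm]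
    ring
  refine HasDerivAt.congr_deriv (f' := ∑' j : ℕ, (-(m:ℝ) * ((x + (j:ℝ))^(m+1))⁻¹)) ?_ ?_
  · refine hasDerivAt_tsum_of_isPreconnected hu ht htc
      (fun j y hy => hterm j y (by have := hy.1; linarith))
      (fun j y hy => ?_) hxt (summable_S x hx m hm) hxt
    have hy0 : 0 < y := by have := hy.1; linarith
    have hyc : c ≤ y := le_trans (min_le_left _ _) (by have := hy.1; linarith)
    have hlb := base_lb hc0 hc1 hyc j
    rw [Real.norm_eq_abs, abs_mul, abs_neg, abs_of_nonneg (by positivity : (0:ℝ) ≤ (m:ℝ)),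
      abs_of_pos (by positivity : (0:ℝ) < ((y + (j:ℝ))^(m+1))⁻¹)]
    exact mul_le_mul_of_nonneg_left
      (inv_anti₀ (by positivity) (pow_le_pow_left₀ (by positivity) hlb (m+1)))
      (by positivity)
  · rw [S, ← tsum_mul_left]

noncomputable def D : ℕ → ℝ → ℝ
  | 0 => fun x => Real.log (Real.Gamma x)
  | 1 => psi1
  | (m+2) => fun x => (-1:ℝ)^(m+2) * ((Nat.factorial (m+1) : ℕ) : ℝ) * S (m+2) x

lemma D_hasDerivAt (m : ℕ) (x : ℝ) (hx : 0 < x) : HasDerivAt (D m) (D (m+1) x) x := by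
  match m with
  | 0 =>
    have := hasDerivAt_LogGamma x hx
    exact this
  | 1 =>
    have := hasDerivAt_psi1 x hx
    show HasDerivAt psi1 ((-1:ℝ)^2 * ((Nat.factorial 1 : ℕ) : ℝ) * S 2 x) x
    norm_num [Nat.factorial]
    exact this
  | (m+2) =>
    have h := (hasDerivAt_S (m+2) (by omega) x hx).const_mul
      ((-1:ℝ)^(m+2) * ((Nat.factorial (m+1) : ℕ) : ℝ))
    show HasDerivAt (fun x => (-1:ℝ)^(m+2) * ((Nat.factorial (m+1) : ℕ) : ℝ) * S (m+2) x)
      ((-1:ℝ)^(m+3) * ((Nat.factorial (m+2) : ℕ) : ℝ) * S (m+3) x) x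
    refine h.congr_deriv ?_; symm
    rw [pow_succ, Nat.factorial_succ]
    push_cast
    ring

lemma D_continuousAt (m : ℕ) (x : ℝ) (hx : 0 < x) : ContinuousAt (D m) x :=
  (D_hasDerivAt m x hx).continuousAt

lemma iteratedDeriv_logGamma (m : ℕ) : ∀ x : ℝ, 0 < x →
    iteratedDeriv m (fun y : ℝ => Real.log (Real.Gamma y)) x = D m x := by
  induction m with
  | zero => intro x hx; simp [D]
  | succ n ih =>
    intro x hx
    rw [iteratedDeriv_succ]
    have heq : iteratedDeriv n (fun y : ℝ => Real.log (Real.Gamma y)) =ᶠ[𝓝 x] D n :=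
      Filter.eventuallyEq_of_mem (isOpen_Ioi.mem_nhds hx) (fun y hy => ih y hy)
    rw [heq.deriv_eq, (D_hasDerivAt n x hx).deriv]

lemma D_eq_S (m : ℕ) (hm : 2 ≤ m) (x : ℝ) :
    D m x = (-1:ℝ)^m * ((Nat.factorial (m-1) : ℕ) : ℝ) * S m x := by
  obtain ⟨m', rfl⟩ : ∃ m', m = m'+2 := ⟨m-2, by omega⟩
  rfl

lemma S_lt (m : ℕ) (hm : 2 ≤ m) {u v : ℝ} (hu : 0 < u) (huv : u < v) : S m v < S m u := by
  refine Summable.tsum_lt_tsum (i := 0) (fun j => ?_) ?_ (summable_S v (by linarith) m hm)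
    (summable_S u hu m hm)
  · exact inv_anti₀ (by positivity) (pow_le_pow_left₀ (by positivity) (by linarith) m)
  · simp only [Nat.cast_zero, add_zero]
    exact inv_strictAnti₀ (by positivity) (pow_lt_pow_left₀ huv (by positivity) (by omega))

lemma tele (f : ℕ → ℝ) (k : ℕ) :
    ∑ i ∈ Icc 1 k, (f i - f (i-1)) = f k - f 0 := by
  induction k with
  | zero => simp
  | succ n ih =>
    rw [Finset.sum_Icc_succ_top (by omega : 1 ≤ n+1), ih]
    simp

lemma hasDerivAt_G (a b c : ℝ) (ha : 0 < a) (hb : 0 < b) (k : ℕ) (hk : 1 ≤ k)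
    (x : ℝ) (hx : 0 < x) :
    HasDerivAt (fun y => Real.log c + D 0 (y+a) - D 0 (y+b) +
      ∑ i ∈ Icc 1 k, ((-1:ℝ)^i * y^i / (Nat.factorial i : ℝ)) * (D i (y+a) - D i (y+b)))
      ((-1:ℝ)^k * x^k / (Nat.factorial k : ℝ) * (D (k+1) (x+a) - D (k+1) (x+b))) x := by
  have hD1 : ∀ i : ℕ, ∀ d : ℝ, 0 < d → HasDerivAt (fun y => D i (y+d)) (D (i+1) (x+d)) x := by
    intro i d hd
    have := (D_hasDerivAt i (x+d) (by linarith)).comp x ((hasDerivAt_id x).add_const d)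
    simpa [Function.comp_def] using this
  have hΔ : ∀ i : ℕ, HasDerivAt (fun y => D i (y+a) - D i (y+b))
      (D (i+1) (x+a) - D (i+1) (x+b)) x := fun i => (hD1 i a ha).sub (hD1 i b hb)
  have hcoef : ∀ i : ℕ, HasDerivAt (fun y : ℝ => (-1:ℝ)^i * y^i / (Nat.factorial i : ℝ))
      ((-1:ℝ)^i * ((i:ℝ) * x^(i-1)) / (Nat.factorial i : ℝ)) x := fun i =>
    ((hasDerivAt_pow i x).const_mul _).div_const _
  have hsum : HasDerivAt
      (fun y => ∑ i ∈ Icc 1 k, ((-1:ℝ)^i * y^i / (Nat.factorial i : ℝ)) * (D i (y+a) - D i (y+b)))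
      (∑ i ∈ Icc 1 k, (((-1:ℝ)^i * ((i:ℝ)*x^(i-1)) / (Nat.factorial i : ℝ)) * (D i (x+a) - D i (x+b))
        + ((-1:ℝ)^i * x^i / (Nat.factorial i : ℝ)) * (D (i+1) (x+a) - D (i+1) (x+b)))) x :=
    HasDerivAt.fun_sum (fun i _ => (hcoef i).mul (hΔ i))
  have htot := (((hasDerivAt_const x (Real.log c)).add (hD1 0 a ha)).sub (hD1 0 b hb)).add hsum
  refine htot.congr_deriv ?_; symm
  set Δ : ℕ → ℝ := fun i => D i (x+a) - D i (x+b) with hΔdef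
  set e : ℕ → ℝ := fun i => (-1:ℝ)^i * x^i / (Nat.factorial i : ℝ) * Δ (i+1) with hedef
  have hfac : ∀ n : ℕ, ((Nat.factorial n : ℕ) : ℝ) ≠ 0 := fun n => by
    exact_mod_cast (Nat.factorial_pos n).ne'
  have hsummand : ∀ i ∈ Icc 1 k,
      ((-1:ℝ)^i * ((i:ℝ)*x^(i-1)) / (Nat.factorial i : ℝ)) * Δ i
        + ((-1:ℝ)^i * x^i / (Nat.factorial i : ℝ)) * Δ (i+1) = e i - e (i-1) := by
    intro i hi
    have hi1 : 1 ≤ i := (Finset.mem_Icc.mp hi).1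
    obtain ⟨j, rfl⟩ : ∃ j, i = j+1 := ⟨i-1, by omega⟩
    simp only [hedef, Nat.add_sub_cancel]
    have h1 : ((-1:ℝ)^(j+1) * (((j+1:ℕ):ℝ)*x^j) / (((Nat.factorial (j+1) : ℕ)):ℝ)) * Δ (j+1)
        = -((-1:ℝ)^j * x^j / (Nat.factorial j : ℝ) * Δ (j+1)) := by
      rw [Nat.factorial_succ, pow_succ]
      push_cast
      field_simp
    rw [h1]
    ring
  rw [Finset.sum_congr rfl hsummand, tele e k]
  simp only [hedef, hΔdef, pow_zero, pow_one, Nat.factorial_zero, Nat.cast_one, zero_add]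
  norm_num

lemma polygamma_eq_s7 (i : ℕ) {x : ℝ} (hx : 0 < x) : polygamma i x = D (i+1) x :=
  iteratedDeriv_logGamma (i+1) x hx

noncomputable def G (a b c : ℝ) (k : ℕ) (x : ℝ) : ℝ :=
  Real.log c + D 0 (x+a) - D 0 (x+b) +
    ∑ i ∈ Icc 1 k, ((-1:ℝ)^i * x^i / (Nat.factorial i : ℝ)) * (D i (x+a) - D i (x+b))

lemma H_eq_G (a b c : ℝ) (ha : 0 < a) (hb : 0 < b) (k : ℕ) :
    Set.EqOn (H a b c k) (G a b c k) (Set.Ici 0) := by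
  intro x hx
  simp only [Set.mem_Ici] at hx
  unfold H G
  have h0 : Real.log (Real.Gamma (x+a)) = D 0 (x+a) := rfl
  have h0' : Real.log (Real.Gamma (x+b)) = D 0 (x+b) := rfl
  rw [h0, h0']
  congr 1
  refine Finset.sum_congr rfl fun i hi => ?_
  have hi1 : 1 ≤ i := (Finset.mem_Icc.mp hi).1
  have hii : i - 1 + 1 = i := by omega
  rw [polygamma_eq_s7 (i-1) (by linarith : (0:ℝ) < x + a),
    polygamma_eq_s7 (i-1) (by linarith : (0:ℝ) < x + b), hii]

lemma H_hasDerivAt (a b c : ℝ) (ha : 0 < a) (hb : 0 < b) (k : ℕ) (hk : 1 ≤ k)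
    (x : ℝ) (hx : 0 < x) :
    HasDerivAt (H a b c k)
      ((-1:ℝ)^k * x^k / (Nat.factorial k : ℝ) * (D (k+1) (x+a) - D (k+1) (x+b))) x := by
  have hG := hasDerivAt_G a b c ha hb k hk x hx
  refine HasDerivAt.congr_of_eventuallyEq hG ?_
  filter_upwards [isOpen_Ioi.mem_nhds hx] with y hy
  exact H_eq_G a b c ha hb k (Set.mem_Ici.mpr (le_of_lt hy))

lemma E_neg (a b : ℝ) (ha : 0 < a) (hab : a < b) (k : ℕ) (hk : 1 ≤ k)
    (x : ℝ) (hx : 0 < x) :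
    (-1:ℝ)^k * x^k / (Nat.factorial k : ℝ) * (D (k+1) (x+a) - D (k+1) (x+b)) < 0 := by
  have hF : ((Nat.factorial k : ℕ) : ℝ) ≠ 0 := by
    exact_mod_cast (Nat.factorial_pos k).ne'
  have hDa := D_eq_S (k+1) (by omega) (x+a)
  have hDb := D_eq_S (k+1) (by omega) (x+b)
  rw [Nat.add_sub_cancel] at hDa hDb
  have hd : 0 < S (k+1) (x+a) - S (k+1) (x+b) := by
    have := S_lt (k+1) (by omega) (by linarith : (0:ℝ) < x + a) (by linarith : x+a < x+b)
    linarith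
  have hs : ((-1:ℝ)^k) * ((-1:ℝ)^k) = 1 := by
    rw [← pow_add]; exact Even.neg_one_pow ⟨k, rfl⟩
  have hsign : (-1:ℝ)^k * (-1:ℝ)^(k+1) = -1 := by
    rw [pow_succ, ← mul_assoc, hs, one_mul]
  have e1 : (-1:ℝ)^k * x^k / (Nat.factorial k : ℝ) * (D (k+1) (x+a) - D (k+1) (x+b))
      = ((-1:ℝ)^k * (-1:ℝ)^(k+1)) * (x^k * (S (k+1) (x+a) - S (k+1) (x+b)))
        * (((Nat.factorial k : ℕ):ℝ) / ((Nat.factorial k : ℕ):ℝ)) := by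
    rw [hDa, hDb]; ring
  rw [e1, div_self hF, mul_one, hsign]
  have hxk : 0 < x^k := by positivity
  nlinarith

theorem stmt_7 (a b c : ℝ) (ha : 0 < a) (hb : 0 < b) (hc : 0 < c)
    (hab : a < b) (k : ℕ) (hk : 1 ≤ k) :
    StrictAntiOn (H a b c k) (Set.Ioi (0 : ℝ)) ∧
      (c ≤ Real.Gamma b / Real.Gamma a → ∀ x : ℝ, 0 < x → H a b c k x < 0) := by
  have hDca : ∀ (i : ℕ) (d : ℝ), 0 < d → ∀ x : ℝ, 0 ≤ x →
      ContinuousAt (fun y => D i (y+d)) x := by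
    intro i d hd x hx
    have h1 : ContinuousAt (fun y : ℝ => y + d) x := by fun_prop
    exact ContinuousAt.comp (D_continuousAt i (x+d) (by linarith)) h1
  have hconG : ContinuousOn (G a b c k) (Set.Ici 0) := by
    intro x hx
    simp only [Set.mem_Ici] at hx
    apply ContinuousAt.continuousWithinAt
    unfold G
    refine (((continuousAt_const.add (hDca 0 a ha x hx)).sub (hDca 0 b hb x hx)).add ?_)
    refine tendsto_finset_sum _ fun i _ => ?_
    exact (((continuousAt_pow x i).const_mul _).div_const _).mul
      ((hDca i a ha x hx).sub (hDca i b hb x hx))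
  have hconH : ContinuousOn (H a b c k) (Set.Ici 0) :=
    hconG.congr (H_eq_G a b c ha hb k)
  have hderiv : ∀ x ∈ interior (Set.Ici (0:ℝ)), deriv (H a b c k) x < 0 := by
    rw [interior_Ici]
    intro x hx
    rw [(H_hasDerivAt a b c ha hb k hk x hx).deriv]
    exact E_neg a b ha hab k hk x hx
  have hSA : StrictAntiOn (H a b c k) (Set.Ici 0) :=
    strictAntiOn_of_deriv_neg (convex_Ici 0) hconH hderiv
  refine ⟨hSA.mono Set.Ioi_subset_Ici_self, ?_⟩
  intro hcle x hx
  have hlt : H a b c k x < H a b c k 0 :=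
    hSA Set.self_mem_Ici (Set.mem_Ici.mpr hx.le) hx
  have h0 : H a b c k 0 = Real.log c + Real.log (Real.Gamma a) - Real.log (Real.Gamma b) := by
    unfold H
    rw [Finset.sum_eq_zero, add_zero, zero_add, zero_add]
    intro i hi
    have hi1 : 1 ≤ i := (Finset.mem_Icc.mp hi).1
    rw [zero_pow (by omega : i ≠ 0)]
    ring
  have hga : (0:ℝ) < Real.Gamma a := Real.Gamma_pos_of_pos ha
  have hgb : (0:ℝ) < Real.Gamma b := Real.Gamma_pos_of_pos hb
  have hlog : Real.log c ≤ Real.log (Real.Gamma b) - Real.log (Real.Gamma a) := by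
    have := Real.log_le_log hc hcle
    rwa [Real.log_div hgb.ne' hga.ne'] at this
  have h0le : H a b c k 0 ≤ 0 := by rw [h0]; linarith
  linarith
end
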